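/- arXiv:2412.15026 — 4 statements merged into one kernel-verified Lean document; each statement's English description precedes it below -/
import Mathlib

section
/- Let (Ω,μ) be a σ-finite measure space, V an n-dimensional Hilbert space, and F : Ω → K(V) a measurable convex-set valued map with ∫_Ω ‖F‖_V dμ < ∞, where ‖F(x)‖_V := sup_{u ∈ F(x)} ‖u‖. Then the Aumann integral ∫_Ω F dμ := { ∫_Ω f dμ : f measurable selection of F } is a nonempty, convex, symmetric, bounded subset of V, and its norm (supremum of norms of its elements) satisfies (1/n) ∫_Ω ‖F‖_V dμ ≤ ‖∫_Ω F dμ‖_V ≤ ∫_Ω ‖F‖_V dμ. -/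
open MeasureTheory Metric Set
open scoped RealInnerProductSpace

section Aux

variable {Ω : Type*} [MeasurableSpace Ω]
variable {V : Type*} [NormedAddCommGroup V] [InnerProductSpace ℝ V]

/-- Existence of the metric projection onto a nonempty compact convex set, in
variational-inequality form. -/
lemma aumann_aux_proj_exists {K : Set V} (hne : K.Nonempty) (hcp : IsCompact K)
    (hconv : Convex ℝ K) (p : V) :
    ∃ v ∈ K, ∀ w ∈ K, ⟪p - v, w - v⟫ ≤ 0 := by
  obtain ⟨v, hvK, hv⟩ :=
    exists_norm_eq_iInf_of_complete_convex hne hcp.isComplete hconv p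
  exact ⟨v, hvK, fun w hw =>
    ((norm_eq_iInf_iff_real_inner_le_zero hconv hvK).1 hv) w hw⟩

/-- Measurability of hitting sets of closed sets, for a compact-valued measurable
multifunction. -/
lemma aumann_aux_closed_meas {F : Ω → Set V}
    (hmeas : ∀ U : Set V, IsOpen U → MeasurableSet {x | (F x ∩ U).Nonempty})
    (hcp : ∀ x, IsCompact (F x)) {C : Set V} (hC : IsClosed C) :
    MeasurableSet {x | (F x ∩ C).Nonempty} := by
  have hEq : {x | (F x ∩ C).Nonempty} =
      ⋂ m : ℕ, {x | (F x ∩ Metric.thickening ((m : ℝ) + 1)⁻¹ C).Nonempty} := by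
    ext x
    simp only [mem_iInter, mem_setOf_eq]
    constructor
    · rintro ⟨u, huF, huC⟩ m
      exact ⟨u, huF, Metric.self_subset_thickening (by positivity) C huC⟩
    · intro hm
      choose u huF huC using hm
      obtain ⟨a, haF, φ, hφ, hconv⟩ := (hcp x).tendsto_subseq huF
      have hCne : C.Nonempty := by
        obtain ⟨z, hz, -⟩ := Metric.mem_thickening_iff.1 (huC 0)
        exact ⟨z, hz⟩
      refine ⟨a, haF, (hC.mem_iff_infDist_zero hCne).2 ?_⟩
      have h1 : Filter.Tendsto (fun k => Metric.infDist (u (φ k)) C)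
          Filter.atTop (nhds (Metric.infDist a C)) :=
        ((Metric.continuous_infDist_pt C).continuousAt.tendsto).comp hconv
      have h2 : ∀ k : ℕ, Metric.infDist (u (φ k)) C ≤ ((k : ℝ) + 1)⁻¹ := by
        intro k
        obtain ⟨z, hz, hzd⟩ := Metric.mem_thickening_iff.1 (huC (φ k))
        refine le_trans (Metric.infDist_le_dist_of_mem hz) (le_trans hzd.le ?_)
        have hk : (k : ℝ) + 1 ≤ (φ k : ℝ) + 1 := by
          have h5 := hφ.id_le k
          have h6 : (k : ℝ) ≤ (φ k : ℝ) := Nat.cast_le.2 h5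
          linarith
        exact inv_anti₀ (by positivity) hk
      have h3 : Filter.Tendsto (fun k : ℕ => ((k : ℝ) + 1)⁻¹) Filter.atTop (nhds 0) :=
        tendsto_one_div_add_atTop_nhds_zero_nat.congr (by intro k; simp [one_div])
      have h4 : Metric.infDist a C ≤ 0 :=
        le_of_tendsto_of_tendsto h1 h3 (Filter.Eventually.of_forall h2)
      exact le_antisymm h4 Metric.infDist_nonneg
  rw [hEq]
  exact MeasurableSet.iInter fun m => hmeas _ Metric.isOpen_thickening

/-- Measurability of `x ↦ infDist p (F x)`. -/
lemma aumann_aux_infDist_meas {F : Ω → Set V}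
    (hmeas : ∀ U : Set V, IsOpen U → MeasurableSet {x | (F x ∩ U).Nonempty})
    (hne : ∀ x, (F x).Nonempty) (p : V) :
    Measurable fun x => Metric.infDist p (F x) := by
  apply measurable_of_Iio
  intro r
  have : (fun x => Metric.infDist p (F x)) ⁻¹' Iio r
      = {x | (F x ∩ Metric.ball p r).Nonempty} := by
    ext x
    simp only [mem_preimage, mem_Iio, mem_setOf_eq]
    rw [Metric.infDist_lt_iff (hne x)]
    constructor
    · rintro ⟨y, hy, hd⟩
      exact ⟨y, hy, by rwa [Metric.mem_ball, dist_comm]⟩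
    · rintro ⟨y, hy, hd⟩
      exact ⟨y, hy, by rwa [Metric.mem_ball, dist_comm] at hd⟩
  rw [this]
  exact hmeas _ Metric.isOpen_ball

/-- Measurability of `x ↦ sSup (φ '' F x)` for continuous `φ`. -/
lemma aumann_aux_sSup_meas {F : Ω → Set V}
    (hmeas : ∀ U : Set V, IsOpen U → MeasurableSet {x | (F x ∩ U).Nonempty})
    (hne : ∀ x, (F x).Nonempty) (hcp : ∀ x, IsCompact (F x))
    {φ : V → ℝ} (hφ : Continuous φ) :
    Measurable fun x => sSup (φ '' F x) := by
  apply measurable_of_Ioi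
  intro t
  have : (fun x => sSup (φ '' F x)) ⁻¹' Ioi t = {x | (F x ∩ φ ⁻¹' Ioi t).Nonempty} := by
    ext x
    simp only [mem_preimage, mem_Ioi, mem_setOf_eq]
    constructor
    · intro ht
      obtain ⟨y, ⟨u, huF, rfl⟩, hy⟩ :=
        exists_lt_of_lt_csSup ((hne x).image φ) ht
      exact ⟨u, huF, hy⟩
    · rintro ⟨u, huF, hu⟩
      exact lt_of_lt_of_le hu
        (le_csSup (((hcp x).image hφ).bddAbove) (mem_image_of_mem φ huF))
  rw [this]
  exact hmeas _ (hφ.isOpen_preimage _ isOpen_Ioi)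

end Aux

section Aux2

variable {Ω : Type*} [MeasurableSpace Ω]
variable {V : Type*} [NormedAddCommGroup V] [InnerProductSpace ℝ V]

/-- The nearest-point projection selection is measurable. -/
lemma aumann_aux_sel_meas [MeasurableSpace V] [BorelSpace V] {F : Ω → Set V}
    (hmeas : ∀ U : Set V, IsOpen U → MeasurableSet {x | (F x ∩ U).Nonempty})
    (hne : ∀ x, (F x).Nonempty) (hcp : ∀ x, IsCompact (F x))
    (p : V) (P : Ω → V) (hPmem : ∀ x, P x ∈ F x)
    (hPle : ∀ x, ∀ w ∈ F x, ⟪p - P x, w - P x⟫ ≤ 0) :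
    Measurable P := by
  set d : Ω → ℝ := fun x => Metric.infDist p (F x) with hd_def
  have hd : Measurable d := aumann_aux_infDist_meas hmeas hne p
  -- the projection minimizes the distance
  have hmin : ∀ x, ∀ w ∈ F x, dist p (P x) ≤ dist p w := by
    intro x w hw
    have h1 := hPle x w hw
    have h2 : ‖p - w‖ ^ 2 = ‖p - P x‖ ^ 2 - 2 * ⟪p - P x, w - P x⟫ + ‖w - P x‖ ^ 2 := by
      have : p - w = (p - P x) - (w - P x) := by abel
      rw [this, norm_sub_sq_real]
    have h3 : ‖p - P x‖ ^ 2 ≤ ‖p - w‖ ^ 2 := by nlinarith [sq_nonneg ‖w - P x‖]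
    rw [dist_eq_norm, dist_eq_norm]
    nlinarith [norm_nonneg (p - w), norm_nonneg (p - P x)]
  have hdist : ∀ x, dist p (P x) = d x := by
    intro x
    refine le_antisymm ?_ (Metric.infDist_le_dist_of_mem (hPmem x))
    by_contra hlt
    push_neg at hlt
    obtain ⟨w, hw, hwd⟩ := (Metric.infDist_lt_iff (hne x)).1 hlt
    exact absurd (hmin x w hw) (not_le.2 hwd)
  -- quantitative uniqueness
  have hquant : ∀ x, ∀ u ∈ F x, ‖u - P x‖ ^ 2 ≤ dist p u ^ 2 - d x ^ 2 := by
    intro x u hu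
    have h1 := hPle x u hu
    have h2 : ‖p - u‖ ^ 2 = ‖p - P x‖ ^ 2 - 2 * ⟪p - P x, u - P x⟫ + ‖u - P x‖ ^ 2 := by
      have : p - u = (p - P x) - (u - P x) := by abel
      rw [this, norm_sub_sq_real]
    have h4 : ‖p - P x‖ = d x := by rw [← dist_eq_norm]; exact hdist x
    rw [dist_eq_norm, ← h4]
    linarith
  have hd0 : ∀ x, 0 ≤ d x := fun x => Metric.infDist_nonneg
  apply measurable_of_isOpen
  intro U hU
  have key : P ⁻¹' U = ⋃ q : {q : ℚ // 0 < (q : ℝ)}, ⋂ s : {s : ℚ // 0 < (s : ℝ)},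
      ({x | d x ^ 2 + (q : ℝ) ^ 2 ≤ (s : ℝ) ^ 2} ∪
        {x | ¬ (F x ∩ (Uᶜ ∩ Metric.closedBall p (s : ℝ))).Nonempty}) := by
    ext x
    simp only [mem_preimage, mem_iUnion, mem_iInter, mem_union, mem_setOf_eq]
    constructor
    · intro hxU
      obtain ⟨r, hr0, hball⟩ := Metric.isOpen_iff.1 hU _ hxU
      obtain ⟨q, hq0, hqr⟩ := exists_rat_btwn hr0
      refine ⟨⟨q, by exact_mod_cast hq0⟩, fun s => ?_⟩
      by_cases hcase : d x ^ 2 + (q : ℝ) ^ 2 ≤ (s : ℝ) ^ 2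
      · exact Or.inl hcase
      · push_neg at hcase
        refine Or.inr ?_
        rintro ⟨u, huF, huU, hus⟩
        have hd1 : dist p u ≤ (s : ℝ) := by
          rw [dist_comm]; exact Metric.mem_closedBall.1 hus
        have hd2 : dist p u ^ 2 < d x ^ 2 + (q : ℝ) ^ 2 :=
          lt_of_le_of_lt (by nlinarith [dist_nonneg (x := p) (y := u)]) hcase
        have h5 := hquant x u huF
        have h6 : ‖u - P x‖ < (q : ℝ) := by
          nlinarith [norm_nonneg (u - P x), (show (0:ℝ) < q by exact_mod_cast hq0)]
        have : u ∈ Metric.ball (P x) r := by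
          rw [Metric.mem_ball, dist_eq_norm]; exact lt_trans h6 hqr
        exact huU (hball this)
    · rintro ⟨⟨q, hq0⟩, hs_all⟩
      by_contra hxU
      have hdx : d x < Real.sqrt (d x ^ 2 + (q : ℝ) ^ 2) := by
        rw [Real.lt_sqrt (hd0 x)]; nlinarith
      obtain ⟨s, hs1, hs2⟩ := exists_rat_btwn hdx
      have hs0 : (0 : ℝ) < (s : ℝ) := lt_of_le_of_lt (hd0 x) hs1
      have hssq : (s : ℝ) ^ 2 < d x ^ 2 + (q : ℝ) ^ 2 := by
        rw [← Real.lt_sqrt hs0.le]; exact hs2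
      rcases hs_all ⟨s, hs0⟩ with hle | hempty
      · exact absurd hle (not_le.2 hssq)
      · exact hempty ⟨P x, hPmem x, hxU, by
          rw [Metric.mem_closedBall, dist_comm, hdist x]; exact hs1.le⟩
  rw [key]
  refine MeasurableSet.iUnion fun q => MeasurableSet.iInter fun s => ?_
  refine MeasurableSet.union ?_ ?_
  · exact measurableSet_le ((hd.pow_const 2).add_const _) measurable_const
  · exact (aumann_aux_closed_meas hmeas hcp
      (hU.isClosed_compl.inter Metric.isClosed_closedBall)).compl

end Aux2

/-- **The Aumann integral of an integrably bounded convex-set valued map.**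
Let `(Ω, μ)` be σ-finite, `V` an `n`-dimensional real Hilbert space, and `F : Ω → K(V)` a
measurable map whose values are nonempty, compact, symmetric, convex sets, with
`∫ ‖F‖ dμ < ∞` where `‖F(x)‖ = sup_{u ∈ F(x)} ‖u‖`. Then the Aumann integral
`∫ F dμ = { ∫ f dμ : f an integrable selection of F }` is a nonempty, convex, symmetric,
bounded subset of `V` whose norm satisfies
`(1/n) ∫ ‖F‖ dμ ≤ ‖∫ F dμ‖ ≤ ∫ ‖F‖ dμ`. -/
theorem aumann_integral_bound
    {Ω : Type*} [MeasurableSpace Ω] (μ : Measure Ω) [SigmaFinite μ]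
    {V : Type*} [NormedAddCommGroup V] [InnerProductSpace ℝ V] [FiniteDimensional ℝ V]
    (n : ℕ) (hn : Module.finrank ℝ V = n) (hn0 : 0 < n)
    (F : Ω → Set V)
    (hmeas : ∀ U : Set V, IsOpen U → MeasurableSet {x | (F x ∩ U).Nonempty})
    (hne : ∀ x, (F x).Nonempty)
    (hcp : ∀ x, IsCompact (F x))
    (hconv : ∀ x, Convex ℝ (F x))
    (hsym : ∀ x, ∀ u ∈ F x, -u ∈ F x)
    (h : Ω → ℝ) (hh : ∀ x, h x = sSup ((fun u => ‖u‖) '' F x))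
    (hint : Integrable h μ)
    (I : Set V)
    (hI : I = {v | ∃ f : Ω → V, Integrable f μ ∧ (∀ᵐ x ∂μ, f x ∈ F x) ∧ v = ∫ x, f x ∂μ}) :
    I.Nonempty ∧ Convex ℝ I ∧ (∀ v ∈ I, -v ∈ I) ∧ Bornology.IsBounded I ∧
      (1 / (n : ℝ)) * ∫ x, h x ∂μ ≤ sSup ((fun v => ‖v‖) '' I) ∧
      sSup ((fun v => ‖v‖) '' I) ≤ ∫ x, h x ∂μ := by
  letI : MeasurableSpace V := borel V
  haveI : BorelSpace V := ⟨rfl⟩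
  -- basic facts
  have h0mem : ∀ x, (0 : V) ∈ F x := by
    intro x
    obtain ⟨u, hu⟩ := hne x
    have h2 := hsym x u hu
    have h3 := hconv x hu h2 (by norm_num : (0:ℝ) ≤ 1/2) (by norm_num : (0:ℝ) ≤ 1/2)
      (by norm_num)
    simpa [smul_neg] using h3
  have hbound : ∀ x, ∀ u ∈ F x, ‖u‖ ≤ h x := by
    intro x u hu
    rw [hh]
    exact le_csSup ((hcp x).image continuous_norm).bddAbove (mem_image_of_mem _ hu)
  have hh0 : ∀ x, 0 ≤ h x := by
    intro x
    simpa using hbound x 0 (h0mem x)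
  have hhm : Measurable h := by
    have heq : h = fun x => sSup ((fun u => ‖u‖) '' F x) := funext hh
    rw [heq]
    exact aumann_aux_sSup_meas hmeas hne hcp continuous_norm
  -- nonemptiness
  have hIne : I.Nonempty := by
    refine ⟨0, ?_⟩
    rw [hI]
    exact ⟨fun _ => 0, integrable_zero _ _ _,
      Filter.Eventually.of_forall fun x => h0mem x, by simp⟩
  -- bound on elements of I
  have hnorm_le : ∀ v ∈ I, ‖v‖ ≤ ∫ x, h x ∂μ := by
    intro v hv
    rw [hI] at hv
    obtain ⟨f, hfint, hfmem, rfl⟩ := hv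
    refine le_trans (norm_integral_le_integral_norm f) ?_
    refine integral_mono_ae hfint.norm hint ?_
    filter_upwards [hfmem] with x hx
    exact hbound x _ hx
  have himg_ne : ((fun v => ‖v‖) '' I).Nonempty := hIne.image _
  have hbddI : BddAbove ((fun v => ‖v‖) '' I) := by
    refine ⟨∫ x, h x ∂μ, ?_⟩
    rintro y ⟨v, hv, rfl⟩
    exact hnorm_le v hv
  -- convexity
  have hIconv : Convex ℝ I := by
    intro v hv w hw a bb ha hb hab
    rw [hI] at hv hw ⊢
    obtain ⟨f₁, hf1, hm1, rfl⟩ := hv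
    obtain ⟨f₂, hf2, hm2, rfl⟩ := hw
    refine ⟨fun x => a • f₁ x + bb • f₂ x, (hf1.smul a).add (hf2.smul bb), ?_, ?_⟩
    · filter_upwards [hm1, hm2] with x h1 h2
      exact hconv x h1 h2 ha hb hab
    · have h1 := integral_add (μ := μ) (hf1.smul a) (hf2.smul bb)
      simp only [Pi.smul_apply] at h1
      rw [h1, integral_smul, integral_smul]
  -- symmetry
  have hIsym : ∀ v ∈ I, -v ∈ I := by
    intro v hv
    rw [hI] at hv ⊢
    obtain ⟨f, hfint, hfmem, rfl⟩ := hv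
    refine ⟨fun x => -f x, hfint.neg, ?_, by rw [integral_neg]⟩
    filter_upwards [hfmem] with x hx
    exact hsym x _ hx
  -- boundedness
  have hIbdd : Bornology.IsBounded I :=
    isBounded_iff_forall_norm_le.2 ⟨∫ x, h x ∂μ, fun v hv => hnorm_le v hv⟩
  -- upper bound
  have hupper : sSup ((fun v => ‖v‖) '' I) ≤ ∫ x, h x ∂μ := by
    refine csSup_le himg_ne ?_
    rintro y ⟨v, hv, rfl⟩
    exact hnorm_le v hv
  -- now the lower bound
  haveI : Nonempty (Fin n) := ⟨⟨0, hn0⟩⟩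
  set b : OrthonormalBasis (Fin n) ℝ V := (stdOrthonormalBasis ℝ V).reindex (finCongr hn)
    with hb_def
  have hbnorm : ∀ i, ‖b i‖ = 1 := fun i => b.orthonormal.1 i
  set g : Fin n → Ω → ℝ := fun i x => sSup ((fun u => ⟪b i, u⟫) '' F x) with hg_def
  have hgm : ∀ i, Measurable (g i) := by
    intro i
    exact aumann_aux_sSup_meas hmeas hne hcp (continuous_const.inner continuous_id)
  have himg_ne' : ∀ i x, ((fun u => ⟪b i, u⟫) '' F x).Nonempty := fun i x => (hne x).image _
  have hbdd' : ∀ i x, BddAbove ((fun u => ⟪b i, u⟫) '' F x) := fun i x =>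
    ((hcp x).image (continuous_const.inner continuous_id)).bddAbove
  have hgle : ∀ i x, ∀ u ∈ F x, ⟪b i, u⟫ ≤ g i x := fun i x u hu =>
    le_csSup (hbdd' i x) (mem_image_of_mem _ hu)
  have hg_le_h : ∀ i x, g i x ≤ h x := by
    intro i x
    refine csSup_le (himg_ne' i x) ?_
    rintro y ⟨u, hu, rfl⟩
    calc ⟪b i, u⟫ ≤ ‖b i‖ * ‖u‖ := real_inner_le_norm _ _
    _ = ‖u‖ := by rw [hbnorm i, one_mul]
    _ ≤ h x := hbound x u hu
  have hg0 : ∀ i x, 0 ≤ g i x := by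
    intro i x
    have := hgle i x 0 (h0mem x)
    simpa using this
  have hgint : ∀ i, Integrable (g i) μ := by
    intro i
    refine Integrable.mono hint (hgm i).aestronglyMeasurable ?_
    filter_upwards with x
    rw [Real.norm_eq_abs, Real.norm_eq_abs, abs_of_nonneg (hg0 i x),
      abs_of_nonneg (hh0 x)]
    exact hg_le_h i x
  have habs : ∀ i x, ∀ u ∈ F x, |⟪b i, u⟫| ≤ g i x := by
    intro i x u hu
    refine abs_le.2 ⟨?_, hgle i x u hu⟩
    have := hgle i x (-u) (hsym x u hu)
    rw [inner_neg_right] at this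
    linarith
  have hsum : ∀ x, h x ≤ ∑ i, g i x := by
    intro x
    rw [hh]
    refine csSup_le ((hne x).image _) ?_
    rintro y ⟨u, hu, rfl⟩
    calc ‖u‖ = ‖∑ i, ⟪b i, u⟫ • b i‖ := by rw [b.sum_repr' u]
    _ ≤ ∑ i, ‖⟪b i, u⟫ • b i‖ := norm_sum_le _ _
    _ = ∑ i, |⟪b i, u⟫| := by
        refine Finset.sum_congr rfl fun i _ => ?_
        rw [norm_smul, Real.norm_eq_abs, hbnorm i, mul_one]
    _ ≤ ∑ i, g i x := Finset.sum_le_sum fun i _ => habs i x u hu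
  have hint_sum : ∫ x, h x ∂μ ≤ ∑ i, ∫ x, g i x ∂μ := by
    rw [← integral_finset_sum _ fun i _ => hgint i]
    exact integral_mono hint (integrable_finset_sum _ fun i _ => hgint i) hsum
  obtain ⟨i₀, -, hi₀⟩ : ∃ i ∈ Finset.univ, (∫ x, h x ∂μ) / n ≤ ∫ x, g i x ∂μ := by
    refine Finset.exists_le_of_sum_le Finset.univ_nonempty ?_
    rw [Finset.sum_const, Finset.card_univ, Fintype.card_fin, nsmul_eq_mul]
    rw [mul_div_cancel₀]
    · exact hint_sum
    · exact_mod_cast hn0.ne'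
  -- the key claim
  have hkey : ∫ x, g i₀ x ∂μ ≤ sSup ((fun v => ‖v‖) '' I) := by
    set S := sSup ((fun v => ‖v‖) '' I) with hS_def
    clear_value S
    by_contra hcon
    push_neg at hcon
    set ε := (∫ x, g i₀ x ∂μ) - S with hε_def
    clear_value ε
    have hε0 : 0 < ε := by rw [hε_def]; linarith
    set e := b i₀ with he_def
    clear_value e
    set Ak : ℕ → Set Ω := fun k => {x | ((k:ℝ)+1)⁻¹ ≤ h x} ∩ {x | h x ≤ (k:ℝ)+1} with hAk_def
    have hAk : ∀ k, MeasurableSet (Ak k) := fun k =>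
      (measurableSet_le measurable_const hhm).inter (measurableSet_le hhm measurable_const)
    have hAkfin : ∀ k, μ (Ak k) < ⊤ := by
      intro k
      refine lt_of_le_of_lt (measure_mono inter_subset_left) ?_
      exact hint.measure_ge_lt_top (by positivity)
    have hDCT : Filter.Tendsto (fun k => ∫ x, (Ak k).indicator (g i₀) x ∂μ)
        Filter.atTop (nhds (∫ x, g i₀ x ∂μ)) := by
      refine tendsto_integral_of_dominated_convergence h
        (fun k => ((hgm i₀).indicator (hAk k)).aestronglyMeasurable) hint ?_ ?_
      · intro k
        filter_upwards with x
        by_cases hx : x ∈ Ak k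
        · rw [Set.indicator_of_mem hx, Real.norm_eq_abs, abs_of_nonneg (hg0 i₀ x)]
          exact hg_le_h i₀ x
        · rw [Set.indicator_of_notMem hx]
          simpa using hh0 x
      · filter_upwards with x
        rcases eq_or_lt_of_le (hh0 x) with hx0 | hx0
        · have hgx : g i₀ x = 0 :=
            le_antisymm (by rw [hx0]; exact hg_le_h i₀ x) (hg0 i₀ x)
          have hconst : (fun k => (Ak k).indicator (g i₀) x) = fun _ => g i₀ x := by
            funext k
            by_cases hx : x ∈ Ak k
            · rw [Set.indicator_of_mem hx]
            · rw [Set.indicator_of_notMem hx, hgx]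
          rw [hconst]
          exact tendsto_const_nhds
        · refine Filter.Tendsto.congr' ?_ tendsto_const_nhds
          filter_upwards [Filter.eventually_ge_atTop ⌈max (h x) (h x)⁻¹⌉₊] with k hk
          have hk' : max (h x) (h x)⁻¹ ≤ (k:ℝ) := le_trans (Nat.le_ceil _) (Nat.cast_le.2 hk)
          have h1 : h x ≤ (k:ℝ)+1 := by
            have := le_max_left (h x) (h x)⁻¹; linarith
          have h2 : ((k:ℝ)+1)⁻¹ ≤ h x := by
            have h3 : (h x)⁻¹ ≤ (k:ℝ)+1 := by
              have := le_max_right (h x) (h x)⁻¹; linarith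
            have h4 := inv_anti₀ (inv_pos.2 hx0) h3
            rwa [inv_inv] at h4
          exact (Set.indicator_of_mem (show x ∈ Ak k from ⟨h2, h1⟩) _).symm
    have hexk := (hDCT.eventually (eventually_gt_nhds
      (show (∫ x, g i₀ x ∂μ) - ε/4 < ∫ x, g i₀ x ∂μ by linarith))).exists
    obtain ⟨k, hk⟩ := hexk
    set M : ℝ := (k:ℝ) + 1 with hM_def
    have hM0 : 0 < M := by rw [hM_def]; positivity
    clear_value M
    set B : ℝ := (μ (Ak k)).toReal with hB_def
    have hB0 : 0 ≤ B := by rw [hB_def]; exact ENNReal.toReal_nonneg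
    set c : ℝ := 1 + 8 * M^2 * B / ε with hc_def
    have hc0 : 0 < c := by
      have h6 : 0 ≤ 8 * M^2 * B / ε := div_nonneg (by positivity) hε0.le
      rw [hc_def]; linarith
    have hεc : ε * c = ε + 8 * M^2 * B := by
      rw [hc_def]; field_simp
    clear_value c
    have hδB : 2 * M^2 / c * B ≤ ε / 4 := by
      rw [div_mul_eq_mul_div, div_le_iff₀ hc0]
      nlinarith [hεc, hε0]
    set p := c • e with hp_def
    clear_value p
    set P : Ω → V := fun x =>
      Classical.choose (aumann_aux_proj_exists (hne x) (hcp x) (hconv x) p) with hP_def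
    have hPspec : ∀ x, P x ∈ F x ∧ ∀ w ∈ F x, ⟪p - P x, w - P x⟫ ≤ 0 := by
      intro x
      obtain ⟨h1, h2⟩ :=
        Classical.choose_spec (aumann_aux_proj_exists (hne x) (hcp x) (hconv x) p)
      exact ⟨h1, h2⟩
    have hPmeas : Measurable P :=
      aumann_aux_sel_meas hmeas hne hcp p P (fun x => (hPspec x).1) (fun x => (hPspec x).2)
    set f : Ω → V := (Ak k).indicator P with hf_def
    have hfmem : ∀ x, f x ∈ F x := by
      intro x
      by_cases hx : x ∈ Ak k
      · rw [hf_def, Set.indicator_of_mem hx]; exact (hPspec x).1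
      · rw [hf_def, Set.indicator_of_notMem hx]; exact h0mem x
    have hfint : Integrable f μ := by
      refine Integrable.mono hint ((hPmeas.indicator (hAk k)).aestronglyMeasurable) ?_
      filter_upwards with x
      rw [Real.norm_eq_abs, abs_of_nonneg (hh0 x)]
      by_cases hx : x ∈ Ak k
      · rw [hf_def, Set.indicator_of_mem hx]; exact hbound x _ (hPspec x).1
      · rw [hf_def, Set.indicator_of_notMem hx]; simpa using hh0 x
    have hvI : (∫ x, f x ∂μ) ∈ I := by
      rw [hI]
      exact ⟨f, hfint, Filter.Eventually.of_forall hfmem, rfl⟩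
    have hlb : ∀ x, (Ak k).indicator (fun x => g i₀ x - 2*M^2/c) x ≤ ⟪e, f x⟫ := by
      intro x
      by_cases hx : x ∈ Ak k
      · rw [Set.indicator_of_mem hx, hf_def, Set.indicator_of_mem hx]
        have hhxM : h x ≤ M := by rw [hM_def]; exact hx.2
        have hPnorm : ‖P x‖ ≤ M := le_trans (hbound x _ (hPspec x).1) hhxM
        have hsup : g i₀ x ≤ ⟪e, P x⟫ + 2*M^2/c := by
          refine csSup_le (himg_ne' i₀ x) ?_
          rintro y ⟨w, hw, rfl⟩
          simp only [← he_def]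
          have hv1 := (hPspec x).2 w hw
          have hexp : ⟪p - P x, w - P x⟫
              = c * ⟪e, w⟫ - c * ⟪e, P x⟫ - ⟪P x, w - P x⟫ := by
            rw [hp_def, inner_sub_left, real_inner_smul_left, inner_sub_right,
              inner_sub_right]
            ring
          have hv2 : ⟪P x, w - P x⟫ ≤ ‖P x‖ * ‖w - P x‖ := real_inner_le_norm _ _
          have hwn : ‖w‖ ≤ M := le_trans (hbound x w hw) hhxM
          have hwP : ‖w - P x‖ ≤ 2 * M := le_trans (norm_sub_le _ _) (by linarith)
          have hv3 : ‖P x‖ * ‖w - P x‖ ≤ M * (2*M) :=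
            mul_le_mul hPnorm hwP (norm_nonneg _) hM0.le
          have hv5 : ⟪e, w⟫ - ⟪e, P x⟫ ≤ 2 * M^2 / c := by
            rw [le_div_iff₀ hc0]
            nlinarith
          linarith
        linarith
      · rw [Set.indicator_of_notMem hx, hf_def, Set.indicator_of_notMem hx]
        simp
    have hfunsplit : (Ak k).indicator (fun x => g i₀ x - 2*M^2/c)
        = fun x => (Ak k).indicator (g i₀) x - (Ak k).indicator (fun _ => 2*M^2/c) x := by
      funext x
      by_cases hx : x ∈ Ak k <;>
        simp [Set.indicator_of_mem, Set.indicator_of_notMem, hx]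
    have hint_c : Integrable ((Ak k).indicator (fun _ => 2*M^2/c)) μ :=
      (integrable_indicator_iff (hAk k)).2 (integrableOn_const (hAkfin k).ne)
    have hint_lhs : Integrable ((Ak k).indicator (fun x => g i₀ x - 2*M^2/c)) μ := by
      rw [hfunsplit]
      exact ((hgint i₀).indicator (hAk k)).sub hint_c
    have hint_inner : Integrable (fun x => ⟪e, f x⟫) μ :=
      (innerSL ℝ e).integrable_comp hfint
    have hcmp : ∫ x, (Ak k).indicator (fun x => g i₀ x - 2*M^2/c) x ∂μ
        ≤ ∫ x, ⟪e, f x⟫ ∂μ := integral_mono hint_lhs hint_inner hlb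
    have hsplit : ∫ x, (Ak k).indicator (fun x => g i₀ x - 2*M^2/c) x ∂μ
        = (∫ x, (Ak k).indicator (g i₀) x ∂μ) - 2*M^2/c * B := by
      rw [hfunsplit, integral_sub ((hgint i₀).indicator (hAk k)) hint_c,
        integral_indicator_const _ (hAk k), smul_eq_mul, measureReal_def, hB_def]
      ring
    have hinner_eq : ∫ x, ⟪e, f x⟫ ∂μ = ⟪e, ∫ x, f x ∂μ⟫ := integral_inner hfint e
    have hvS : ‖∫ x, f x ∂μ‖ ≤ S := by
      rw [hS_def]; exact le_csSup hbddI (mem_image_of_mem _ hvI)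
    have hfinal : ⟪e, ∫ x, f x ∂μ⟫ ≤ ‖∫ x, f x ∂μ‖ := by
      rw [he_def]
      have h5 := real_inner_le_norm (b i₀) (∫ x, f x ∂μ)
      rw [hbnorm i₀, one_mul] at h5
      exact h5
    linarith
  refine ⟨hIne, hIconv, hIsym, hIbdd, ?_, hupper⟩
  calc (1 / (n : ℝ)) * ∫ x, h x ∂μ = (∫ x, h x ∂μ) / n := by ring
  _ ≤ ∫ x, g i₀ x ∂μ := hi₀
  _ ≤ sSup ((fun v => ‖v‖) '' I) := hkey
end

section
/- Let X be a Banach function space over Ω with the Fatou property, V a finite-dimensional Hilbert space, W : Ω → L(V) a matrix weight, and E ⊆ Ω measurable with 0 < μ(E) < ∞. If T_E is bounded on X_W and on (X')_{W^{-1}}, then the bilinear averaging operator T_E(f,g) := 1_E ⟨f⟩_E ⊗ ⟨g⟩_E maps X_W × (X')_{W^{-1}} into L¹_{W ⊗ W^{-1}}(Ω; V ⊗ V) with ‖T_E‖ ≤ ‖T_E‖_{X_W → X_W} · ‖T_E‖_{(X')_{W^{-1}} → (X')_{W^{-1}}}. Conversely, if the bilinear operator is bounded then T_E is bounded on X_W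 with ‖T_E‖_{X_W → X_W} ≤ ‖T_E‖_{X_W × (X')_{W^{-1}} → L¹_{W⊗W^{-1}}}. -/
set_option synthInstance.maxHeartbeats 1000000
set_option maxHeartbeats 1000000


open MeasureTheory ENNReal
open scoped RealInnerProductSpace

/-- A Banach function space over a measure space `(Ω, μ)`, encoded through its (possibly infinite)
norm functional `N` on measurable real functions, satisfying the ideal property, the norm axioms,
saturation, and the Fatou property. -/
structure BFSpace (Ω : Type*) [MeasurableSpace Ω] (μ : Measure Ω) where
  N : (Ω → ℝ) → ℝ≥0∞
  congr : ∀ f g : Ω → ℝ, f =ᵐ[μ] g → N f = N g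
  ideal : ∀ f g : Ω → ℝ, (∀ᵐ x ∂μ, |g x| ≤ |f x|) → N g ≤ N f
  add_le : ∀ f g : Ω → ℝ, N (f + g) ≤ N f + N g
  smul_eq : ∀ (c : ℝ) (f : Ω → ℝ), N (c • f) = ENNReal.ofReal |c| * N f
  eq_zero_iff : ∀ f : Ω → ℝ, AEStronglyMeasurable f μ → (N f = 0 ↔ f =ᵐ[μ] 0)
  saturated : ∀ E : Set Ω, MeasurableSet E → 0 < μ E →
    ∃ G : Set Ω, G ⊆ E ∧ MeasurableSet G ∧ 0 < μ G ∧ N (G.indicator 1) < ⊤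
  fatou : ∀ (f : ℕ → Ω → ℝ) (g : Ω → ℝ),
    (∀ᵐ x ∂μ, Filter.Tendsto (fun k => f k x) Filter.atTop (nhds (g x))) →
    N g ≤ Filter.liminf (fun k => N (f k)) Filter.atTop

/-- The Köthe dual norm of a Banach function space. -/
noncomputable def BFSpace.dualN {Ω : Type*} [MeasurableSpace Ω] {μ : Measure Ω}
    (X : BFSpace Ω μ) (g : Ω → ℝ) : ℝ≥0∞ :=
  ⨆ (f : Ω → ℝ) (_ : X.N f ≤ 1), ∫⁻ x, ENNReal.ofReal |f x * g x| ∂μ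

/-- The matrix-weighted norm `‖f‖_{X_W} = ‖ ‖W f‖_V ‖_X`. -/
noncomputable def BFSpace.wN {Ω : Type*} [MeasurableSpace Ω] {μ : Measure Ω}
    (X : BFSpace Ω μ) {V : Type*} [NormedAddCommGroup V] [NormedSpace ℝ V]
    (W : Ω → V →L[ℝ] V) (f : Ω → V) : ℝ≥0∞ :=
  X.N fun x => ‖W x (f x)‖

/-- The averaging operator `T_E f = 1_E ⨍_E f dμ`. -/
noncomputable def avgOp {Ω : Type*} [MeasurableSpace Ω] (μ : Measure Ω)
    {V : Type*} [NormedAddCommGroup V] [NormedSpace ℝ V]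
    (E : Set Ω) (f : Ω → V) : Ω → V :=
  E.indicator fun _ => (μ E).toReal⁻¹ • ∫ x in E, f x ∂μ


namespace BFSpace

variable {Ω : Type*} [MeasurableSpace Ω] {μ : Measure Ω}

lemma N_zero (X : BFSpace Ω μ) : X.N 0 = 0 := by
  have h := X.smul_eq 0 0
  simpa using h

lemma N_le_one_of_smul (X : BFSpace Ω μ) {f : Ω → ℝ} (hf0 : X.N f ≠ 0) (hft : X.N f ≠ ⊤) :
    X.N ((X.N f).toReal⁻¹ • f) = 1 := by
  have hc : 0 < (X.N f).toReal := ENNReal.toReal_pos hf0 hft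
  rw [X.smul_eq, abs_of_pos (inv_pos.2 hc), ENNReal.ofReal_inv_of_pos hc,
    ENNReal.ofReal_toReal hft, ENNReal.inv_mul_cancel hf0 hft]

lemma N_indicator_pos (X : BFSpace Ω μ) {G : Set Ω} (hG : MeasurableSet G) (h : 0 < μ G) :
    0 < X.N (G.indicator 1) := by
  rcases eq_or_ne (X.N (G.indicator 1)) 0 with h0 | h0
  · exfalso
    have hm : AEStronglyMeasurable (G.indicator (1 : Ω → ℝ)) μ :=
      (measurable_one.indicator hG).aestronglyMeasurable
    have hz := (X.eq_zero_iff _ hm).1 h0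
    have hsub : G ⊆ {x | ¬ (G.indicator (1 : Ω → ℝ) x = (0 : Ω → ℝ) x)} := by
      intro x hx
      simp only [Set.mem_setOf_eq, Set.indicator_of_mem hx, Pi.one_apply, Pi.zero_apply]
      norm_num
    have : μ G = 0 := measure_mono_null hsub hz
    exact h.ne' this
  · exact pos_iff_ne_zero.2 h0

lemma le_dualN (X : BFSpace Ω μ) {f : Ω → ℝ} (hf : X.N f ≤ 1) (g : Ω → ℝ) :
    ∫⁻ x, ENNReal.ofReal |f x * g x| ∂μ ≤ X.dualN g :=
  le_iSup₂ (f := fun f (_ : X.N f ≤ 1) => ∫⁻ x, ENNReal.ofReal |f x * g x| ∂μ) f hf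

lemma dualN_mono (X : BFSpace Ω μ) {g₁ g₂ : Ω → ℝ} (h : ∀ᵐ x ∂μ, |g₁ x| ≤ |g₂ x|) :
    X.dualN g₁ ≤ X.dualN g₂ := by
  refine iSup₂_le fun f hf => le_trans ?_ (X.le_dualN hf g₂)
  refine lintegral_mono_ae (h.mono fun x hx => ?_)
  refine ENNReal.ofReal_le_ofReal ?_
  rw [abs_mul, abs_mul]
  exact mul_le_mul_of_nonneg_left hx (abs_nonneg _)

/-- Reduction of the Köthe dual norm to measurable test functions. -/
lemma dualN_le_of_measurable (X : BFSpace Ω μ) {ψ : Ω → ℝ} (hψ : Measurable ψ) {B : ℝ≥0∞}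
    (h : ∀ g : Ω → ℝ, Measurable g → X.N g ≤ 1 →
      ∫⁻ x, ENNReal.ofReal |g x * ψ x| ∂μ ≤ B) :
    X.dualN ψ ≤ B := by
  refine iSup₂_le fun f hf => ?_
  obtain ⟨G, hGm, hGle, hGeq⟩ :=
    exists_measurable_le_lintegral_eq μ (fun x => ENNReal.ofReal |f x * ψ x|)
  rw [hGeq]
  set g : Ω → ℝ := fun x => if ψ x = 0 then 0 else (G x).toReal / |ψ x| with hg
  have hgm : Measurable g := by
    refine Measurable.ite (hψ (measurableSet_singleton 0)) measurable_const ?_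
    exact (hGm.ennreal_toReal).div hψ.abs
  have hGne : ∀ x, G x ≠ ⊤ := fun x => ((hGle x).trans_lt ENNReal.ofReal_lt_top).ne
  have hgle : ∀ x, |g x| ≤ |f x| := by
    intro x
    by_cases hx : ψ x = 0
    · simp [hg, hx, abs_nonneg]
    · have h1 : (G x).toReal ≤ |f x * ψ x| := by
        have := hGle x
        have := ENNReal.toReal_le_of_le_ofReal (abs_nonneg _) this
        simpa using this
      have h2 : 0 ≤ (G x).toReal := ENNReal.toReal_nonneg
      rw [hg]
      simp only [hx, if_neg, ite_false]
      rw [abs_div, abs_abs, abs_of_nonneg h2, div_le_iff₀ (by positivity)]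
      rw [abs_mul] at h1
      exact h1
  have hNg : X.N g ≤ 1 := le_trans (X.ideal f g (Filter.Eventually.of_forall hgle)) hf
  have key : ∀ x, ENNReal.ofReal |g x * ψ x| = G x := by
    intro x
    by_cases hx : ψ x = 0
    · have : G x ≤ 0 := by simpa [hx] using hGle x
      simp [hg, hx, le_antisymm this (zero_le)]
    · have hψpos : 0 < |ψ x| := abs_pos.2 hx
      have : |g x * ψ x| = (G x).toReal := by
        rw [abs_mul, hg]
        simp only [hx, ite_false]
        rw [abs_div, abs_abs, abs_of_nonneg ENNReal.toReal_nonneg,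
          div_mul_cancel₀ _ hψpos.ne']
      rw [this, ENNReal.ofReal_toReal (hGne x)]
  calc ∫⁻ x, G x ∂μ = ∫⁻ x, ENNReal.ofReal |g x * ψ x| ∂μ := by
        refine lintegral_congr fun x => (key x).symm
    _ ≤ B := h g hgm hNg

/-- If the Köthe dual norm of `g` vanishes, then `g` vanishes a.e. -/
lemma eq_zero_of_dualN_eq_zero (X : BFSpace Ω μ) {g : Ω → ℝ} (hg : AEMeasurable g μ)
    (h : X.dualN g = 0) : g =ᵐ[μ] 0 := by
  set g' := hg.mk g with hg'
  have hgg' : g =ᵐ[μ] g' := hg.ae_eq_mk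
  have hdual' : X.dualN g' = 0 := by
    refine le_antisymm ?_ (zero_le)
    rw [← h]
    exact X.dualN_mono (hgg'.mono fun x hx => by rw [hx])
  suffices hsuff : g' =ᵐ[μ] 0 from hgg'.trans hsuff
  by_contra hne
  have hgm : Measurable g' := hg.measurable_mk
  have hpos : 0 < μ {x | g' x ≠ 0} := by
    rcases eq_or_ne (μ {x | g' x ≠ 0}) 0 with h0 | h0
    · exact absurd (by simpa [Filter.EventuallyEq, ae_iff] using h0) hne
    · exact pos_iff_ne_zero.2 h0
  have hunion : {x | g' x ≠ 0} = ⋃ n : ℕ, {x | ((n : ℝ) + 1)⁻¹ < |g' x|} := by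
    ext x
    simp only [Set.mem_setOf_eq, Set.mem_iUnion]
    constructor
    · intro hx
      obtain ⟨n, hn⟩ := exists_nat_gt (|g' x|)⁻¹
      refine ⟨n, ?_⟩
      rw [inv_lt_comm₀ (by positivity) (abs_pos.2 hx)]
      exact hn.trans (by linarith)
    · rintro ⟨n, hn⟩
      intro hx0
      rw [hx0] at hn
      simp only [abs_zero] at hn
      have : (0:ℝ) < ((n : ℝ) + 1)⁻¹ := by positivity
      linarith
  obtain ⟨n, hn⟩ : ∃ n : ℕ, 0 < μ {x | ((n : ℝ) + 1)⁻¹ < |g' x|} := by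
    by_contra hall
    push_neg at hall
    simp only [le_zero_iff] at hall
    rw [hunion] at hpos
    exact hpos.ne' (measure_iUnion_null fun n => hall n)
  set A := {x | ((n : ℝ) + 1)⁻¹ < |g' x|} with hA
  have hAm : MeasurableSet A := measurableSet_lt measurable_const hgm.abs
  obtain ⟨G, hGA, hGm, hGpos, hGfin⟩ := X.saturated A hAm hn
  have hN0 : X.N (G.indicator 1) ≠ 0 := (X.N_indicator_pos hGm hGpos).ne'
  set c := (X.N (G.indicator 1)).toReal with hc
  have hcpos : 0 < c := ENNReal.toReal_pos hN0 hGfin.ne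
  have hf1 : X.N (c⁻¹ • G.indicator 1) = 1 := X.N_le_one_of_smul hN0 hGfin.ne
  have hle := X.le_dualN (le_of_eq hf1) g'
  rw [hdual'] at hle
  have hbound : ∀ x ∈ G, ENNReal.ofReal (c⁻¹ * ((n : ℝ) + 1)⁻¹) ≤
      ENNReal.ofReal |(c⁻¹ • G.indicator (1 : Ω → ℝ)) x * g' x| := by
    intro x hx
    refine ENNReal.ofReal_le_ofReal ?_
    have hxA : x ∈ A := hGA hx
    rw [hA, Set.mem_setOf_eq] at hxA
    rw [abs_mul]
    have h1 : |(c⁻¹ • G.indicator (1 : Ω → ℝ)) x| = c⁻¹ := by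
      simp [Set.indicator_of_mem hx, abs_of_nonneg (inv_nonneg.2 hcpos.le)]
    rw [h1]
    exact mul_le_mul_of_nonneg_left hxA.le (by positivity)
  have hlower : ENNReal.ofReal (c⁻¹ * ((n : ℝ) + 1)⁻¹) * μ G ≤
      ∫⁻ x, ENNReal.ofReal |(c⁻¹ • G.indicator (1 : Ω → ℝ)) x * g' x| ∂μ := by
    rw [← setLIntegral_const G _]
    rw [← lintegral_indicator hGm]
    refine lintegral_mono fun x => ?_
    by_cases hx : x ∈ G
    · rw [Set.indicator_of_mem hx]
      exact hbound x hx
    · rw [Set.indicator_of_notMem hx]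
      exact zero_le
  have : ENNReal.ofReal (c⁻¹ * ((n : ℝ) + 1)⁻¹) * μ G = 0 :=
    le_antisymm (hlower.trans hle) (zero_le)
  rcases mul_eq_zero.1 this with h' | h'
  · rw [ENNReal.ofReal_eq_zero] at h'
    have : 0 < c⁻¹ * ((n : ℝ) + 1)⁻¹ := by positivity
    linarith
  · exact hGpos.ne' h'

/-- Hölder's inequality for the Köthe dual. -/
lemma lintegral_mul_le_N_mul_dualN (X : BFSpace Ω μ) {F G : Ω → ℝ}
    (hF : AEStronglyMeasurable F μ) (hG : AEMeasurable G μ) :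
    ∫⁻ x, ENNReal.ofReal |F x * G x| ∂μ ≤ X.N F * X.dualN G := by
  rcases eq_or_ne (X.dualN G) 0 with hG0 | hG0
  · have hz := X.eq_zero_of_dualN_eq_zero hG hG0
    rw [hG0, mul_zero]
    have hzz : ∀ᵐ x ∂μ, ENNReal.ofReal |F x * G x| = 0 := hz.mono fun x hx => by
      simp [Pi.zero_apply] at hx; simp [hx]
    rw [lintegral_congr_ae hzz, lintegral_zero]
  rcases eq_or_ne (X.N F) 0 with hF0 | hF0
  · have hz := (X.eq_zero_iff F hF).1 hF0
    have hzz : ∀ᵐ x ∂μ, ENNReal.ofReal |F x * G x| = 0 := hz.mono fun x hx => by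
      simp [Pi.zero_apply] at hx; simp [hx]
    rw [lintegral_congr_ae hzz, lintegral_zero]
    exact zero_le
  rcases eq_or_ne (X.N F) ⊤ with hFt | hFt
  · rw [hFt, ENNReal.top_mul hG0]
    exact le_top
  have hc : 0 < (X.N F).toReal := ENNReal.toReal_pos hF0 hFt
  set c := (X.N F).toReal with hcdef
  have h1 : X.N (c⁻¹ • F) = 1 := X.N_le_one_of_smul hF0 hFt
  have hle := X.le_dualN (le_of_eq h1) G
  have heq : ∫⁻ x, ENNReal.ofReal |(c⁻¹ • F) x * G x| ∂μ =
      ENNReal.ofReal c⁻¹ * ∫⁻ x, ENNReal.ofReal |F x * G x| ∂μ := by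
    rw [← lintegral_const_mul' _ _ ENNReal.ofReal_ne_top]
    refine lintegral_congr fun x => ?_
    rw [← ENNReal.ofReal_mul (by positivity)]
    congr 1
    simp only [Pi.smul_apply, smul_eq_mul]
    rw [mul_assoc, abs_mul, abs_of_nonneg (inv_nonneg.2 hc.le)]
  rw [heq] at hle
  have hinv : ENNReal.ofReal c⁻¹ = (X.N F)⁻¹ := by
    rw [ENNReal.ofReal_inv_of_pos hc, hcdef, ENNReal.ofReal_toReal hFt]
  rw [hinv] at hle
  calc ∫⁻ x, ENNReal.ofReal |F x * G x| ∂μ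
      = X.N F * ((X.N F)⁻¹ * ∫⁻ x, ENNReal.ofReal |F x * G x| ∂μ) := by
        rw [← mul_assoc, ENNReal.mul_inv_cancel hF0 hFt, one_mul]
    _ ≤ X.N F * X.dualN G := mul_le_mul_right hle _

lemma abs_realSign_le_one (t : ℝ) : |Real.sign t| ≤ 1 := by
  rcases Real.sign_apply_eq t with h | h | h <;> rw [h] <;> norm_num

lemma realSign_mul_self (t : ℝ) : Real.sign t * t = |t| := by
  rcases lt_trichotomy t 0 with h | h | h
  · rw [Real.sign_of_neg h, abs_of_neg h]; ring
  · simp [h]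
  · rw [Real.sign_of_pos h, abs_of_pos h]; ring

lemma measurable_realSign_comp {f : Ω → ℝ} (hf : Measurable f) :
    Measurable fun x => Real.sign (f x) := by
  have h : (fun x => Real.sign (f x)) =
      fun x => if f x < 0 then (-1 : ℝ) else if 0 < f x then 1 else 0 := by
    funext x; rfl
  rw [h]
  exact Measurable.ite (hf measurableSet_Iio) measurable_const
    (Measurable.ite (hf measurableSet_Ioi) measurable_const measurable_const)

lemma memL2_of_bdd_support {k : Ω → ℝ} (hk : AEStronglyMeasurable k μ) {F : Set Ω}
    (hF : MeasurableSet F) (hμF : μ F ≠ ⊤) (n : ℝ) (hbd : ∀ x, |k x| ≤ n)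
    (hsupp : ∀ x ∉ F, k x = 0) : MemLp k 2 μ := by
  have hkind : k = F.indicator k := by
    funext x
    by_cases h : x ∈ F
    · rw [Set.indicator_of_mem h]
    · rw [Set.indicator_of_notMem h]; exact hsupp x h
  rw [hkind, memLp_indicator_iff_restrict hF]
  have : IsFiniteMeasure (μ.restrict F) :=
    ⟨by rwa [Measure.restrict_apply_univ, lt_top_iff_ne_top]⟩
  exact MemLp.of_bound hk.restrict n
    (Filter.Eventually.of_forall fun x => by rw [Real.norm_eq_abs]; exact hbd x)

/-- The key Hahn–Banach/Lorentz–Luxemburg step: a bounded measurable function supported on a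
set of finite measure whose pairings against the dual unit ball are all bounded by `M` has
`X`-norm at most `M`. -/
lemma N_le_of_pairing (X : BFSpace Ω μ) [SigmaFinite μ] {k : Ω → ℝ} {F : Set Ω}
    (hF : MeasurableSet F) (hμF : μ F ≠ ⊤) (hk : Measurable k) (n₀ : ℝ)
    (hbd : ∀ x, |k x| ≤ n₀) (hsupp : ∀ x ∉ F, k x = 0) {M : ℝ≥0∞}
    (hM : ∀ ψ : Ω → ℝ, Measurable ψ → X.dualN ψ ≤ 1 →
      ∫⁻ x, ENNReal.ofReal |k x * ψ x| ∂μ ≤ M) :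
    X.N k ≤ M := by
  by_contra hlt
  push_neg at hlt
  obtain ⟨t, ht0, hMt, htN⟩ := ENNReal.lt_iff_exists_real_btwn.1 hlt
  have htpos : 0 < t := ENNReal.ofReal_pos.1 ((zero_le (a := M)).trans_lt hMt)
  set k' : Ω → ℝ := t⁻¹ • k with hk'def
  have hoft0 : ENNReal.ofReal t ≠ 0 := (ENNReal.ofReal_pos.2 htpos).ne'
  have hNk' : 1 < X.N k' := by
    rw [hk'def, X.smul_eq, abs_of_pos (inv_pos.2 htpos), ENNReal.ofReal_inv_of_pos htpos]
    have h1 : (ENNReal.ofReal t)⁻¹ * ENNReal.ofReal t < (ENNReal.ofReal t)⁻¹ * X.N k := by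
      rw [ENNReal.mul_lt_mul_iff_right (ENNReal.inv_ne_zero.2 ENNReal.ofReal_ne_top)
        (ENNReal.inv_ne_top.2 hoft0)]
      exact htN
    rwa [ENNReal.inv_mul_cancel hoft0 ENNReal.ofReal_ne_top] at h1
  have hk'm : Measurable k' := hk.const_smul t⁻¹
  have hmem : MemLp k' 2 μ := by
    refine memL2_of_bdd_support hk'm.aestronglyMeasurable hF hμF (|t⁻¹| * n₀)
      (fun x => ?_) (fun x hx => ?_)
    · rw [hk'def]
      simp only [Pi.smul_apply, smul_eq_mul, abs_mul]
      exact mul_le_mul_of_nonneg_left (hbd x) (abs_nonneg _)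
    · rw [hk'def]
      simp [hsupp x hx]
  set kL := hmem.toLp k' with hkL
  set S : Set (Lp ℝ 2 μ) := {g | X.N ⇑g ≤ 1} with hS
  have hScv : Convex ℝ S := by
    intro g₁ hg₁ g₂ hg₂ a b ha hb hab
    simp only [hS, Set.mem_setOf_eq] at hg₁ hg₂ ⊢
    have hcoe : ⇑(a • g₁ + b • g₂) =ᵐ[μ] a • ⇑g₁ + b • ⇑g₂ := by
      filter_upwards [Lp.coeFn_add (a • g₁) (b • g₂), Lp.coeFn_smul a g₁,
        Lp.coeFn_smul b g₂] with x h1 h2 h3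
      simp only [Pi.add_apply] at h1 ⊢
      rw [h1, h2, h3]
    rw [X.congr _ _ hcoe]
    calc X.N (a • ⇑g₁ + b • ⇑g₂) ≤ X.N (a • ⇑g₁) + X.N (b • ⇑g₂) := X.add_le _ _
      _ = ENNReal.ofReal a * X.N ⇑g₁ + ENNReal.ofReal b * X.N ⇑g₂ := by
          rw [X.smul_eq, X.smul_eq, abs_of_nonneg ha, abs_of_nonneg hb]
      _ ≤ ENNReal.ofReal a * 1 + ENNReal.ofReal b * 1 := by
          exact add_le_add (mul_le_mul_right hg₁ _) (mul_le_mul_right hg₂ _)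
      _ = 1 := by rw [mul_one, mul_one, ← ENNReal.ofReal_add ha hb, hab, ENNReal.ofReal_one]
  have hScl : IsClosed S := by
    refine IsSeqClosed.isClosed ?_
    intro g gl hgS hconv
    have hTIM : TendstoInMeasure μ (fun n => ⇑(g n)) Filter.atTop ⇑gl :=
      tendstoInMeasure_of_tendsto_Lp hconv
    obtain ⟨ns, _, hae⟩ := hTIM.exists_seq_tendsto_ae
    have hfat := X.fatou (fun i => ⇑(g (ns i))) ⇑gl hae
    refine le_trans hfat (le_trans Filter.liminf_le_limsup ?_)
    exact Filter.limsup_le_of_le (by isBoundedDefault)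
      (Filter.Eventually.of_forall fun i => hgS (ns i))
  have hkS : kL ∉ S := by
    simp only [hS, Set.mem_setOf_eq, not_le]
    rw [X.congr _ _ (MemLp.coeFn_toLp hmem)]
    exact hNk'
  obtain ⟨f, u, hfS, hfk⟩ := geometric_hahn_banach_closed_point hScv hScl hkS
  set φ := (InnerProductSpace.toDual ℝ (Lp ℝ 2 μ)).symm f with hφdef
  have hφ_apply : ∀ g : Lp ℝ 2 μ, ⟪φ, g⟫ = f g := fun g => InnerProductSpace.toDual_symm_apply
  have hu0 : 0 < u := by
    have h0S : (0 : Lp ℝ 2 μ) ∈ S := by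
      simp only [hS, Set.mem_setOf_eq]
      rw [X.congr _ 0 (Lp.coeFn_zero ℝ 2 μ), X.N_zero]
      exact zero_le_one
    have := hfS 0 h0S
    simpa using this
  have hφsm := MeasureTheory.Lp.aestronglyMeasurable φ
  set φm := hφsm.aemeasurable.mk ⇑φ with hφmdef
  have hφm_meas : Measurable φm := hφsm.aemeasurable.measurable_mk
  have hφeq : ⇑φ =ᵐ[μ] φm := hφsm.aemeasurable.ae_eq_mk
  set ψ : Ω → ℝ := fun x => u⁻¹ * φm x with hψdef
  have hψm : Measurable ψ := hφm_meas.const_mul u⁻¹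
  -- the inner product on L² ℝ is integration of the product
  have hinner : ∀ g : Lp ℝ 2 μ, ⟪φ, g⟫ = ∫ x, (⇑φ x) * (⇑g x) ∂μ := by
    intro g
    rw [MeasureTheory.L2.inner_def]
    refine integral_congr_ae (Filter.Eventually.of_forall fun x => ?_)
    simp [RCLike.inner_apply, conj_trivial, mul_comm]
  -- dual norm bound for ψ
  have hdualψ : X.dualN ψ ≤ 1 := by
    refine X.dualN_le_of_measurable hψm fun g hgm hgN => ?_
    -- truncations of g
    set B : ℕ → Set Ω := spanningSets μ with hB
    set gn : ℕ → Ω → ℝ := fun n x =>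
      (B n).indicator (fun y => min |g y| (n : ℝ) * Real.sign (φm y)) x with hgn
    have hgnm : ∀ n, Measurable (gn n) := by
      intro n
      exact ((hgm.abs.min measurable_const).mul
        (measurable_realSign_comp hφm_meas)).indicator (measurableSet_spanningSets μ n)
    have hgnle : ∀ n x, |gn n x| ≤ |g x| := by
      intro n x
      simp only [hgn]
      by_cases hx : x ∈ B n
      · rw [Set.indicator_of_mem hx, abs_mul]
        have h1 : |min |g x| (n : ℝ)| ≤ |g x| := by
          rw [abs_of_nonneg (le_min (abs_nonneg _) (Nat.cast_nonneg n))]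
          exact min_le_left _ _
        calc |min |g x| (n : ℝ)| * |Real.sign (φm x)| ≤ |g x| * 1 :=
              mul_le_mul h1 (abs_realSign_le_one _) (abs_nonneg _) (abs_nonneg _)
          _ = |g x| := mul_one _
      · rw [Set.indicator_of_notMem hx, abs_zero]
        exact abs_nonneg _
    have hgnN : ∀ n, X.N (gn n) ≤ 1 := fun n =>
      le_trans (X.ideal g (gn n) (Filter.Eventually.of_forall (hgnle n))) hgN
    have hgnmem : ∀ n, MemLp (gn n) 2 μ := by
      intro n
      refine memL2_of_bdd_support (hgnm n).aestronglyMeasurable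
        (measurableSet_spanningSets μ n) (measure_spanningSets_lt_top μ n).ne (n : ℝ)
        (fun x => ?_) (fun x hx => Set.indicator_of_notMem hx _)
      simp only [hgn]
      by_cases hx : x ∈ B n
      · rw [Set.indicator_of_mem hx, abs_mul]
        calc |min |g x| (n : ℝ)| * |Real.sign (φm x)| ≤ (n : ℝ) * 1 := by
              refine mul_le_mul ?_ (abs_realSign_le_one _) (abs_nonneg _) (Nat.cast_nonneg n)
              rw [abs_of_nonneg (le_min (abs_nonneg _) (Nat.cast_nonneg n))]
              exact min_le_right _ _
          _ = (n : ℝ) := mul_one _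
      · rw [Set.indicator_of_notMem hx, abs_zero]
        exact Nat.cast_nonneg n
    -- each truncation pairs below u
    set R : ℕ → Ω → ℝ := fun n x =>
      (B n).indicator (fun y => min |g y| (n : ℝ) * |φm y|) x with hR
    have hRint : ∀ n, Integrable (R n) μ := by
      intro n
      have h1 : Integrable (fun x => (⇑φ x) * (⇑((hgnmem n).toLp (gn n)) x)) μ := by
        have := MeasureTheory.L2.integrable_inner (𝕜 := ℝ) φ ((hgnmem n).toLp (gn n))
        refine this.congr (Filter.Eventually.of_forall fun x => ?_)
        simp [RCLike.inner_apply, conj_trivial, mul_comm]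
      refine h1.congr ?_
      filter_upwards [hφeq, MemLp.coeFn_toLp (hgnmem n)] with x h2 h3
      rw [h2, h3]
      simp only [hR, hgn]
      by_cases hx : x ∈ B n
      · rw [Set.indicator_of_mem hx, Set.indicator_of_mem hx]
        rw [mul_comm (φm x) _, mul_assoc, realSign_mul_self]
      · rw [Set.indicator_of_notMem hx, Set.indicator_of_notMem hx, mul_zero]
    have hRlt : ∀ n, ∫ x, R n x ∂μ < u := by
      intro n
      have hmemS : (hgnmem n).toLp (gn n) ∈ S := by
        simp only [hS, Set.mem_setOf_eq]
        rw [X.congr _ _ (MemLp.coeFn_toLp (hgnmem n))]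
        exact hgnN n
      have hlt := hfS _ hmemS
      rw [← hφ_apply, hinner] at hlt
      refine lt_of_le_of_lt (le_of_eq ?_) hlt
      refine integral_congr_ae ?_
      filter_upwards [hφeq, MemLp.coeFn_toLp (hgnmem n)] with x h2 h3
      rw [h2, h3]
      simp only [hR, hgn]
      by_cases hx : x ∈ B n
      · rw [Set.indicator_of_mem hx, Set.indicator_of_mem hx]
        rw [mul_comm (φm x) _, mul_assoc, realSign_mul_self]
      · rw [Set.indicator_of_notMem hx, Set.indicator_of_notMem hx, mul_zero]
    have hRnn : ∀ n x, 0 ≤ R n x := by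
      intro n x
      simp only [hR]
      by_cases hx : x ∈ B n
      · rw [Set.indicator_of_mem hx]
        exact mul_nonneg (le_min (abs_nonneg _) (Nat.cast_nonneg n)) (abs_nonneg _)
      · rw [Set.indicator_of_notMem hx]
    have hRlint : ∀ n, ∫⁻ x, ENNReal.ofReal (R n x) ∂μ ≤ ENNReal.ofReal u := by
      intro n
      rw [← ofReal_integral_eq_lintegral_ofReal (hRint n)
        (Filter.Eventually.of_forall (hRnn n))]
      exact ENNReal.ofReal_le_ofReal (hRlt n).le
    -- monotone convergence
    have hmono : ∀ x, Monotone fun n => ENNReal.ofReal (R n x) := by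
      intro x n m hnm
      refine ENNReal.ofReal_le_ofReal ?_
      simp only [hR]
      by_cases hx : x ∈ B n
      · have hx' : x ∈ B m := monotone_spanningSets μ hnm hx
        rw [Set.indicator_of_mem hx, Set.indicator_of_mem hx']
        refine mul_le_mul_of_nonneg_right ?_ (abs_nonneg _)
        exact min_le_min le_rfl (Nat.cast_le.2 hnm)
      · rw [Set.indicator_of_notMem hx]
        exact hRnn m x
    have htends : ∀ x, Filter.Tendsto (fun n => ENNReal.ofReal (R n x)) Filter.atTop
        (nhds (ENNReal.ofReal (|g x| * |φm x|))) := by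
      intro x
      have hxB : ∃ n₀, ∀ n ≥ n₀, x ∈ B n := by
        have : x ∈ ⋃ n, B n := by rw [hB, iUnion_spanningSets]; trivial
        obtain ⟨n₀, hn₀⟩ := Set.mem_iUnion.1 this
        exact ⟨n₀, fun n hn => monotone_spanningSets μ hn hn₀⟩
      obtain ⟨n₀, hn₀⟩ := hxB
      obtain ⟨n₁, hn₁⟩ := exists_nat_ge |g x|
      refine tendsto_atTop_of_eventually_const (i₀ := max n₀ n₁) fun n hn => ?_
      simp only [hR]
      rw [Set.indicator_of_mem (hn₀ n (le_trans (le_max_left _ _) hn))]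
      congr 1
      rw [min_eq_left (hn₁.trans (Nat.cast_le.2 (le_trans (le_max_right _ _) hn)))]
    have hMCT := lintegral_tendsto_of_tendsto_of_monotone (μ := μ)
      (f := fun n x => ENNReal.ofReal (R n x))
      (F := fun x => ENNReal.ofReal (|g x| * |φm x|))
      (fun n => ((((hgm.abs.min measurable_const).mul hφm_meas.abs).indicator
        (measurableSet_spanningSets μ n)).ennreal_ofReal).aemeasurable)
      (Filter.Eventually.of_forall hmono) (Filter.Eventually.of_forall htends)
    have hlim : ∫⁻ x, ENNReal.ofReal (|g x| * |φm x|) ∂μ ≤ ENNReal.ofReal u :=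
      le_of_tendsto' hMCT hRlint
    calc ∫⁻ x, ENNReal.ofReal |g x * ψ x| ∂μ
        = ENNReal.ofReal u⁻¹ * ∫⁻ x, ENNReal.ofReal (|g x| * |φm x|) ∂μ := by
          rw [← lintegral_const_mul' _ _ ENNReal.ofReal_ne_top]
          refine lintegral_congr fun x => ?_
          rw [← ENNReal.ofReal_mul (inv_nonneg.2 hu0.le)]
          congr 1
          simp only [hψdef]
          rw [abs_mul, abs_mul, abs_of_nonneg (inv_nonneg.2 hu0.le)]
          ring
      _ ≤ ENNReal.ofReal u⁻¹ * ENNReal.ofReal u := mul_le_mul_right hlim _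
      _ = 1 := by
          rw [ENNReal.ofReal_inv_of_pos hu0,
            ENNReal.inv_mul_cancel (ENNReal.ofReal_pos.2 hu0).ne' ENNReal.ofReal_ne_top]
  -- final contradiction
  have hMψ := hM ψ hψm hdualψ
  have hk'φint : Integrable (fun x => k' x * φm x) μ := by
    have h1 : Integrable (fun x => (⇑kL x) * (⇑φ x)) μ := by
      have := MeasureTheory.L2.integrable_inner (𝕜 := ℝ) kL φ
      refine this.congr (Filter.Eventually.of_forall fun x => ?_)
      simp [RCLike.inner_apply, conj_trivial, mul_comm]
    refine h1.congr ?_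
    filter_upwards [MemLp.coeFn_toLp hmem, hφeq] with x h3 h4
    rw [h3, h4]
  have hip : u < ∫ x, k' x * φm x ∂μ := by
    have h1 := hfk
    rw [← hφ_apply, hinner] at h1
    refine h1.trans_le (le_of_eq (integral_congr_ae ?_))
    filter_upwards [MemLp.coeFn_toLp hmem, hφeq] with x h3 h4
    rw [h3, h4]
    ring
  have hkφint : Integrable (fun x => k x * φm x) μ := by
    refine (hk'φint.const_mul t).congr (Filter.Eventually.of_forall fun x => ?_)
    simp only [hk'def, Pi.smul_apply, smul_eq_mul]
    field_simp
  have hkphimm : t * u < ∫ x, k x * φm x ∂μ := by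
    have heq : ∫ x, k x * φm x ∂μ = t * ∫ x, k' x * φm x ∂μ := by
      rw [← integral_const_mul]
      refine integral_congr_ae (Filter.Eventually.of_forall fun x => ?_)
      simp only [hk'def, Pi.smul_apply, smul_eq_mul]
      field_simp
    rw [heq]
    exact (mul_lt_mul_iff_right₀ htpos).2 hip
  have hintkψ : Integrable (fun x => k x * ψ x) μ := by
    refine (hkφint.const_mul u⁻¹).congr (Filter.Eventually.of_forall fun x => ?_)
    simp only [hψdef]
    ring
  have h2 : t < ∫ x, k x * ψ x ∂μ := by
    have heq : ∫ x, k x * ψ x ∂μ = u⁻¹ * ∫ x, k x * φm x ∂μ := by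
      rw [← integral_const_mul]
      refine integral_congr_ae (Filter.Eventually.of_forall fun x => ?_)
      rw [hψdef]
      ring
    rw [heq]
    calc t = u⁻¹ * (t * u) := by field_simp
      _ < u⁻¹ * ∫ x, k x * φm x ∂μ := by
          exact (mul_lt_mul_iff_right₀ (inv_pos.2 hu0)).2 hkphimm
  have hup : ENNReal.ofReal t ≤ ∫⁻ x, ENNReal.ofReal |k x * ψ x| ∂μ := by
    calc ENNReal.ofReal t ≤ ENNReal.ofReal (∫ x, k x * ψ x ∂μ) :=
          ENNReal.ofReal_le_ofReal h2.le
      _ ≤ ENNReal.ofReal (∫ x, |k x * ψ x| ∂μ) :=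
          ENNReal.ofReal_le_ofReal (integral_mono hintkψ hintkψ.abs fun x => le_abs_self _)
      _ = ∫⁻ x, ENNReal.ofReal |k x * ψ x| ∂μ :=
          ofReal_integral_eq_lintegral_ofReal hintkψ.abs
            (Filter.Eventually.of_forall fun x => abs_nonneg _)
  exact absurd (hup.trans hMψ) (not_le.2 hMt)
end BFSpace

lemma aesm_apply {Ω : Type*} [MeasurableSpace Ω] {μ : Measure Ω}
    {V : Type*} [NormedAddCommGroup V] [NormedSpace ℝ V]
    {W : Ω → V →L[ℝ] V} (hW : AEStronglyMeasurable W μ) {v : Ω → V}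
    (hv : AEStronglyMeasurable v μ) : AEStronglyMeasurable (fun x => W x (v x)) μ :=
  (isBoundedBilinearMap_apply (𝕜 := ℝ) (E := V) (F := V)).continuous.comp_aestronglyMeasurable
    (hW.prodMk hv)


/-- **Bilinear characterization of boundedness of the averaging operator.**
If `T_E` is bounded on `X_W` with constant `C₁` and on `(X')_{W⁻¹}` with constant `C₂`, then the
bilinear operator `(f,g) ↦ 1_E ⟨f⟩_E ⊗ ⟨g⟩_E` maps `X_W × (X')_{W⁻¹}` into
`L¹_{W⊗W⁻¹}(Ω; V⊗V)` with constant `C₁·C₂` (the weighted tensor norm of the rank-one function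
factorizing as `‖W(x)⟨f⟩_E‖·‖W(x)⁻¹⟨g⟩_E‖`). Conversely, if the bilinear operator is bounded
with constant `C`, then `T_E` is bounded on `X_W` with constant `C`. -/
theorem averaging_bilinear_characterization
    {Ω : Type*} [MeasurableSpace Ω] (μ : Measure Ω) [SigmaFinite μ]
    {V : Type*} [NormedAddCommGroup V] [InnerProductSpace ℝ V] [FiniteDimensional ℝ V]
    (X : BFSpace Ω μ)
    (W Winv : Ω → V →L[ℝ] V)
    (hWm : AEStronglyMeasurable W μ) (hWim : AEStronglyMeasurable Winv μ)
    (hsa : ∀ᵐ x ∂μ, ∀ u v : V, ⟪W x u, v⟫ = ⟪u, W x v⟫)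
    (hpos : ∀ᵐ x ∂μ, ∀ u : V, u ≠ 0 → 0 < ⟪W x u, u⟫)
    (hinv : ∀ᵐ x ∂μ, (Winv x).comp (W x) = ContinuousLinearMap.id ℝ V ∧
      (W x).comp (Winv x) = ContinuousLinearMap.id ℝ V)
    (E : Set Ω) (hE : MeasurableSet E) (h0 : 0 < μ E) (hfin : μ E < ⊤) :
    -- direct implication: boundedness on `X_W` and on `(X')_{W⁻¹}` gives the bilinear bound
    (∀ C₁ C₂ : ℝ≥0∞,
      (∀ f : Ω → V, AEStronglyMeasurable f μ → X.wN W (avgOp μ E f) ≤ C₁ * X.wN W f) →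
      (∀ g : Ω → V, AEStronglyMeasurable g μ →
        X.dualN (fun x => ‖Winv x (avgOp μ E g x)‖) ≤
          C₂ * X.dualN (fun x => ‖Winv x (g x)‖)) →
      ∀ (f g : Ω → V), AEStronglyMeasurable f μ → AEStronglyMeasurable g μ →
        (∫⁻ x in E, ENNReal.ofReal ‖W x ((μ E).toReal⁻¹ • ∫ y in E, f y ∂μ)‖ *
            ENNReal.ofReal ‖Winv x ((μ E).toReal⁻¹ • ∫ y in E, g y ∂μ)‖ ∂μ) ≤
          C₁ * C₂ * (X.wN W f * X.dualN (fun x => ‖Winv x (g x)‖))) ∧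
    -- converse: the bilinear bound gives boundedness on `X_W`
    (∀ C : ℝ≥0∞,
      (∀ (f g : Ω → V), AEStronglyMeasurable f μ → AEStronglyMeasurable g μ →
        (∫⁻ x in E, ENNReal.ofReal ‖W x ((μ E).toReal⁻¹ • ∫ y in E, f y ∂μ)‖ *
            ENNReal.ofReal ‖Winv x ((μ E).toReal⁻¹ • ∫ y in E, g y ∂μ)‖ ∂μ) ≤
          C * (X.wN W f * X.dualN (fun x => ‖Winv x (g x)‖))) →
      ∀ f : Ω → V, AEStronglyMeasurable f μ →
        X.wN W (avgOp μ E f) ≤ C * X.wN W f) := by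
  constructor
  · -- direct implication
    intro C₁ C₂ h₁ h₂ f g hf hg
    set a := (μ E).toReal⁻¹ • ∫ y in E, f y ∂μ with hadef
    set b := (μ E).toReal⁻¹ • ∫ y in E, g y ∂μ with hbdef
    have havgf : avgOp μ E f = E.indicator (fun _ => a) := rfl
    have havgg : avgOp μ E g = E.indicator (fun _ => b) := rfl
    have hFm : AEStronglyMeasurable (fun x => ‖W x (avgOp μ E f x)‖) μ :=
      (aesm_apply hWm ((stronglyMeasurable_const.indicator hE).aestronglyMeasurable)).norm
    have hGm : AEMeasurable (fun x => ‖Winv x (avgOp μ E g x)‖) μ :=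
      ((aesm_apply hWim ((stronglyMeasurable_const.indicator hE).aestronglyMeasurable)).norm).aemeasurable
    have key : (∫⁻ x in E, ENNReal.ofReal ‖W x a‖ * ENNReal.ofReal ‖Winv x b‖ ∂μ) =
        ∫⁻ x, ENNReal.ofReal |‖W x (avgOp μ E f x)‖ * ‖Winv x (avgOp μ E g x)‖| ∂μ := by
      rw [← lintegral_indicator hE]
      refine lintegral_congr fun x => ?_
      by_cases hx : x ∈ E
      · rw [Set.indicator_of_mem hx, havgf, havgg, Set.indicator_of_mem hx,
          Set.indicator_of_mem hx, abs_of_nonneg (mul_nonneg (norm_nonneg _) (norm_nonneg _)),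
          ENNReal.ofReal_mul (norm_nonneg _)]
      · rw [Set.indicator_of_notMem hx, havgf, havgg, Set.indicator_of_notMem hx,
          Set.indicator_of_notMem hx]
        simp
    rw [key]
    calc ∫⁻ x, ENNReal.ofReal |‖W x (avgOp μ E f x)‖ * ‖Winv x (avgOp μ E g x)‖| ∂μ
        ≤ X.N (fun x => ‖W x (avgOp μ E f x)‖) *
            X.dualN (fun x => ‖Winv x (avgOp μ E g x)‖) :=
          X.lintegral_mul_le_N_mul_dualN hFm hGm
      _ ≤ (C₁ * X.wN W f) * (C₂ * X.dualN (fun x => ‖Winv x (g x)‖)) :=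
          mul_le_mul' (h₁ f hf) (h₂ g hg)
      _ = C₁ * C₂ * (X.wN W f * X.dualN (fun x => ‖Winv x (g x)‖)) := by ring
  · -- converse
    intro C hbil f hf
    set a := (μ E).toReal⁻¹ • ∫ y in E, f y ∂μ with hadef
    have havg : avgOp μ E f = E.indicator (fun _ => a) := rfl
    have hgoal : X.wN W (avgOp μ E f) =
        X.N (fun x => ‖W x (E.indicator (fun _ => a) x)‖) := by
      rw [BFSpace.wN, havg]
    rw [hgoal]
    by_cases haz : a = 0
    · have hz : (fun x => ‖W x (E.indicator (fun _ => a) x)‖) = (0 : Ω → ℝ) := by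
        funext x
        by_cases hx : x ∈ E
        · simp [Set.indicator_of_mem hx, haz]
        · simp [Set.indicator_of_notMem hx]
      rw [hz, X.N_zero]
      exact zero_le
    -- measurable representatives
    have hWsm : StronglyMeasurable (hWm.mk W) := hWm.stronglyMeasurable_mk
    set Wm := hWm.mk W with hWmdef
    have hWeq : ∀ᵐ x ∂μ, W x = Wm x := hWm.ae_eq_mk
    have hq1 : StronglyMeasurable (fun x => Wm x a) :=
      (isBoundedBilinearMap_apply (𝕜 := ℝ) (E := V) (F := V)).continuous.comp_stronglyMeasurable
        (hWsm.prodMk stronglyMeasurable_const)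
    set q : Ω → V := fun x => Wm x (Wm x a) with hqdef
    have hq : StronglyMeasurable q :=
      (isBoundedBilinearMap_apply (𝕜 := ℝ) (E := V) (F := V)).continuous.comp_stronglyMeasurable
        (hWsm.prodMk hq1)
    set r : Ω → ℝ := fun x => ‖Wm x a‖ with hrdef
    have hrm : Measurable r := hq1.norm.measurable
    -- bundled a.e. facts
    have hae : ∀ᵐ x ∂μ, W x = Wm x ∧ W x a ≠ 0 ∧ r x = ‖W x a‖ ∧
        (∀ v, Winv x (W x v) = v) ∧ (∀ v, W x (Winv x v) = v) ∧
        (∀ u v : V, ⟪W x u, v⟫ = ⟪u, W x v⟫) := by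
      filter_upwards [hWeq, hpos, hinv, hsa] with x h1 h2 h3 h4
      refine ⟨h1, ?_, by simp only [hrdef]; rw [← h1], ?_, ?_, h4⟩
      · intro hWa0
        have := h2 a haz
        rw [hWa0] at this
        simp at this
      · intro v
        have := congrArg (fun T => T v) h3.1
        simpa using this
      · intro v
        have := congrArg (fun T => T v) h3.2
        simpa using this
    -- Step 1: pairing bound against the dual unit ball
    have step1 : ∀ ψ : Ω → ℝ, Measurable ψ → X.dualN ψ ≤ 1 →
        ∫⁻ x, ENNReal.ofReal |‖W x (E.indicator (fun _ => a) x)‖ * ψ x| ∂μ ≤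
          C * X.wN W f := by
      intro ψ hψ hψdual
      set g : Ω → V := fun x => E.indicator (fun y => (|ψ y| / r y) • q y) x with hgdef
      have hgsm : StronglyMeasurable g :=
        (((hψ.abs.div hrm).stronglyMeasurable.smul hq).indicator hE)
      set En : ℕ → Set Ω := fun n => E ∩ {x | ‖g x‖ ≤ (n : ℝ)} with hEndef
      have hEnm : ∀ n, MeasurableSet (En n) :=
        fun n => hE.inter (measurableSet_le hgsm.norm.measurable measurable_const)
      have hEnE : ∀ n, En n ⊆ E := fun n => Set.inter_subset_left
      have hEnmono : Monotone En := by
        intro n m hnm x hx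
        obtain ⟨hx1, hx2⟩ := hx
        refine Set.mem_inter hx1 ?_
        show ‖g x‖ ≤ (m : ℝ)
        exact le_trans hx2 (Nat.cast_le.2 hnm)
      set gn : ℕ → Ω → V := fun n x => (En n).indicator (fun y => (|ψ y| / r y) • q y) x
        with hgndef
      have hgnsm : ∀ n, AEStronglyMeasurable (gn n) μ := fun n =>
        (((hψ.abs.div hrm).stronglyMeasurable.smul hq).indicator (hEnm n)).aestronglyMeasurable
      have hgng : ∀ n x, x ∈ En n → gn n x = g x := by
        intro n x hx
        simp only [hgndef, hgdef]
        rw [Set.indicator_of_mem hx, Set.indicator_of_mem (hEnE n hx)]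
      have hgnbd : ∀ n x, ‖gn n x‖ ≤ (n : ℝ) := by
        intro n x
        by_cases hx : x ∈ En n
        · rw [hgng n x hx]
          exact hx.2
        · simp only [hgndef]
          rw [Set.indicator_of_notMem hx, norm_zero]
          exact Nat.cast_nonneg n
      -- integrability of gn on E
      have hgnint : ∀ n, IntegrableOn (gn n) E μ := by
        intro n
        refine Integrable.mono' (g := fun _ => (n : ℝ))
          ((integrableOn_const_iff (C := (n : ℝ))).2 (Or.inr hfin)) ((hgnsm n).restrict) ?_
        exact Filter.Eventually.of_forall fun x => hgnbd n x
      -- the bilinear hypothesis applied to (f, gn n)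
      have key : ∀ n : ℕ, ∫⁻ y in E,
          ENNReal.ofReal ((En n).indicator (fun z => |ψ z| * r z) y) ∂μ ≤ C * X.wN W f := by
        intro n
        have Hn := hbil f (gn n) hf (hgnsm n)
        set bn := (μ E).toReal⁻¹ • ∫ y in E, gn n y ∂μ with hbndef
        -- dual factor at most one
        have hα : X.dualN (fun x => ‖Winv x (gn n x)‖) ≤ 1 := by
          refine le_trans (X.dualN_mono ?_) hψdual
          filter_upwards [hae] with x hx
          obtain ⟨h1, h2, h3, h4, h5, h6⟩ := hx
          by_cases hxE : x ∈ En n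
          · have hgnx : gn n x = (|ψ x| / r x) • q x := by
              simp only [hgndef]
              rw [Set.indicator_of_mem hxE]
            have hqx : Winv x (q x) = W x a := by
              simp only [hqdef]
              rw [← h1]
              exact h4 (W x a)
            rw [hgnx, ContinuousLinearMap.map_smul, hqx, abs_of_nonneg (norm_nonneg _),
              norm_smul, Real.norm_eq_abs, abs_div, abs_abs, h3,
              abs_of_nonneg (norm_nonneg _), div_mul_cancel₀ _ (norm_ne_zero_iff.2 h2)]
          · simp only [hgndef]
            rw [Set.indicator_of_notMem hxE, map_zero, norm_zero, abs_zero]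
            exact abs_nonneg _
        -- lower bound of the bilinear form by the inner-product pairing
        have hβ1 : ENNReal.ofReal ⟪a, bn⟫ * μ E ≤
            ∫⁻ x in E, ENNReal.ofReal ‖W x a‖ * ENNReal.ofReal ‖Winv x bn‖ ∂μ := by
          rw [← setLIntegral_const E (ENNReal.ofReal ⟪a, bn⟫)]
          refine lintegral_mono_ae (ae_restrict_of_ae ?_)
          filter_upwards [hae] with x hx
          obtain ⟨h1, h2, h3, h4, h5, h6⟩ := hx
          have hip : ⟪a, bn⟫ = ⟪W x a, Winv x bn⟫ := by
            rw [h6 a (Winv x bn), h5 bn]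
          rw [hip, ← ENNReal.ofReal_mul (norm_nonneg _)]
          exact ENNReal.ofReal_le_ofReal (real_inner_le_norm _ _)
        have hβ2 : ⟪a, bn⟫ = (μ E).toReal⁻¹ * ∫ y in E, ⟪a, gn n y⟫ ∂μ := by
          rw [hbndef, real_inner_smul_right, ← integral_inner (hgnint n) a]
        have hone : ENNReal.ofReal (μ E).toReal⁻¹ * μ E = 1 := by
          rw [ENNReal.ofReal_inv_of_pos (ENNReal.toReal_pos h0.ne' hfin.ne),
            ENNReal.ofReal_toReal hfin.ne, ENNReal.inv_mul_cancel h0.ne' hfin.ne]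
        have hβ3 : ENNReal.ofReal (∫ y in E, ⟪a, gn n y⟫ ∂μ) ≤ C * X.wN W f := by
          have hchain : ENNReal.ofReal (∫ y in E, ⟪a, gn n y⟫ ∂μ) =
              ENNReal.ofReal ⟪a, bn⟫ * μ E := by
            rw [hβ2, ENNReal.ofReal_mul (by positivity), mul_comm (ENNReal.ofReal _) _,
              mul_assoc, hone, mul_one]
          rw [hchain]
          refine le_trans hβ1 (le_trans Hn ?_)
          calc C * (X.wN W f * X.dualN fun x => ‖Winv x (gn n x)‖)
              ≤ C * (X.wN W f * 1) := by
                exact mul_le_mul_right (mul_le_mul_right hα _) _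
            _ = C * X.wN W f := by rw [mul_one]
        -- rewrite the real integral as a lower Lebesgue integral
        have hinn_eq : ∀ᵐ y ∂μ, ⟪a, gn n y⟫ = (En n).indicator (fun z => |ψ z| * r z) y := by
          filter_upwards [hae] with y hy
          obtain ⟨h1, h2, h3, h4, h5, h6⟩ := hy
          by_cases hxE : y ∈ En n
          · simp only [hgndef]
            rw [Set.indicator_of_mem hxE, Set.indicator_of_mem hxE, real_inner_smul_right]
            have hip : ⟪a, q y⟫ = ‖W y a‖ ^ 2 := by
              simp only [hqdef]
              rw [← h1, ← h6 a (W y a), real_inner_self_eq_norm_sq]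
            rw [hip, h3]
            have hr0 : ‖W y a‖ ≠ 0 := norm_ne_zero_iff.2 h2
            field_simp
          · simp only [hgndef]
            rw [Set.indicator_of_notMem hxE, Set.indicator_of_notMem hxE, inner_zero_right]
        have hβ4 : ENNReal.ofReal (∫ y in E, ⟪a, gn n y⟫ ∂μ) =
            ∫⁻ y in E, ENNReal.ofReal ((En n).indicator (fun z => |ψ z| * r z) y) ∂μ := by
          have hint : Integrable (fun y => ⟪a, gn n y⟫) (μ.restrict E) :=
            (hgnint n).const_inner a
          have hnn : 0 ≤ᵐ[μ.restrict E] fun y => ⟪a, gn n y⟫ := by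
            refine ae_restrict_of_ae (hinn_eq.mono fun y hy => ?_)
            show (0 : ℝ) ≤ ⟪a, gn n y⟫
            rw [hy]
            by_cases hxE : y ∈ En n
            · rw [Set.indicator_of_mem hxE]
              have h0r : (0:ℝ) ≤ r y := by simp only [hrdef]; exact norm_nonneg _
              positivity
            · rw [Set.indicator_of_notMem hxE]
          rw [ofReal_integral_eq_lintegral_ofReal hint hnn]
          exact lintegral_congr_ae ((ae_restrict_of_ae hinn_eq).mono fun y hy => by
            simp only [hy])
        rw [← hβ4]
        exact hβ3
      -- monotone convergence in n
      have hmono : ∀ y, Monotone fun n =>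
          ENNReal.ofReal ((En n).indicator (fun z => |ψ z| * r z) y) := by
        intro y n m hnm
        refine ENNReal.ofReal_le_ofReal ?_
        by_cases hx : y ∈ En n
        · rw [Set.indicator_of_mem hx, Set.indicator_of_mem (hEnmono hnm hx)]
        · rw [Set.indicator_of_notMem hx]
          by_cases hx' : y ∈ En m
          · rw [Set.indicator_of_mem hx']
            have : 0 ≤ r y := by rw [hrdef]; exact norm_nonneg _
            positivity
          · rw [Set.indicator_of_notMem hx']
      have htends : ∀ᵐ y ∂(μ.restrict E), Filter.Tendsto
          (fun n => ENNReal.ofReal ((En n).indicator (fun z => |ψ z| * r z) y))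
          Filter.atTop (nhds (ENNReal.ofReal (|ψ y| * r y))) := by
        filter_upwards [ae_restrict_mem hE] with y hy
        obtain ⟨n₀, hn₀⟩ := exists_nat_ge ‖g y‖
        refine tendsto_atTop_of_eventually_const (i₀ := n₀) fun n hn => ?_
        have hyn : y ∈ En n :=
          Set.mem_inter hy (show ‖g y‖ ≤ (n : ℝ) from le_trans hn₀ (Nat.cast_le.2 hn))
        rw [Set.indicator_of_mem hyn]
      have hMCT := lintegral_tendsto_of_tendsto_of_monotone (μ := μ.restrict E)
        (f := fun n y => ENNReal.ofReal ((En n).indicator (fun z => |ψ z| * r z) y))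
        (F := fun y => ENNReal.ofReal (|ψ y| * r y))
        (fun n => (((hψ.abs.mul hrm).indicator (hEnm n)).ennreal_ofReal).aemeasurable)
        (Filter.Eventually.of_forall hmono) htends
      have hfinal1 : ∫⁻ y in E, ENNReal.ofReal (|ψ y| * r y) ∂μ ≤ C * X.wN W f :=
        le_of_tendsto' hMCT key
      -- conclude
      calc ∫⁻ x, ENNReal.ofReal |‖W x (E.indicator (fun _ => a) x)‖ * ψ x| ∂μ
          = ∫⁻ x, E.indicator (fun y => ENNReal.ofReal (|ψ y| * ‖W y a‖)) x ∂μ := by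
            refine lintegral_congr fun x => ?_
            by_cases hx : x ∈ E
            · rw [Set.indicator_of_mem hx, Set.indicator_of_mem hx, abs_mul,
                abs_of_nonneg (norm_nonneg _)]
              congr 1
              ring
            · rw [Set.indicator_of_notMem hx, Set.indicator_of_notMem hx]
              simp
        _ = ∫⁻ x in E, ENNReal.ofReal (|ψ x| * ‖W x a‖) ∂μ := lintegral_indicator hE _
        _ = ∫⁻ x in E, ENNReal.ofReal (|ψ x| * r x) ∂μ := by
            refine lintegral_congr_ae (ae_restrict_of_ae ?_)
            filter_upwards [hae] with x hx
            rw [hx.2.2.1]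
        _ ≤ C * X.wN W f := hfinal1
    -- Step 2 : apply the Lorentz–Luxemburg style duality
    have hhsm : AEStronglyMeasurable (fun x => ‖W x (E.indicator (fun _ => a) x)‖) μ :=
      (aesm_apply hWm ((stronglyMeasurable_const.indicator hE).aestronglyMeasurable)).norm
    set h' : Ω → ℝ := fun x =>
      |hhsm.aemeasurable.mk (fun x => ‖W x (E.indicator (fun _ => a) x)‖) x| with hh'def
    have hh'm : Measurable h' := hhsm.aemeasurable.measurable_mk.abs
    have hh'eq : (fun x => ‖W x (E.indicator (fun _ => a) x)‖) =ᵐ[μ] h' := by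
      filter_upwards [hhsm.aemeasurable.ae_eq_mk] with x hx
      simp only [hh'def]
      rw [← hx]
      exact (abs_of_nonneg (norm_nonneg _)).symm
    have hh'nn : ∀ x, 0 ≤ h' x := fun x => abs_nonneg _
    set hn : ℕ → Ω → ℝ := fun n x => E.indicator (fun y => min (h' y) (n : ℝ)) x with hhndef
    have hhnN : ∀ n, X.N (hn n) ≤ C * X.wN W f := by
      intro n
      refine X.N_le_of_pairing hE hfin.ne ((hh'm.min measurable_const).indicator hE) (n : ℝ)
        (fun x => ?_) (fun x hx => Set.indicator_of_notMem hx _) (fun ψ hψm hψd => ?_)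
      · by_cases hx : x ∈ E
        · rw [Set.indicator_of_mem hx, abs_of_nonneg (le_min (hh'nn x) (Nat.cast_nonneg n))]
          exact min_le_right _ _
        · rw [Set.indicator_of_notMem hx, abs_zero]
          exact Nat.cast_nonneg n
      · refine le_trans ?_ (step1 ψ hψm hψd)
        refine lintegral_mono_ae ?_
        filter_upwards [hh'eq] with x hx
        refine ENNReal.ofReal_le_ofReal ?_
        rw [abs_mul, abs_mul, hx]
        refine mul_le_mul_of_nonneg_right ?_ (abs_nonneg _)
        by_cases hxE : x ∈ E
        · rw [Set.indicator_of_mem hxE, abs_of_nonneg (le_min (hh'nn x) (Nat.cast_nonneg n)),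
            abs_of_nonneg (hh'nn x)]
          exact min_le_left _ _
        · rw [Set.indicator_of_notMem hxE, abs_zero]
          exact abs_nonneg _
    have hNeq : X.N (fun x => ‖W x (E.indicator (fun _ => a) x)‖) =
        X.N (E.indicator h') := by
      refine X.congr _ _ ?_
      filter_upwards [hh'eq] with x hx
      by_cases hxE : x ∈ E
      · rw [hx, Set.indicator_of_mem hxE]
      · rw [Set.indicator_of_notMem hxE, Set.indicator_of_notMem hxE, map_zero, norm_zero]
    have hconv : ∀ᵐ x ∂μ, Filter.Tendsto (fun n => hn n x) Filter.atTop
        (nhds (E.indicator h' x)) := by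
      refine Filter.Eventually.of_forall fun x => ?_
      by_cases hxE : x ∈ E
      · obtain ⟨n₀, hn₀⟩ := exists_nat_ge (h' x)
        refine tendsto_atTop_of_eventually_const (i₀ := n₀) fun n hn => ?_
        simp only [hhndef]
        rw [Set.indicator_of_mem hxE, Set.indicator_of_mem hxE,
          min_eq_left (le_trans hn₀ (Nat.cast_le.2 hn))]
      · refine tendsto_atTop_of_eventually_const (i₀ := 0) fun n _ => ?_
        simp only [hhndef]
        rw [Set.indicator_of_notMem hxE, Set.indicator_of_notMem hxE]
    rw [hNeq]
    refine le_trans (X.fatou _ _ hconv) ?_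
    refine le_trans Filter.liminf_le_limsup ?_
    exact Filter.limsup_le_of_le (by isBoundedDefault)
      (Filter.Eventually.of_forall fun n => hhnN n)
end

section
/- Let p_1,…,p_m ∈ [1,∞], 1/p = Σ_j 1/p_j, and let W_j : ℝ^d → L(H_j) be matrix weights with W_j^{-1} locally p_j'-integrable. If the tensor-product Roudenko quantity [W⃗]_{p⃗,op} := sup_Q ( ⨍_Q ∏_{j=1}^m ( ⨍_Q ‖W_j(x) W_j(x_j)^{-1}‖^{p_j'} dx_j )^{p/p_j'} dx )^{1/p} is finite, then for every cube Q and all f_j ∈ L^{p_j}_{W_j}(ℝ^d; H_j), the averaging operator T_Q(f⃗) := 1_Q ⊗_{j=1}^m ⟨f_j⟩_Q satisfies ‖T_Q(f⃗)‖_{L^p_{W}(ℝ^d; ⊗H_j)} ≤ [W⃗]_{p⃗,op} ∏_{j=1}^m ‖f_j‖_{L^{p_j}_{W_j}}, where W := ⊗_{j=1}^m W_j. Hence [W⃗]_{p⃗} ≤ [W⃗]_{p⃗,op}. -/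
open MeasureTheory ENNReal

/-- The axis-parallel cube in `ℝ^d` with corner `a` and side length `ℓ`. -/
def cube {d : ℕ} (a : Fin d → ℝ) (ℓ : ℝ) : Set (Fin d → ℝ) :=
  {x | ∀ i, a i ≤ x i ∧ x i ≤ a i + ℓ}

/-- The normalized Lebesgue measure on the cube `Q = cube a ℓ` (so that integrals against it are
averages `⨍_Q`). -/
noncomputable def cubeAvg {d : ℕ} (a : Fin d → ℝ) (ℓ : ℝ) : Measure (Fin d → ℝ) :=
  (volume (cube a ℓ))⁻¹ • volume.restrict (cube a ℓ)

/-- The `L^t(ν)`-"norm" `(∫ g^t dν)^{1/t}` of an `ℝ≥0∞`-valued function, for `t ∈ (0,∞]`,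
interpreted as the essential supremum when `t = ∞`.  Applied with `ν = cubeAvg a ℓ` this is the
average `(⨍_Q g^t)^{1/t}`. -/
noncomputable def avgLp {α : Type*} [MeasurableSpace α] (ν : Measure α) (t : ℝ≥0∞)
    (g : α → ℝ≥0∞) : ℝ≥0∞ :=
  if t = ⊤ then essSup g ν else (∫⁻ x, g x ^ t.toReal ∂ν) ^ (1 / t.toReal)

lemma lintegral_mul_le_essSup_mul {α : Type*} [MeasurableSpace α] {ν : Measure α}
    {u v : α → ℝ≥0∞} (hv : AEMeasurable v ν) :
    ∫⁻ y, u y * v y ∂ν ≤ essSup u ν * ∫⁻ y, v y ∂ν := by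
  by_cases htop : essSup u ν = ⊤
  · by_cases hv0 : ∫⁻ y, v y ∂ν = 0
    · have hvz : v =ᵐ[ν] 0 := (lintegral_eq_zero_iff' hv).mp hv0
      have : (fun y => u y * v y) =ᵐ[ν] 0 := by
        filter_upwards [hvz] with y hy
        simp [hy]
      rw [lintegral_congr_ae this]
      simp
    · rw [htop, ENNReal.top_mul hv0]
      exact le_top
  · calc ∫⁻ y, u y * v y ∂ν ≤ ∫⁻ y, essSup u ν * v y ∂ν := by
          refine lintegral_mono_ae ?_
          filter_upwards [ENNReal.ae_le_essSup u] with y hy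
          exact mul_le_mul_left hy _
    _ = essSup u ν * ∫⁻ y, v y ∂ν := lintegral_const_mul' _ _ htop

/-- Hölder's inequality with `ℝ≥0∞`-valued exponents, in terms of `avgLp`. -/
lemma lintegral_mul_le_avgLp {α : Type*} [MeasurableSpace α] {ν : Measure α}
    {s t : ℝ≥0∞} (hs : 1 ≤ s) (hst : s⁻¹ + t⁻¹ = 1)
    {u v : α → ℝ≥0∞} (hu : AEMeasurable u ν) (hv : AEMeasurable v ν) :
    ∫⁻ y, u y * v y ∂ν ≤ avgLp ν t u * avgLp ν s v := by
  by_cases hstop : s = ⊤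
  · subst hstop
    have ht : t = 1 := by
      rw [ENNReal.inv_top, zero_add] at hst
      exact ENNReal.inv_eq_one.mp hst
    subst ht
    simp only [avgLp, if_pos rfl, if_neg ENNReal.one_ne_top, ENNReal.toReal_one,
      ENNReal.rpow_one, one_div_one]
    calc ∫⁻ y, u y * v y ∂ν = ∫⁻ y, v y * u y ∂ν := by simp_rw [mul_comm]
    _ ≤ essSup v ν * ∫⁻ y, u y ∂ν := lintegral_mul_le_essSup_mul hu
    _ = (∫⁻ y, u y ∂ν) * essSup v ν := mul_comm _ _
  rcases hs.eq_or_lt with hs1 | hs1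
  · -- s = 1, t = ⊤
    rw [← hs1] at hst ⊢
    have ht : t = ⊤ := by
      rw [inv_one] at hst
      have h0 : t⁻¹ = 0 := by
        have h1 : (1 : ℝ≥0∞) + t⁻¹ = 1 + 0 := by simpa using hst
        exact (ENNReal.add_right_inj ENNReal.one_ne_top).mp h1
      exact ENNReal.inv_eq_zero.mp h0
    subst ht
    simp only [avgLp, if_pos rfl, if_neg ENNReal.one_ne_top, ENNReal.toReal_one,
      ENNReal.rpow_one, one_div_one]
    exact lintegral_mul_le_essSup_mul hv
  · -- 1 < s < ⊤
    have hs0 : s ≠ 0 := by positivity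
    have hsinv_lt : s⁻¹ < 1 := ENNReal.inv_lt_one.mpr hs1
    have hsinv_pos : 0 < s⁻¹ := ENNReal.inv_pos.mpr hstop
    have htinv : t⁻¹ = 1 - s⁻¹ := by
      rw [← hst, ENNReal.add_sub_cancel_left (hsinv_lt.trans_le le_top).ne]
    have htinv_pos : 0 < t⁻¹ := by
      rw [htinv]; exact tsub_pos_of_lt hsinv_lt
    have htinv_lt : t⁻¹ < 1 := by
      rw [htinv]
      exact ENNReal.sub_lt_self ENNReal.one_ne_top one_ne_zero hsinv_pos.ne'
    have httop : t ≠ ⊤ := fun h => by simp [h] at htinv_pos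
    have ht1 : 1 < t := ENNReal.inv_lt_one.mp htinv_lt
    have ht0 : t ≠ 0 := (lt_trans zero_lt_one ht1).ne'
    have hσ : 1 < s.toReal := by
      rw [← ENNReal.toReal_one]
      exact (ENNReal.toReal_lt_toReal ENNReal.one_ne_top hstop).mpr hs1
    have hτ : 1 < t.toReal := by
      rw [← ENNReal.toReal_one]
      exact (ENNReal.toReal_lt_toReal ENNReal.one_ne_top httop).mpr ht1
    have hsum : t.toReal⁻¹ + s.toReal⁻¹ = 1 := by
      have := congrArg ENNReal.toReal hst
      rw [ENNReal.toReal_add (hsinv_lt.trans_le le_top).ne (htinv_lt.trans_le le_top).ne,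
        ENNReal.toReal_inv, ENNReal.toReal_inv, ENNReal.toReal_one] at this
      linarith
    have hpq : t.toReal.HolderConjugate s.toReal := Real.holderConjugate_iff.mpr ⟨hτ, hsum⟩
    have := ENNReal.lintegral_mul_le_Lp_mul_Lq ν hpq hu hv
    simp only [avgLp, if_neg httop, if_neg hstop]
    exact this

lemma rpow_finset_sum {ι : Type*} (s : Finset ι) {x : ℝ≥0∞} (h0 : x ≠ 0) (ht : x ≠ ⊤)
    (t : ι → ℝ) : x ^ (∑ i ∈ s, t i) = ∏ i ∈ s, x ^ t i := by
  classical
  induction s using Finset.cons_induction with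
  | empty => simp
  | cons i s hi ih => rw [Finset.sum_cons, Finset.prod_cons, ENNReal.rpow_add _ _ h0 ht, ih]

lemma avgLp_mono {α : Type*} [MeasurableSpace α] (ν : Measure α) (t : ℝ≥0∞)
    {g₁ g₂ : α → ℝ≥0∞} (h : ∀ x, g₁ x ≤ g₂ x) : avgLp ν t g₁ ≤ avgLp ν t g₂ := by
  unfold avgLp
  split
  · exact essSup_mono_ae (Filter.Eventually.of_forall h)
  · exact ENNReal.rpow_le_rpow
      (lintegral_mono fun x => ENNReal.rpow_le_rpow (h x) ENNReal.toReal_nonneg)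
      (by positivity)

lemma avgLp_one {α : Type*} [MeasurableSpace α] {ν : Measure α} [IsProbabilityMeasure ν]
    (s : ℝ≥0∞) : avgLp ν s (fun _ => 1) = 1 := by
  unfold avgLp
  split
  · exact essSup_const _ (IsProbabilityMeasure.ne_zero ν)
  · simp

lemma lintegral_le_avgLp {α : Type*} [MeasurableSpace α] {ν : Measure α}
    [IsProbabilityMeasure ν] {s t : ℝ≥0∞} (hs : 1 ≤ s) (hst : s⁻¹ + t⁻¹ = 1)
    {u : α → ℝ≥0∞} (hu : AEMeasurable u ν) : ∫⁻ y, u y ∂ν ≤ avgLp ν t u := by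
  have h := lintegral_mul_le_avgLp hs hst hu (aemeasurable_const (b := (1:ℝ≥0∞)))
  simpa [avgLp_one] using h

/-- **The Roudenko-type quantity dominates the multilinear matrix Muckenhoupt characteristic.**
Let `p_j ∈ [1,∞]`, `1/p₀ = Σ 1/p_j`, and let `W_j` be matrix weights on `ℝ^d` with `W_j⁻¹`
locally `p_j'`-integrable.  If `R` bounds, over all cubes `Q`, the quantity
`( ⨍_Q ∏_j ( ⨍_Q ‖W_j(x) W_j(y)⁻¹‖^{p_j'} dy )^{p₀/p_j'} dx )^{1/p₀}`, then for every cube `Q`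
and all `f_j ∈ L^{p_j}_{W_j}` the averaging operator `T_Q(f⃗) = 1_Q ⊗_j ⟨f_j⟩_Q` satisfies
`‖T_Q f⃗‖_{L^{p₀}_{⊗W_j}} ≤ R ∏_j ‖f_j‖_{L^{p_j}_{W_j}}`; hence `[W⃗]_{p⃗} ≤ [W⃗]_{p⃗,op}`. -/
theorem averaging_bound_of_roudenko {d m : ℕ} (hm : 0 < m)
    (V : Fin m → Type*) [∀ j, NormedAddCommGroup (V j)]
    [∀ j, InnerProductSpace ℝ (V j)] [∀ j, FiniteDimensional ℝ (V j)]
    (p : Fin m → ℝ≥0∞) (hp1 : ∀ j, 1 ≤ p j)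
    (p' : Fin m → ℝ≥0∞) (hp' : ∀ j, (p j)⁻¹ + (p' j)⁻¹ = 1)
    (p₀ : ℝ≥0∞) (hp₀ : p₀⁻¹ = ∑ j, (p j)⁻¹)
    (W Winv : ∀ j, (Fin d → ℝ) → (V j →L[ℝ] V j))
    (hWm : ∀ j, StronglyMeasurable (W j)) (hWim : ∀ j, StronglyMeasurable (Winv j))
    (hinv : ∀ j, ∀ᵐ x : Fin d → ℝ, (Winv j x).comp (W j x) = ContinuousLinearMap.id ℝ (V j) ∧
      (W j x).comp (Winv j x) = ContinuousLinearMap.id ℝ (V j))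
    (hloc : ∀ j (a : Fin d → ℝ) (ℓ : ℝ), 0 < ℓ →
      avgLp (cubeAvg a ℓ) (p' j) (fun y => (‖Winv j y‖₊ : ℝ≥0∞)) < ⊤)
    (R : ℝ≥0∞)
    (hR : ∀ (a : Fin d → ℝ) (ℓ : ℝ), 0 < ℓ →
      avgLp (cubeAvg a ℓ) p₀ (fun x =>
        ∏ j, avgLp (cubeAvg a ℓ) (p' j)
          (fun y => (‖(W j x).comp (Winv j y)‖₊ : ℝ≥0∞))) ≤ R) :
    ∀ (a : Fin d → ℝ) (ℓ : ℝ), 0 < ℓ →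
      ∀ f : ∀ j, (Fin d → ℝ) → V j, (∀ j, AEStronglyMeasurable (f j) volume) →
      eLpNorm ((cube a ℓ).indicator fun x =>
          ∏ j, ‖(W j x) ((volume (cube a ℓ)).toReal⁻¹ • ∫ y in cube a ℓ, f j y)‖) p₀ volume
        ≤ R * ∏ j, eLpNorm (fun x => ‖(W j x) (f j x)‖) (p j) volume := by
  intro a ℓ hℓ f hf
  classical
  -- cube facts
  set Q : Set (Fin d → ℝ) := cube a ℓ with hQdef
  have hQeq : Q = Set.univ.pi (fun i => Set.Icc (a i) (a i + ℓ)) := by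
    ext x
    simp only [hQdef, cube, Set.mem_setOf_eq, Set.mem_pi, Set.mem_univ, true_implies,
      Set.mem_Icc]
  have hQm : MeasurableSet Q := by
    rw [hQeq]; exact MeasurableSet.univ_pi fun i => measurableSet_Icc
  have hQvol : volume Q = ENNReal.ofReal ℓ ^ d := by
    rw [hQeq, volume_pi_pi]; simp [Real.volume_Icc]
  have hQ0 : volume Q ≠ 0 := by
    rw [hQvol]; exact pow_ne_zero _ (ENNReal.ofReal_pos.mpr hℓ).ne'
  have hQt : volume Q ≠ ⊤ := by
    rw [hQvol]; exact ENNReal.pow_ne_top ENNReal.ofReal_ne_top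
  set ν : Measure (Fin d → ℝ) := cubeAvg a ℓ with hνdef
  have hνeq : ν = (volume Q)⁻¹ • volume.restrict Q := rfl
  have hprob : IsProbabilityMeasure ν := by
    constructor
    rw [hνeq]
    simp only [Measure.smul_apply, smul_eq_mul, Measure.restrict_apply_univ]
    exact ENNReal.inv_mul_cancel hQ0 hQt
  have hac : ν ≪ (volume : Measure (Fin d → ℝ)) := by
    rw [hνeq]
    exact (Measure.absolutelyContinuous_of_le Measure.restrict_le_self).smul_left _
  -- abbreviations
  set v : Fin m → (Fin d → ℝ) → ℝ≥0∞ := fun j y => (‖(W j y) (f j y)‖₊ : ℝ≥0∞) with hvdef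
  set Fn : Fin m → ℝ≥0∞ :=
    fun j => eLpNorm (fun x => ‖(W j x) (f j x)‖) (p j) volume with hFndef
  set Kj : Fin m → (Fin d → ℝ) → ℝ≥0∞ :=
    fun j x => avgLp ν (p' j) (fun y => (‖(W j x).comp (Winv j y)‖₊ : ℝ≥0∞)) with hKjdef
  set Kf : (Fin d → ℝ) → ℝ≥0∞ := fun x => ∏ j, Kj j x with hKfdef
  set c : Fin m → ℝ≥0∞ := fun j => avgLp ν (p j) (v j) with hcdef
  set G : (Fin d → ℝ) → ℝ :=
    fun x => ∏ j, ‖(W j x) ((volume Q).toReal⁻¹ • ∫ y in Q, f j y)‖ with hGdef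
  show eLpNorm (Q.indicator G) p₀ volume ≤ R * ∏ j, Fn j
  -- measurability
  have hWf : ∀ j, AEStronglyMeasurable (fun y => (W j y) (f j y)) volume := by
    intro j
    exact (isBoundedBilinearMap_apply (𝕜 := ℝ)).continuous.comp_aestronglyMeasurable
      (((hWm j).aestronglyMeasurable).prodMk (hf j))
  have hv_vol : ∀ j, AEMeasurable (v j) volume := fun j => (hWf j).enorm
  have hv_ν : ∀ j, AEMeasurable (v j) ν := fun j => (hv_vol j).mono_ac hac
  have hu_meas : ∀ j x, Measurable (fun y => (‖(W j x).comp (Winv j y)‖₊ : ℝ≥0∞)) := by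
    intro j x
    have hcont : Continuous fun A : V j →L[ℝ] V j => (W j x).comp A :=
      (ContinuousLinearMap.compL ℝ (V j) (V j) (V j) (W j x)).continuous
    exact (hcont.comp_stronglyMeasurable (hWim j)).enorm
  -- exponent facts
  have hp0 : ∀ j, p j ≠ 0 := fun j => (lt_of_lt_of_le zero_lt_one (hp1 j)).ne'
  have hpinvt : ∀ j, (p j)⁻¹ ≠ ⊤ := by
    intro j
    exact ((lt_of_le_of_lt (ENNReal.inv_le_one.mpr (hp1 j)) (by simp)) : (p j)⁻¹ < ⊤).ne
  have hp₀inv_ne_top : p₀⁻¹ ≠ ⊤ := by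
    rw [hp₀]
    exact (ENNReal.sum_lt_top.mpr fun j _ => (hpinvt j).lt_top).ne
  have hp₀0 : p₀ ≠ 0 := by
    intro h
    rw [h] at hp₀inv_ne_top
    simp at hp₀inv_ne_top
  -- the average as an integral against ν
  have havg : ∀ j, (volume Q).toReal⁻¹ • ∫ y in Q, f j y = ∫ y, f j y ∂ν := by
    intro j
    rw [hνeq, integral_smul_measure, ENNReal.toReal_inv]
  -- key pointwise estimate
  have hA : ∀ j, Integrable (f j) ν → ∀ x,
      (‖(W j x) ((volume Q).toReal⁻¹ • ∫ y in Q, f j y)‖₊ : ℝ≥0∞) ≤ Kj j x * c j := by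
    intro j hfi x
    rw [havg j, ← ContinuousLinearMap.integral_comp_comm (W j x) hfi]
    calc (‖∫ y, (W j x) (f j y) ∂ν‖₊ : ℝ≥0∞)
        ≤ ∫⁻ y, (‖(W j x) (f j y)‖₊ : ℝ≥0∞) ∂ν := enorm_integral_le_lintegral_enorm _
      _ ≤ ∫⁻ y, (‖(W j x).comp (Winv j y)‖₊ : ℝ≥0∞) * v j y ∂ν := by
          refine lintegral_mono_ae ?_
          filter_upwards [(hinv j).filter_mono hac.ae_le] with y hy
          have h1 : (Winv j y) ((W j y) (f j y)) = f j y := by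
            have h2 := congrArg (fun T : V j →L[ℝ] V j => T (f j y)) hy.1
            simpa using h2
          have hrw : (W j x) (f j y) = ((W j x).comp (Winv j y)) ((W j y) (f j y)) := by
            rw [ContinuousLinearMap.comp_apply, h1]
          rw [hrw]
          show _ ≤ (‖(W j x).comp (Winv j y)‖₊ : ℝ≥0∞) * (‖(W j y) (f j y)‖₊ : ℝ≥0∞)
          exact_mod_cast ContinuousLinearMap.le_opNNNorm ((W j x).comp (Winv j y))
            ((W j y) (f j y))
      _ ≤ Kj j x * c j := lintegral_mul_le_avgLp (hp1 j) (hp' j) (hu_meas j x).aemeasurable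
            (hv_ν j)
  -- if one factor vanishes identically, the LHS is zero
  have hzero : ∀ j₀ : Fin m,
      (∀ x, (W j₀ x) ((volume Q).toReal⁻¹ • ∫ y in Q, f j₀ y) = 0) →
      eLpNorm (Q.indicator G) p₀ volume ≤ R * ∏ j, Fn j := by
    intro j₀ h
    have hG : Q.indicator G = fun _ => (0 : ℝ) := by
      funext x
      by_cases hx : x ∈ Q
      · rw [Set.indicator_of_mem hx]
        exact Finset.prod_eq_zero (Finset.mem_univ j₀) (by rw [h x, norm_zero])
      · exact Set.indicator_of_notMem hx _
    rw [hG, eLpNorm_zero']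
    exact zero_le
  -- dispose of the case of a non-integrable f j
  by_cases hint : ∀ j, Integrable (f j) ν
  swap
  · push_neg at hint
    obtain ⟨j₀, hj₀⟩ := hint
    apply hzero j₀
    intro x
    have h0 : ∫ y in Q, f j₀ y = 0 := by
      apply integral_undef
      intro hcon
      exact hj₀ (by
        rw [hνeq]
        exact (integrable_smul_measure (ENNReal.inv_ne_zero.mpr hQt)
          (ENNReal.inv_ne_top.mpr hQ0)).mpr hcon)
    rw [h0, smul_zero, map_zero]
  -- dispose of the case of a vanishing right-hand side factor
  by_cases hFn0 : ∃ j, Fn j = 0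
  · obtain ⟨j₀, hj₀⟩ := hFn0
    have hz : (fun x => ‖(W j₀ x) (f j₀ x)‖) =ᵐ[volume] 0 :=
      (eLpNorm_eq_zero_iff ((hWf j₀).norm) (hp0 j₀)).mp hj₀
    have hvz : v j₀ =ᵐ[ν] 0 := by
      filter_upwards [hz.filter_mono hac.ae_le] with y hy
      simp only [Pi.zero_apply] at hy
      have hy0 : (W j₀ y) (f j₀ y) = 0 := norm_eq_zero.mp hy
      show (‖(W j₀ y) (f j₀ y)‖₊ : ℝ≥0∞) = 0
      simp [hy0]
    have hc0 : c j₀ = 0 := by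
      show avgLp ν (p j₀) (v j₀) = 0
      unfold avgLp
      by_cases hptop : p j₀ = ⊤
      · rw [if_pos hptop]
        refine le_antisymm (essSup_le_of_ae_le 0 ?_) (zero_le)
        filter_upwards [hvz] with y hy
        exact le_of_eq hy
      · rw [if_neg hptop]
        have hrj : 0 < (p j₀).toReal := ENNReal.toReal_pos (hp0 j₀) hptop
        have h0 : ∫⁻ y, v j₀ y ^ (p j₀).toReal ∂ν = 0 := by
          have he : (fun y => v j₀ y ^ (p j₀).toReal) =ᵐ[ν] 0 := by
            filter_upwards [hvz] with y hy
            simp only [Pi.zero_apply] at hy ⊢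
            rw [hy, ENNReal.zero_rpow_of_pos hrj]
          rw [lintegral_congr_ae he]
          simp
        rw [h0, ENNReal.zero_rpow_of_pos (by positivity)]
    apply hzero j₀
    intro x
    have hle := hA j₀ (hint j₀) x
    rw [hc0, mul_zero] at hle
    have h2 : ‖(W j₀ x) ((volume Q).toReal⁻¹ • ∫ y in Q, f j₀ y)‖₊ = 0 := by
      exact_mod_cast le_antisymm hle (zero_le)
    simpa using h2
  push_neg at hFn0
  -- comparison of the cube average of v j with the global norm
  have hcle : ∀ j, volume Q ^ ((p j)⁻¹).toReal * c j ≤ Fn j := by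
    intro j
    by_cases hptop : p j = ⊤
    · rw [hptop, ENNReal.inv_top, ENNReal.toReal_zero, ENNReal.rpow_zero, one_mul]
      have hcj : c j = essSup (v j) ν := by
        show avgLp ν (p j) (v j) = _
        rw [hptop]
        unfold avgLp
        rw [if_pos rfl]
      have hFnj : Fn j = essSup (v j) volume := by
        show eLpNorm _ (p j) volume = _
        rw [hptop, eLpNorm_exponent_top]
        show essSup (fun x => (‖‖(W j x) (f j x)‖‖₊ : ℝ≥0∞)) volume = _
        congr 1
        funext x
        rw [nnnorm_norm]
      rw [hcj, hFnj]
      exact essSup_mono_measure hac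
    · have hrj : 0 < (p j).toReal := ENNReal.toReal_pos (hp0 j) hptop
      have hcj : c j = (∫⁻ y, v j y ^ (p j).toReal ∂ν) ^ (1 / (p j).toReal) := by
        show avgLp ν (p j) (v j) = _
        unfold avgLp
        rw [if_neg hptop]
      have hFnj : Fn j = (∫⁻ x, v j x ^ (p j).toReal ∂volume) ^ (1 / (p j).toReal) := by
        show eLpNorm _ (p j) volume = _
        rw [eLpNorm_eq_lintegral_rpow_enorm_toReal (hp0 j) hptop]
        congr 1
        refine lintegral_congr fun x => ?_
        exact congrArg (· ^ (p j).toReal) (enorm_norm _)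
      have hexp : ((p j)⁻¹).toReal = 1 / (p j).toReal := by
        rw [ENNReal.toReal_inv, one_div]
      rw [hcj, hFnj, hexp]
      calc volume Q ^ (1 / (p j).toReal) * (∫⁻ y, v j y ^ (p j).toReal ∂ν) ^ (1 / (p j).toReal)
          = (volume Q * ∫⁻ y, v j y ^ (p j).toReal ∂ν) ^ (1 / (p j).toReal) := by
            rw [ENNReal.mul_rpow_of_nonneg _ _ (by positivity)]
        _ = (∫⁻ y in Q, v j y ^ (p j).toReal ∂volume) ^ (1 / (p j).toReal) := by
            rw [hνeq, lintegral_smul_measure, smul_eq_mul, ← mul_assoc,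
              ENNReal.mul_inv_cancel hQ0 hQt, one_mul]
        _ ≤ (∫⁻ y, v j y ^ (p j).toReal ∂volume) ^ (1 / (p j).toReal) :=
            ENNReal.rpow_le_rpow (setLIntegral_le_lintegral _ _) (by positivity)
  -- the Roudenko bound for our cube
  have hKR : avgLp ν p₀ Kf ≤ R := hR a ℓ hℓ
  -- the degenerate case R = 0
  by_cases hR0 : R = 0
  · -- then the product of the L¹ means of the kernels vanishes a.e., forcing W j x = 0
    set L : (Fin d → ℝ) → ℝ≥0∞ :=
      fun x => ∏ j, ∫⁻ y, (‖(W j x).comp (Winv j y)‖₊ : ℝ≥0∞) ∂ν with hLdef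
    have hLmeas : Measurable L := by
      refine Finset.measurable_prod _ fun j _ => ?_
      have hjoint : Measurable (Function.uncurry
          fun x y => (‖(W j x).comp (Winv j y)‖₊ : ℝ≥0∞)) := by
        have h1 : StronglyMeasurable
            (fun q : (Fin d → ℝ) × (Fin d → ℝ) => (W j q.1).comp (Winv j q.2)) := by
          exact (isBoundedBilinearMap_comp (𝕜 := ℝ) (E := V j) (F := V j)
            (G := V j)).continuous.comp_stronglyMeasurable
            (((hWm j).comp_measurable measurable_fst).prodMk
              ((hWim j).comp_measurable measurable_snd))
        exact h1.enorm
      exact hjoint.lintegral_prod_right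
    have hLK : ∀ x, L x ≤ Kf x := by
      intro x
      refine Finset.prod_le_prod' fun j _ => ?_
      exact lintegral_le_avgLp (hp1 j) (hp' j) (hu_meas j x).aemeasurable
    have hL0 : L =ᵐ[ν] 0 := by
      have hKf0 : avgLp ν p₀ L = 0 :=
        le_antisymm (((avgLp_mono ν p₀ hLK).trans hKR).trans (le_of_eq hR0)) (zero_le)
      unfold avgLp at hKf0
      by_cases hp₀top : p₀ = ⊤
      · rw [if_pos hp₀top] at hKf0
        filter_upwards [ENNReal.ae_le_essSup L (μ := ν)] with x hx
        rw [hKf0] at hx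
        simpa using le_antisymm hx (zero_le)
      · rw [if_neg hp₀top] at hKf0
        have hr : 0 < p₀.toReal := ENNReal.toReal_pos hp₀0 hp₀top
        have h0 : ∫⁻ x, L x ^ p₀.toReal ∂ν = 0 := by
          rcases ENNReal.rpow_eq_zero_iff.mp hKf0 with ⟨h, _⟩ | ⟨_, hneg⟩
          · exact h
          · exact absurd hneg (not_lt.mpr (by positivity))
        have hLr : (fun x => L x ^ p₀.toReal) =ᵐ[ν] 0 :=
          (lintegral_eq_zero_iff
            ((ENNReal.continuous_rpow_const.measurable).comp hLmeas)).mp h0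
        filter_upwards [hLr] with x hx
        simp only [Pi.zero_apply] at hx ⊢
        rcases ENNReal.rpow_eq_zero_iff.mp hx with ⟨h, _⟩ | ⟨_, hneg⟩
        · exact h
        · exact absurd hneg (not_lt.mpr hr.le)
    have hW0 : ∀ᵐ x ∂ν, ∃ j, W j x = 0 := by
      have hνne : ν ≠ 0 := IsProbabilityMeasure.ne_zero ν
      haveI : (MeasureTheory.ae ν).NeBot := ae_neBot.mpr hνne
      filter_upwards [hL0] with x hx
      simp only [Pi.zero_apply, hLdef] at hx
      obtain ⟨j, -, hj⟩ := Finset.prod_eq_zero_iff.mp hx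
      refine ⟨j, ?_⟩
      have hae : ∀ᵐ y ∂ν, (‖(W j x).comp (Winv j y)‖₊ : ℝ≥0∞) = 0 := by
        have h1 := (lintegral_eq_zero_iff (hu_meas j x)).mp hj
        filter_upwards [h1] with y hy
        simpa using hy
      obtain ⟨y, hy0, hyinv⟩ := (hae.and ((hinv j).filter_mono hac.ae_le)).exists
      have hcomp0 : (W j x).comp (Winv j y) = 0 := by
        have h2 : ‖(W j x).comp (Winv j y)‖₊ = 0 := by exact_mod_cast hy0
        simpa [nnnorm_eq_zero] using h2
      apply ContinuousLinearMap.ext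
      intro w
      have h3 : (W j x) w = ((W j x).comp (Winv j y)) ((W j y) w) := by
        rw [ContinuousLinearMap.comp_apply]
        congr 1
        have h4 := congrArg (fun T : V j →L[ℝ] V j => T w) hyinv.1
        simpa using h4.symm
      rw [h3, hcomp0]
      simp
    have hGz : Q.indicator G =ᵐ[volume] 0 := by
      have hν_ae : ∀ᵐ x ∂(volume.restrict Q), ∃ j, W j x = 0 := by
        rw [hνeq] at hW0
        exact (Measure.absolutelyContinuous_smul (ENNReal.inv_ne_zero.mpr hQt)).ae_le hW0
      filter_upwards [(ae_restrict_iff' hQm).mp hν_ae] with x hx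
      simp only [Pi.zero_apply]
      by_cases hxQ : x ∈ Q
      · rw [Set.indicator_of_mem hxQ]
        obtain ⟨j, hj⟩ := hx hxQ
        refine Finset.prod_eq_zero (Finset.mem_univ j) ?_
        rw [hj]
        simp
      · exact Set.indicator_of_notMem hxQ _
    rw [eLpNorm_congr_ae hGz, eLpNorm_zero]
    exact zero_le
  -- the case where some c j is infinite: the right-hand side is infinite
  by_cases hctop : ∃ j, c j = ⊤
  · obtain ⟨j₀, hj₀⟩ := hctop
    have hFnt : Fn j₀ = ⊤ := by
      have h1 := hcle j₀
      rw [hj₀] at h1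
      have hμpow : volume Q ^ ((p j₀)⁻¹).toReal ≠ 0 :=
        (ENNReal.rpow_pos (lt_of_le_of_ne (zero_le) (Ne.symm hQ0)) hQt).ne'
      rw [ENNReal.mul_top hμpow] at h1
      exact top_le_iff.mp h1
    have hprod : ∏ j, Fn j = ⊤ := by
      rw [← Finset.mul_prod_erase Finset.univ Fn (Finset.mem_univ j₀), hFnt]
      rw [ENNReal.top_mul]
      exact Finset.prod_ne_zero_iff.mpr fun j _ => hFn0 j
    rw [hprod, ENNReal.mul_top hR0]
    exact le_top
  push_neg at hctop
  -- main pointwise bound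
  have hbound : ∀ x, (‖Q.indicator G x‖₊ : ℝ≥0∞)
      ≤ Q.indicator (fun x => Kf x * ∏ j, c j) x := by
    intro x
    by_cases hx : x ∈ Q
    · rw [Set.indicator_of_mem hx, Set.indicator_of_mem hx]
      have h1 : (‖G x‖₊ : ℝ≥0∞)
          = ∏ j, (‖(W j x) ((volume Q).toReal⁻¹ • ∫ y in Q, f j y)‖₊ : ℝ≥0∞) := by
        show (‖∏ j, ‖(W j x) ((volume Q).toReal⁻¹ • ∫ y in Q, f j y)‖‖₊ : ℝ≥0∞) = _
        rw [nnnorm_prod, ENNReal.coe_finset_prod]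
        exact Finset.prod_congr rfl fun j _ => by rw [nnnorm_norm]
      rw [h1, ← Finset.prod_mul_distrib]
      exact Finset.prod_le_prod' fun j _ => hA j (hint j) x
    · rw [Set.indicator_of_notMem hx, Set.indicator_of_notMem hx]
      simp
  -- split on whether p₀ is infinite
  by_cases hp₀top : p₀ = ⊤
  · -- all p j = ⊤
    have hptop : ∀ j, p j = ⊤ := by
      intro j
      have hsum0 : ∑ j, (p j)⁻¹ = 0 := by rw [← hp₀, hp₀top]; simp
      exact ENNReal.inv_eq_zero.mp (Finset.sum_eq_zero_iff.mp hsum0 j (Finset.mem_univ j))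
    have hcFn : ∀ j, c j ≤ Fn j := by
      intro j
      have h1 := hcle j
      rwa [hptop j, ENNReal.inv_top, ENNReal.toReal_zero, ENNReal.rpow_zero, one_mul] at h1
    have hKR' : essSup Kf ν ≤ R := by
      have h1 : avgLp ν p₀ Kf = essSup Kf ν := by
        unfold avgLp; rw [if_pos hp₀top]
      rwa [h1] at hKR
    rw [hp₀top, eLpNorm_exponent_top]
    show essSup (fun x => (‖Q.indicator G x‖₊ : ℝ≥0∞)) volume ≤ _
    have hae : ∀ᵐ x ∂(volume : Measure (Fin d → ℝ)),
        (‖Q.indicator G x‖₊ : ℝ≥0∞) ≤ essSup Kf ν * ∏ j, c j := by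
      have h2 : ∀ᵐ x ∂(volume.restrict Q), Kf x ≤ essSup Kf ν := by
        have h3 := ENNReal.ae_le_essSup Kf (μ := ν)
        rw [hνeq] at h3
        exact (Measure.absolutelyContinuous_smul (ENNReal.inv_ne_zero.mpr hQt)).ae_le h3
      filter_upwards [(ae_restrict_iff' hQm).mp h2] with x hx
      refine le_trans (hbound x) ?_
      by_cases hxQ : x ∈ Q
      · rw [Set.indicator_of_mem hxQ]
        exact mul_le_mul_left (hx hxQ) _
      · rw [Set.indicator_of_notMem hxQ]
        exact zero_le
    refine le_trans (essSup_le_of_ae_le _ hae) ?_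
    exact mul_le_mul' hKR' (Finset.prod_le_prod' fun j _ => hcFn j)
  · -- p₀ finite
    have hr : 0 < p₀.toReal := ENNReal.toReal_pos hp₀0 hp₀top
    have hCt : (∏ j, c j) ≠ ⊤ :=
      (ENNReal.prod_lt_top fun j _ => (hctop j).lt_top).ne
    have hKR' : (∫⁻ x, Kf x ^ p₀.toReal ∂ν) ^ (1 / p₀.toReal) ≤ R := by
      have h1 : avgLp ν p₀ Kf = (∫⁻ x, Kf x ^ p₀.toReal ∂ν) ^ (1 / p₀.toReal) := by
        unfold avgLp; rw [if_neg hp₀top]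
      rwa [h1] at hKR
    rw [eLpNorm_eq_lintegral_rpow_enorm_toReal hp₀0 hp₀top]
    have step1 : ∫⁻ x, (‖Q.indicator G x‖₊ : ℝ≥0∞) ^ p₀.toReal ∂volume
        ≤ (volume Q * ∫⁻ x, Kf x ^ p₀.toReal ∂ν) * (∏ j, c j) ^ p₀.toReal := by
      calc ∫⁻ x, (‖Q.indicator G x‖₊ : ℝ≥0∞) ^ p₀.toReal ∂volume
          ≤ ∫⁻ x, Q.indicator (fun x => (Kf x * ∏ j, c j) ^ p₀.toReal) x ∂volume := by
            refine lintegral_mono fun x =>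
              le_trans (ENNReal.rpow_le_rpow (hbound x) hr.le) ?_
            by_cases hx : x ∈ Q
            · rw [Set.indicator_of_mem hx, Set.indicator_of_mem hx]
            · rw [Set.indicator_of_notMem hx, Set.indicator_of_notMem hx,
                ENNReal.zero_rpow_of_pos hr]
        _ = ∫⁻ x in Q, (Kf x * ∏ j, c j) ^ p₀.toReal ∂volume := lintegral_indicator hQm _
        _ = ∫⁻ x in Q, Kf x ^ p₀.toReal * (∏ j, c j) ^ p₀.toReal ∂volume := by
            simp_rw [ENNReal.mul_rpow_of_nonneg _ _ hr.le]
        _ = (∫⁻ x in Q, Kf x ^ p₀.toReal ∂volume) * (∏ j, c j) ^ p₀.toReal :=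
            lintegral_mul_const' _ _ (ENNReal.rpow_ne_top_of_nonneg hr.le hCt)
        _ = (volume Q * ∫⁻ x, Kf x ^ p₀.toReal ∂ν) * (∏ j, c j) ^ p₀.toReal := by
            rw [hνeq, lintegral_smul_measure, smul_eq_mul, ← mul_assoc,
              ENNReal.mul_inv_cancel hQ0 hQt, one_mul]
    calc (∫⁻ x, (‖Q.indicator G x‖₊ : ℝ≥0∞) ^ p₀.toReal ∂volume) ^ (1 / p₀.toReal)
        ≤ ((volume Q * ∫⁻ x, Kf x ^ p₀.toReal ∂ν) * (∏ j, c j) ^ p₀.toReal)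
            ^ (1 / p₀.toReal) := ENNReal.rpow_le_rpow step1 (by positivity)
      _ = volume Q ^ (1 / p₀.toReal) * (∫⁻ x, Kf x ^ p₀.toReal ∂ν) ^ (1 / p₀.toReal)
            * (∏ j, c j) := by
          rw [ENNReal.mul_rpow_of_nonneg _ _ (by positivity),
            ENNReal.mul_rpow_of_nonneg _ _ (by positivity), ← ENNReal.rpow_mul,
            mul_one_div_cancel hr.ne', ENNReal.rpow_one]
      _ ≤ volume Q ^ (1 / p₀.toReal) * R * (∏ j, c j) := by
          exact mul_le_mul_left (mul_le_mul_right hKR' _) _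
      _ = R * (volume Q ^ (1 / p₀.toReal) * ∏ j, c j) := by ring
      _ ≤ R * ∏ j, Fn j := by
          refine mul_le_mul_right ?_ R
          have hμsplit : volume Q ^ (1 / p₀.toReal)
              = ∏ j, volume Q ^ ((p j)⁻¹).toReal := by
            rw [← rpow_finset_sum Finset.univ hQ0 hQt]
            congr 1
            rw [← ENNReal.toReal_sum (fun j _ => hpinvt j), ← hp₀, ENNReal.toReal_inv,
              one_div]
          rw [hμsplit, ← Finset.prod_mul_distrib]
          exact Finset.prod_le_prod' fun j _ => hcle j
end

section
/- Let p ∈ (0,∞], r ∈ (0,∞), s ∈ (ℝ∖{0}) ∪ {∞} with p ≥ r, 1/p ≥ 1/s, and let W : ℝ^d → L(H) be a matrix weight with [W]_{p,(r,s),op} := sup_Q ( ⨍_Q ( ⨍_Q ‖W(x)W(y)^{-1}‖^{t} dy )^{q/t} dx )^{1/q} < ∞, where 1/t = 1/r − 1/p and 1/q = 1/p − 1/s. Set 1/p̂ := 1/r + 1/s − 1/p. Then [W^{-1}]_{p̂,(r,s),op} < ∞, and [W^{-1}]_{p̂,(r,s),op} ≍ [W]_{p,(r,s),op} with implicit constants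 depending only on r, s, and dim H. -/
open MeasureTheory ENNReal

/-- The two-parameter Roudenko-type characteristic
`sup_Q ( ⨍_Q ( ⨍_Q A x y ^ t dy )^{q/t} dx )^{1/q}` of a kernel `A` (typically
`A x y = ‖W(x) W(y)⁻¹‖`), with inner exponent `t` and outer exponent `q`. -/
noncomputable def twoChar {d : ℕ} (A : (Fin d → ℝ) → (Fin d → ℝ) → ℝ≥0∞)
    (t q : ℝ≥0∞) : ℝ≥0∞ :=
  ⨆ (a : Fin d → ℝ) (ℓ : ℝ) (_ : 0 < ℓ),
    avgLp (cubeAvg a ℓ) q fun x => avgLp (cubeAvg a ℓ) t fun y => A x y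



set_option linter.unusedSectionVars false
set_option linter.unusedVariables false
open Filter Module
open scoped RealInnerProductSpace

section A
variable {α : Type*} [MeasurableSpace α] {ν : Measure α} {t : ℝ≥0∞} {f g : α → ℝ≥0∞}

lemma sum_rpow_le {ι : Type*} (s : Finset ι) (a : ι → ℝ≥0∞) {p : ℝ} (hp : 0 < p) :
    (∑ i ∈ s, a i) ^ p ≤ (s.card : ℝ≥0∞) ^ p * ∑ i ∈ s, (a i) ^ p := by
  rcases s.eq_empty_or_nonempty with rfl | hs
  · simp [ENNReal.zero_rpow_of_pos hp]
  · obtain ⟨j, hj, hmax⟩ := s.exists_max_image a hs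
    calc (∑ i ∈ s, a i) ^ p ≤ ((s.card : ℝ≥0∞) * a j) ^ p := by
          apply ENNReal.rpow_le_rpow _ hp.le
          have := Finset.sum_le_card_nsmul s a (a j) (fun i hi => hmax i hi)
          simpa [nsmul_eq_mul] using this
      _ = (s.card : ℝ≥0∞) ^ p * (a j) ^ p := ENNReal.mul_rpow_of_nonneg _ _ hp.le
      _ ≤ (s.card : ℝ≥0∞) ^ p * ∑ i ∈ s, (a i) ^ p := by
          gcongr
          exact Finset.single_le_sum (f := fun i => a i ^ p) (fun i _ => zero_le) hj

lemma avgLp_mono_s9 (h : f ≤ᵐ[ν] g) : avgLp ν t f ≤ avgLp ν t g := by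
  unfold avgLp
  split
  · exact essSup_mono_ae h
  · exact ENNReal.rpow_le_rpow (lintegral_mono_ae (h.mono fun x hx => ENNReal.rpow_le_rpow hx ENNReal.toReal_nonneg)) (by positivity)

lemma avgLp_congr (h : f =ᵐ[ν] g) : avgLp ν t f = avgLp ν t g :=
  le_antisymm (avgLp_mono_s9 (h.mono fun _ hx => hx.le)) (avgLp_mono_s9 (h.mono fun _ hx => hx.ge))

lemma avgLp_zero (ht : t ≠ 0) : avgLp ν t (fun _ => (0:ℝ≥0∞)) = 0 := by
  unfold avgLp
  split
  · exact essSup_const_bot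
  · rename_i h
    have hp : 0 < t.toReal := ENNReal.toReal_pos ht h
    have e1 : ∫⁻ (_ : α), (0:ℝ≥0∞) ^ t.toReal ∂ν = 0 := by
      simp_rw [ENNReal.zero_rpow_of_pos hp]
      simp
    rw [e1, ENNReal.zero_rpow_of_pos (one_div_pos.mpr hp)]

lemma avgLp_const_mul (ht : t ≠ 0) {c : ℝ≥0∞} (hc : c ≠ ⊤) :
    avgLp ν t (fun x => c * f x) = c * avgLp ν t f := by
  unfold avgLp
  split
  · exact ENNReal.essSup_const_mul
  · rename_i h
    have hp : 0 < t.toReal := ENNReal.toReal_pos ht h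
    have : ∀ x, (c * f x) ^ t.toReal = c ^ t.toReal * f x ^ t.toReal :=
      fun x => ENNReal.mul_rpow_of_nonneg _ _ hp.le
    simp_rw [this]
    rw [lintegral_const_mul' _ _ (by simp [ENNReal.rpow_lt_top_of_nonneg hp.le hc, ne_eq,
       (ENNReal.rpow_lt_top_of_nonneg hp.le hc).ne] ), ENNReal.mul_rpow_of_nonneg _ _ (by positivity : (0:ℝ) ≤ 1/t.toReal)]
    congr 1
    rw [one_div, ENNReal.rpow_rpow_inv hp.ne']

lemma avgLp_top_of_ae_top (hν : ν ≠ 0) (ht : t ≠ 0) (h : ∀ᵐ x ∂ν, f x = ⊤) :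
    avgLp ν t f = ⊤ := by
  have h1 : avgLp ν t (fun _ => (⊤:ℝ≥0∞)) ≤ avgLp ν t f :=
    avgLp_mono_s9 (h.mono fun x hx => by simp [hx])
  refine top_le_iff.mp (le_trans (le_of_eq ?_) h1)
  unfold avgLp
  split
  · exact (essSup_const _ hν).symm
  · rename_i hne
    have hp : 0 < t.toReal := ENNReal.toReal_pos ht hne
    rw [lintegral_const, ENNReal.top_rpow_of_pos hp]
    rw [ENNReal.top_mul (by simpa [Measure.measure_univ_eq_zero] using hν),
      ENNReal.top_rpow_of_pos (by positivity)]

lemma avgLp_pos (hν : ν ≠ 0) (ht : t ≠ 0) (hf : AEMeasurable f ν)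
    (h : ∀ᵐ x ∂ν, 0 < f x) : 0 < avgLp ν t f := by
  rw [pos_iff_ne_zero]
  intro h0
  unfold avgLp at h0
  have hae : f =ᵐ[ν] 0 := by
    split at h0
    · have := _root_.ae_le_essSup (μ := ν) (f := f)
      rw [h0] at this
      exact this.mono fun x hx => le_antisymm hx zero_le
    · rename_i hne
      have hp : 0 < t.toReal := ENNReal.toReal_pos ht hne
      have hint : ∫⁻ x, f x ^ t.toReal ∂ν = 0 := by
        by_contra hne0
        rcases ENNReal.rpow_eq_zero_iff.mp h0 with ⟨h1, _⟩ | ⟨h1, h2⟩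
        · exact hne0 h1
        · linarith [(by positivity : (0:ℝ) < 1/t.toReal)]
      have := (lintegral_eq_zero_iff' (hf.pow_const _)).mp hint
      refine this.mono fun x hx => ?_
      simp only [Pi.zero_apply] at hx ⊢
      rcases ENNReal.rpow_eq_zero_iff.mp hx with ⟨h1, _⟩ | ⟨_, h2⟩
      · exact h1
      · linarith
  have : ∀ᵐ x ∂ν, False := by
    filter_upwards [h, hae] with x hx hx0
    simp only [Pi.zero_apply] at hx0
    exact hx.ne' hx0
  rw [ae_iff] at this
  simp only [not_false_iff, Set.setOf_true] at this
  exact hν (by simpa [Measure.measure_univ_eq_zero] using this)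

lemma exists_good_of_avgLp_ne_top (hν : ν ≠ 0) (ht : t ≠ 0) {P : α → Prop}
    (hP : ∀ᵐ x ∂ν, P x) (h : avgLp ν t f ≠ ⊤) : ∃ x, P x ∧ f x < ⊤ := by
  by_contra hc
  push_neg at hc
  apply h
  apply avgLp_top_of_ae_top hν ht
  filter_upwards [hP] with x hx
  exact top_le_iff.mp (hc x hx)

lemma avgLp_sum_le {ι : Type*} (s : Finset ι) (f : ι → α → ℝ≥0∞)
    (hf : ∀ i ∈ s, AEMeasurable (f i) ν) {ε : ℝ} (hε : 0 < ε)
    (ht : t = ⊤ ∨ (t ≠ 0 ∧ t ≠ ⊤ ∧ ε ≤ t.toReal)) :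
    avgLp ν t (fun x => ∑ i ∈ s, f i x) ≤
      (s.card : ℝ≥0∞) ^ (1 + 1/ε) * ∑ i ∈ s, avgLp ν t (f i) := by
  rcases s.eq_empty_or_nonempty with rfl | hs
  · simp only [Finset.sum_empty]
    rw [avgLp_zero]
    · simp
    · rcases ht with rfl | ⟨h, _⟩
      · simp
      · exact h
  have hcard1 : (1:ℝ≥0∞) ≤ (s.card : ℝ≥0∞) := by
    have := hs.card_pos
    exact_mod_cast this
  rcases ht with rfl | ⟨ht0, htt, htε⟩
  · -- essSup case
    have h1 : avgLp ν ⊤ (fun x => ∑ i ∈ s, f i x) ≤ ∑ i ∈ s, avgLp ν ⊤ (f i) := by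
      unfold avgLp
      simp only [if_pos rfl]
      have hae : ∀ᵐ x ∂ν, ∀ i ∈ s, f i x ≤ essSup (f i) ν := by
        rw [Filter.eventually_all_finset]
        intro i _
        exact _root_.ae_le_essSup
      refine essSup_le_of_ae_le _ (hae.mono fun x hx => ?_)
      exact Finset.sum_le_sum fun i hi => hx i hi
    calc avgLp ν ⊤ (fun x => ∑ i ∈ s, f i x) ≤ 1 * ∑ i ∈ s, avgLp ν ⊤ (f i) := by
          rw [one_mul]; exact h1
      _ ≤ _ := by
          gcongr
          calc (1:ℝ≥0∞) = 1 ^ (1+1/ε) := (ENNReal.one_rpow _).symm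
            _ ≤ (s.card : ℝ≥0∞) ^ (1+1/ε) := ENNReal.rpow_le_rpow hcard1 (by positivity)
  · have hp : 0 < t.toReal := ENNReal.toReal_pos ht0 htt
    unfold avgLp
    rw [if_neg htt]
    simp only [if_neg htt]
    set p := t.toReal
    have step1 : (∫⁻ x, (∑ i ∈ s, f i x) ^ p ∂ν) ≤
        (s.card : ℝ≥0∞) ^ p * ∑ i ∈ s, ∫⁻ x, (f i x) ^ p ∂ν := by
      calc (∫⁻ x, (∑ i ∈ s, f i x) ^ p ∂ν)
          ≤ ∫⁻ x, (s.card : ℝ≥0∞) ^ p * ∑ i ∈ s, (f i x) ^ p ∂ν :=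
            lintegral_mono fun x => sum_rpow_le s _ hp
        _ = (s.card : ℝ≥0∞) ^ p * ∫⁻ x, ∑ i ∈ s, (f i x) ^ p ∂ν :=
            lintegral_const_mul' _ _ (by
              exact (ENNReal.rpow_lt_top_of_nonneg hp.le (by simp)).ne)
        _ = (s.card : ℝ≥0∞) ^ p * ∑ i ∈ s, ∫⁻ x, (f i x) ^ p ∂ν := by
            rw [lintegral_finset_sum' s (fun i hi => (hf i hi).pow_const _)]
    calc (∫⁻ x, (∑ i ∈ s, f i x) ^ p ∂ν) ^ (1/p)
        ≤ ((s.card : ℝ≥0∞) ^ p * ∑ i ∈ s, ∫⁻ x, (f i x) ^ p ∂ν) ^ (1/p) :=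
          ENNReal.rpow_le_rpow step1 (by positivity)
      _ = (s.card : ℝ≥0∞) * (∑ i ∈ s, ∫⁻ x, (f i x) ^ p ∂ν) ^ (1/p) := by
          rw [ENNReal.mul_rpow_of_nonneg _ _ (by positivity : (0:ℝ) ≤ 1/p)]
          congr 1
          rw [one_div, ENNReal.rpow_rpow_inv hp.ne']
      _ ≤ (s.card : ℝ≥0∞) * ((s.card : ℝ≥0∞) ^ (1/p) * ∑ i ∈ s, (∫⁻ x, (f i x) ^ p ∂ν) ^ (1/p)) := by
          gcongr
          exact sum_rpow_le s _ (by positivity)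
      _ ≤ (s.card : ℝ≥0∞) ^ (1+1/ε) * ∑ i ∈ s, (∫⁻ x, (f i x) ^ p ∂ν) ^ (1/p) := by
          rw [← mul_assoc]
          gcongr
          calc (s.card : ℝ≥0∞) * (s.card : ℝ≥0∞) ^ (1/p)
              = (s.card : ℝ≥0∞) ^ ((1:ℝ) + 1/p) := by
                rw [ENNReal.rpow_add_of_nonneg _ _ (by norm_num) (by positivity), ENNReal.rpow_one]
            _ ≤ (s.card : ℝ≥0∞) ^ (1 + 1/ε) := by
                apply ENNReal.rpow_le_rpow_of_exponent_le hcard1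
                have : 1/p ≤ 1/ε := by
                  apply one_div_le_one_div_of_le hε htε
                linarith

end A

section Red
variable {V : Type*} [NormedAddCommGroup V] [InnerProductSpace ℝ V] [FiniteDimensional ℝ V]

/-- Iterated quasi-triangle inequality for a real-valued quasinorm. -/
lemma quasi_sum {κ : ℝ} (hκ : 1 ≤ κ) (ρr : V → ℝ) (h0 : ρr 0 = 0)
    (hnn : ∀ u, 0 ≤ ρr u)
    (htri : ∀ u v, ρr (u + v) ≤ κ * (ρr u + ρr v)) {ι : Type*} [DecidableEq ι]
    (s : Finset ι) (w : ι → V) :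
    ρr (∑ i ∈ s, w i) ≤ (2*κ)^(s.card) * ∑ i ∈ s, ρr (w i) := by
  induction s using Finset.induction_on with
  | empty => simp [h0]
  | insert a s ha ih =>
    rw [Finset.sum_insert ha, Finset.sum_insert ha, Finset.card_insert_of_notMem ha]
    have h2κ : (1:ℝ) ≤ 2*κ := by linarith
    have hp1 : (1:ℝ) ≤ (2*κ)^s.card := one_le_pow₀ h2κ
    have hsum : (0:ℝ) ≤ ∑ i ∈ s, ρr (w i) := Finset.sum_nonneg fun i _ => hnn (w i)
    have hA : κ ≤ (2*κ)^s.card * (2*κ) := by nlinarith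
    have hA2 : κ * (2*κ)^s.card ≤ (2*κ)^s.card * (2*κ) := by nlinarith
    calc ρr (w a + ∑ i ∈ s, w i) ≤ κ * (ρr (w a) + ρr (∑ i ∈ s, w i)) := htri _ _
      _ ≤ κ * ρr (w a) + κ * ((2*κ)^(s.card) * ∑ i ∈ s, ρr (w i)) := by
          have h3 := mul_le_mul_of_nonneg_left ih (by linarith : (0:ℝ) ≤ κ)
          linarith [mul_add κ (ρr (w a)) (ρr (∑ i ∈ s, w i))]
      _ ≤ ((2*κ)^s.card * (2*κ)) * ρr (w a) + ((2*κ)^s.card * (2*κ)) * ∑ i ∈ s, ρr (w i) := by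
          have h4 := mul_le_mul_of_nonneg_right hA (hnn (w a))
          have h5 := mul_le_mul_of_nonneg_right hA2 hsum
          have h6 : κ * ((2*κ)^(s.card) * ∑ i ∈ s, ρr (w i)) = (κ * (2*κ)^(s.card)) * ∑ i ∈ s, ρr (w i) := by ring
          linarith
      _ = (2*κ)^(s.card+1) * (ρr (w a) + ∑ i ∈ s, ρr (w i)) := by rw [pow_succ]; ring

lemma exists_reducing (hn : 0 < finrank ℝ V) {κ : ℝ} (hκ : 1 ≤ κ)
    (ρ : V → ℝ≥0∞) (hfin : ∀ u, ρ u ≠ ⊤) (hpos : ∀ u, u ≠ 0 → ρ u ≠ 0)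
    (hsmul : ∀ (c : ℝ) (u : V), ρ (c • u) = (‖c‖₊ : ℝ≥0∞) * ρ u)
    (htri : ∀ u v, ρ (u + v) ≤ ENNReal.ofReal κ * (ρ u + ρ v)) :
    ∃ L : V →L[ℝ] V, ∀ u, ρ u ≤ (‖L u‖₊ : ℝ≥0∞) ∧
      (‖L u‖₊ : ℝ≥0∞) ≤ ENNReal.ofReal ((2*κ)^(finrank ℝ V) * κ * (finrank ℝ V)^2) * ρ u := by
  classical
  have hκ0 : (0:ℝ) < κ := by linarith
  set n := finrank ℝ V with hn_def
  have hnR : (0:ℝ) < (n:ℝ) := by exact_mod_cast hn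
  haveI : Nontrivial V := finrank_pos_iff.mp hn
  set b := stdOrthonormalBasis ℝ V with hb_def
  have hbnorm : ∀ i, ‖b i‖ = 1 := fun i => b.orthonormal.1 i
  set ρr : V → ℝ := fun u => (ρ u).toReal with hρr_def
  have hρnn : ∀ u, 0 ≤ ρr u := fun u => ENNReal.toReal_nonneg
  have hρ0' : ρ 0 = 0 := by
    have := hsmul 0 0
    rw [zero_smul] at this
    simpa using this
  have hρr0 : ρr 0 = 0 := by simp [hρr_def, hρ0']
  have hρrpos : ∀ u, u ≠ 0 → 0 < ρr u := fun u hu =>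
    ENNReal.toReal_pos (hpos u hu) (hfin u)
  have hρrsmul : ∀ (c : ℝ) (u : V), ρr (c • u) = |c| * ρr u := by
    intro c u
    simp only [hρr_def, hsmul c u, ENNReal.toReal_mul, ENNReal.coe_toReal, coe_nnnorm,
      Real.norm_eq_abs]
  have hρrtri : ∀ u v, ρr (u + v) ≤ κ * (ρr u + ρr v) := by
    intro u v
    have h := htri u v
    have hfin2 : ENNReal.ofReal κ * (ρ u + ρ v) ≠ ⊤ :=
      ENNReal.mul_ne_top ENNReal.ofReal_ne_top (by simp [hfin u, hfin v])
    calc ρr (u + v) ≤ (ENNReal.ofReal κ * (ρ u + ρ v)).toReal := ENNReal.toReal_mono hfin2 h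
      _ = κ * (ρr u + ρr v) := by
          rw [ENNReal.toReal_mul, ENNReal.toReal_ofReal hκ0.le, ENNReal.toReal_add (hfin u) (hfin v)]
  -- upper Euclidean bound
  set M : ℝ := (2*κ)^n * ∑ i, ρr (b i) with hM_def
  have hM0 : 0 ≤ M := by
    apply mul_nonneg (by positivity)
    exact Finset.sum_nonneg fun i _ => hρnn _
  have hMbound : ∀ u, ρr u ≤ M * ‖u‖ := by
    intro u
    conv_lhs => rw [← b.sum_repr u]
    calc ρr (∑ i, b.repr u i • b i)
        ≤ (2*κ)^((Finset.univ : Finset (Fin n)).card) * ∑ i, ρr (b.repr u i • b i) :=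
          quasi_sum hκ ρr hρr0 hρnn hρrtri _ _
      _ = (2*κ)^n * ∑ i, |b.repr u i| * ρr (b i) := by
          rw [Finset.card_univ, Fintype.card_fin]
          congr 1
          exact Finset.sum_congr rfl fun i _ => hρrsmul _ _
      _ ≤ (2*κ)^n * ∑ i, ‖u‖ * ρr (b i) := by
          apply mul_le_mul_of_nonneg_left _ (by positivity)
          apply Finset.sum_le_sum
          intro i _
          apply mul_le_mul_of_nonneg_right _ (hρnn _)
          calc |b.repr u i| = |⟪b i, u⟫| := by rw [b.repr_apply_apply]
            _ ≤ ‖b i‖ * ‖u‖ := abs_real_inner_le_norm _ _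
            _ = ‖u‖ := by rw [hbnorm i, one_mul]
      _ = M * ‖u‖ := by rw [hM_def, ← Finset.mul_sum]; ring
  -- Lipschitz regularization
  set ρbar : V → ℝ := fun u => sInf (Set.range fun v => κ * (ρr v + M * ‖u - v‖)) with hρbar_def
  have hrange_ne : ∀ u : V, (Set.range fun v => κ * (ρr v + M * ‖u - v‖)).Nonempty :=
    fun u => ⟨_, ⟨0, rfl⟩⟩
  have hbdd : ∀ u : V, BddBelow (Set.range fun v => κ * (ρr v + M * ‖u - v‖)) := by
    intro u
    refine ⟨0, ?_⟩
    rintro _ ⟨v, rfl⟩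
    have := hρnn v
    positivity
  have h1 : ∀ u, ρr u ≤ ρbar u := by
    intro u
    apply le_csInf (hrange_ne u)
    rintro _ ⟨v, rfl⟩
    show ρr u ≤ κ * (ρr v + M * ‖u - v‖)
    have h2 : ρr u ≤ κ * (ρr v + ρr (u - v)) := by
      have := hρrtri v (u - v)
      rwa [add_sub_cancel] at this
    have h3 : ρr (u - v) ≤ M * ‖u - v‖ := hMbound _
    nlinarith
  have h2 : ∀ u, ρbar u ≤ κ * ρr u := by
    intro u
    have : κ * (ρr u + M * ‖u - u‖) = κ * ρr u := by simp
    rw [← this]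
    exact csInf_le (hbdd u) ⟨u, rfl⟩
  have hρbar_nn : ∀ u, 0 ≤ ρbar u := fun u => le_trans (hρnn u) (h1 u)
  have hlip : ∀ u u', ρbar u ≤ ρbar u' + κ * M * ‖u - u'‖ := by
    intro u u'
    have key : ∀ v : V, ρbar u ≤ κ * (ρr v + M * ‖u' - v‖) + κ * M * ‖u - u'‖ := by
      intro v
      have e1 : ρbar u ≤ κ * (ρr v + M * ‖u - v‖) := csInf_le (hbdd u) ⟨v, rfl⟩
      have e2 : ‖u - v‖ ≤ ‖u - u'‖ + ‖u' - v‖ := by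
        have := dist_triangle u u' v
        simpa [dist_eq_norm] using this
      nlinarith [mul_le_mul_of_nonneg_left e2 (show (0:ℝ) ≤ κ * M by positivity)]
    have : ρbar u - κ * M * ‖u - u'‖ ≤ ρbar u' := by
      apply le_csInf (hrange_ne u')
      rintro _ ⟨v, rfl⟩
      show ρbar u - κ * M * ‖u - u'‖ ≤ κ * (ρr v + M * ‖u' - v‖)
      linarith [key v]
    linarith
  have hcont : Continuous ρbar := by
    have hKnn : 0 ≤ κ * M := by positivity
    apply LipschitzWith.continuous (K := ⟨κ * M, hKnn⟩)
    apply LipschitzWith.of_dist_le_mul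
    intro u u'
    rw [Real.dist_eq, dist_eq_norm, abs_le]
    change -(κ * M * ‖u - u'‖) ≤ ρbar u - ρbar u' ∧ ρbar u - ρbar u' ≤ κ * M * ‖u - u'‖
    constructor
    · have h7 := hlip u' u
      rw [norm_sub_rev u' u] at h7
      linarith
    · have h7 := hlip u u'
      linarith
  -- lower Euclidean bound
  obtain ⟨w₁, hw₁⟩ : ∃ w : V, ‖w‖ = 1 := by
    obtain ⟨v, hv⟩ := exists_ne (0 : V)
    exact ⟨‖v‖⁻¹ • v, by rw [norm_smul, norm_inv, norm_norm,
      inv_mul_cancel₀ (norm_ne_zero_iff.mpr hv)]⟩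
  obtain ⟨w₀, hw₀S, hw₀min⟩ := (isCompact_sphere (0:V) 1).exists_isMinOn
    ⟨w₁, by simpa using hw₁⟩ hcont.continuousOn
  have hw₀norm : ‖w₀‖ = 1 := by simpa using hw₀S
  have hm₀ : 0 < ρbar w₀ := lt_of_lt_of_le
    (hρrpos w₀ (by intro h; rw [h] at hw₀norm; simp at hw₀norm)) (h1 w₀)
  set m : ℝ := ρbar w₀ / κ with hm_def
  have hm : 0 < m := div_pos hm₀ hκ0
  have hmbound : ∀ u, m * ‖u‖ ≤ ρr u := by
    intro u
    rcases eq_or_ne u 0 with rfl | hu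
    · simp [hρr0]
    · have hnu : 0 < ‖u‖ := norm_pos_iff.mpr hu
      set w : V := ‖u‖⁻¹ • u with hw_def
      have hwS : w ∈ Metric.sphere (0:V) 1 := by
        simp [hw_def, norm_smul, abs_of_pos (inv_pos.mpr hnu), inv_mul_cancel₀ hnu.ne']
      have e1 : ρbar w₀ ≤ ρbar w := hw₀min hwS
      have e2 : ρbar w ≤ κ * ρr w := h2 w
      have e3 : ρr w = ‖u‖⁻¹ * ρr u := by
        rw [hw_def, hρrsmul, abs_of_pos (inv_pos.mpr hnu)]
      rw [hm_def]
      rw [div_mul_eq_mul_div, div_le_iff₀ hκ0]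
      have e5 : ρbar w₀ ≤ κ * (‖u‖⁻¹ * ρr u) := by rw [← e3]; linarith
      calc ρbar w₀ * ‖u‖ ≤ (κ * (‖u‖⁻¹ * ρr u)) * ‖u‖ :=
            mul_le_mul_of_nonneg_right e5 hnu.le
        _ = ρr u * κ := by field_simp
  -- determinant maximization over the quasinorm body
  set K : Set V := {v | ρbar v ≤ κ} with hK_def
  have hKclosed : IsClosed K := isClosed_le hcont continuous_const
  have hKsub : K ⊆ Metric.closedBall 0 (κ / m) := by
    intro v hv
    have hvK : ρbar v ≤ κ := hv
    simp only [Metric.mem_closedBall, dist_zero_right]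
    rw [le_div_iff₀ hm]
    have e1 := hmbound v
    have e2 := h1 v
    nlinarith
  have hKcompact : IsCompact K :=
    (isCompact_closedBall 0 (κ/m)).of_isClosed_subset hKclosed hKsub
  set T : Set (Fin n → V) := Set.pi Set.univ (fun _ => K) with hT_def
  have hTcompact : IsCompact T := isCompact_univ_pi fun _ => hKcompact
  set B := b.toBasis with hB_def
  have hdet_cont : Continuous (fun v : Fin n → V => B.det v) := by
    have he : (fun v : Fin n → V => B.det v) =
        fun v => Matrix.det (Matrix.of fun i j => ⟪b i, v j⟫) := by
      funext v
      rw [Basis.det_apply]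
      congr 1
      ext i j
      rw [Basis.toMatrix_apply, hB_def, OrthonormalBasis.coe_toBasis_repr_apply,
        OrthonormalBasis.repr_apply_apply]
      rfl
    rw [he]
    exact Continuous.matrix_det
      (continuous_matrix fun i j => continuous_const.inner (continuous_apply j))
  set v0 : Fin n → V := fun i => (ρr (b i))⁻¹ • b i with hv0_def
  have hbne : ∀ i, b i ≠ (0:V) := by
    intro i h
    have := hbnorm i
    rw [h] at this
    simp at this
  have hbpos : ∀ i, 0 < ρr (b i) := fun i => hρrpos _ (hbne i)
  have hv0one : ∀ i, ρr (v0 i) = 1 := by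
    intro i
    rw [hv0_def]
    simp only
    rw [hρrsmul, abs_of_pos (inv_pos.mpr (hbpos i)), inv_mul_cancel₀ (hbpos i).ne']
  have hv0T : v0 ∈ T := by
    rw [hT_def, Set.mem_univ_pi]
    intro i
    show ρbar (v0 i) ≤ κ
    calc ρbar (v0 i) ≤ κ * ρr (v0 i) := h2 _
      _ = κ := by rw [hv0one i, mul_one]
  obtain ⟨vs, hvsT, hvsmax⟩ := hTcompact.exists_isMaxOn ⟨v0, hv0T⟩
    (continuous_abs.comp hdet_cont).continuousOn
  have hvsK : ∀ i, ρbar (vs i) ≤ κ := fun i => (Set.mem_univ_pi.mp hvsT) i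
  have hdet0 : B.det v0 = ∏ i, (ρr (b i))⁻¹ := by
    have hc : v0 = fun i => (ρr (b i))⁻¹ • (⇑B i) := by
      funext i
      rw [hv0_def, hB_def, OrthonormalBasis.coe_toBasis]
    rw [hc]
    have := B.det.toMultilinearMap.map_smul_univ (fun i => (ρr (b i))⁻¹) ⇑B
    simp only [AlternatingMap.coe_multilinearMap] at this
    rw [this, Basis.det_self, smul_eq_mul, mul_one]
  have hDv_pos : 0 < |B.det vs| := by
    have hd0 : 0 < |B.det v0| := by
      rw [hdet0, abs_of_pos]
      · exact Finset.prod_pos fun i _ => inv_pos.mpr (hbpos i)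
      · exact Finset.prod_pos fun i _ => inv_pos.mpr (hbpos i)
    exact lt_of_lt_of_le hd0 (hvsmax hv0T)
  have hLI : LinearIndependent ℝ vs := by
    have hne : B.det vs ≠ 0 := by
      intro h
      rw [h] at hDv_pos
      simp at hDv_pos
    exact ((Basis.is_basis_iff_det B).mpr (isUnit_iff_ne_zero.mpr hne)).1
  haveI : Nonempty (Fin n) := ⟨⟨0, hn⟩⟩
  have hcard : Fintype.card (Fin n) = finrank ℝ V := by simp [hn_def]
  set vb := basisOfLinearIndependentOfCardEqFinrank hLI hcard with hvb_def
  have hvb_coe : ∀ i, vb i = vs i := by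
    intro i
    rw [hvb_def, coe_basisOfLinearIndependentOfCardEqFinrank]
  have hsum_repr : ∀ u : V, u = ∑ i, vb.repr u i • vs i := by
    intro u
    conv_lhs => rw [← vb.sum_repr u]
    exact Finset.sum_congr rfl fun i _ => by rw [hvb_coe]
  have hcoord : ∀ (u : V) (i : Fin n), |vb.repr u i| ≤ ρr u := by
    intro u i
    rcases eq_or_ne u 0 with rfl | hu
    · simp [hρr0]
    · have hr : 0 < ρr u := hρrpos u hu
      set u' : V := (ρr u)⁻¹ • u with hu'_def
      have hru' : ρr u' = 1 := by
        rw [hu'_def, hρrsmul, abs_of_pos (inv_pos.mpr hr), inv_mul_cancel₀ hr.ne']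
      have hu'K : u' ∈ K := by
        show ρbar u' ≤ κ
        calc ρbar u' ≤ κ * ρr u' := h2 _
          _ = κ := by rw [hru', mul_one]
      have hwT : Function.update vs i u' ∈ T := by
        rw [hT_def, Set.mem_univ_pi]
        intro j
        rcases eq_or_ne j i with rfl | hj
        · rw [Function.update_self]
          exact hu'K
        · rw [Function.update_of_ne hj]
          exact (Set.mem_univ_pi.mp hvsT) j
      have hexp : B.det (Function.update vs i u') = vb.repr u' i * B.det vs := by
        conv_lhs => rw [show u' = ∑ j, vb.repr u' j • vs j from hsum_repr u']
        have hms := B.det.toMultilinearMap.map_update_sum Finset.univ i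
          (fun j => vb.repr u' j • vs j) vs
        simp only [AlternatingMap.coe_multilinearMap] at hms
        rw [hms]
        rw [Finset.sum_eq_single i]
        · have hsm := B.det.toMultilinearMap.map_update_smul vs i (vb.repr u' i) (vs i)
          simp only [AlternatingMap.coe_multilinearMap] at hsm
          rw [hsm, Function.update_eq_self, smul_eq_mul]
        · intro j _ hj
          have hsm := B.det.toMultilinearMap.map_update_smul vs i (vb.repr u' j) (vs j)
          simp only [AlternatingMap.coe_multilinearMap] at hsm
          rw [hsm, AlternatingMap.map_update_self _ _ (Ne.symm hj), smul_eq_mul, mul_zero]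
        · intro h
          exact absurd (Finset.mem_univ i) h
      have habs : |vb.repr u' i| ≤ 1 := by
        have h5 := hvsmax hwT
        have h6 : |vb.repr u' i| * |B.det vs| ≤ 1 * |B.det vs| := by
          rw [one_mul, ← abs_mul, ← hexp]
          exact h5
        exact le_of_mul_le_mul_right h6 hDv_pos
      have hscale : vb.repr u i = ρr u * vb.repr u' i := by
        have hq : u = ρr u • u' := by
          rw [hu'_def, smul_smul, mul_inv_cancel₀ hr.ne', one_smul]
        conv_lhs => rw [hq]
        rw [_root_.map_smul, Finsupp.smul_apply, smul_eq_mul]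
      rw [hscale, abs_mul, abs_of_pos hr]
      nlinarith [abs_nonneg (vb.repr u' i)]
  have hupper : ∀ u, ρr u ≤ (2*κ)^n * κ * ∑ i, |vb.repr u i| := by
    intro u
    conv_lhs => rw [show u = ∑ i, vb.repr u i • vs i from hsum_repr u]
    calc ρr (∑ i, vb.repr u i • vs i)
        ≤ (2*κ)^((Finset.univ : Finset (Fin n)).card) * ∑ i, ρr (vb.repr u i • vs i) :=
          quasi_sum hκ ρr hρr0 hρnn hρrtri _ _
      _ = (2*κ)^n * ∑ i, |vb.repr u i| * ρr (vs i) := by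
          rw [Finset.card_univ, Fintype.card_fin]
          congr 1
          exact Finset.sum_congr rfl fun i _ => hρrsmul _ _
      _ ≤ (2*κ)^n * ∑ i, |vb.repr u i| * κ := by
          apply mul_le_mul_of_nonneg_left _ (by positivity)
          apply Finset.sum_le_sum
          intro i _
          apply mul_le_mul_of_nonneg_left _ (abs_nonneg _)
          exact le_trans (h1 _) (hvsK i)
      _ = (2*κ)^n * κ * ∑ i, |vb.repr u i| := by
          rw [← Finset.sum_mul]
          ring
  set L : V →L[ℝ] V := LinearMap.toContinuousLinearMap (vb.constr ℝ (fun i => (b i : V)))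
    with hL_def
  have hLapp : ∀ u, L u = ∑ i, vb.repr u i • b i := by
    intro u
    show (vb.constr ℝ (fun i => (b i : V))) u = _
    rw [Basis.constr_apply_fintype]
    exact Finset.sum_congr rfl fun i _ => by rw [Basis.equivFun_apply]
  have hL_low : ∀ (u : V) (i : Fin n), |vb.repr u i| ≤ ‖L u‖ := by
    intro u i
    have hinner : ⟪b i, L u⟫ = vb.repr u i := by
      rw [hLapp]
      rw [inner_sum]
      rw [Finset.sum_eq_single i]
      · rw [real_inner_smul_right, real_inner_self_eq_norm_sq, hbnorm i]
        ring
      · intro j _ hj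
        rw [real_inner_smul_right, b.orthonormal.2 (Ne.symm hj), mul_zero]
      · intro h
        exact absurd (Finset.mem_univ i) h
    calc |vb.repr u i| = |⟪b i, L u⟫| := by rw [hinner]
      _ ≤ ‖b i‖ * ‖L u‖ := abs_real_inner_le_norm _ _
      _ = ‖L u‖ := by rw [hbnorm, one_mul]
  have hL_up : ∀ u, ‖L u‖ ≤ ∑ i, |vb.repr u i| := by
    intro u
    rw [hLapp]
    calc ‖∑ i, vb.repr u i • b i‖ ≤ ∑ i, ‖vb.repr u i • b i‖ := norm_sum_le _ _
      _ = ∑ i, |vb.repr u i| := Finset.sum_congr rfl fun i _ => by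
          rw [norm_smul, hbnorm, mul_one, Real.norm_eq_abs]
  refine ⟨((2*κ)^n * κ * (n:ℝ)) • L, ?_⟩
  intro u
  have hcpos : (0:ℝ) < (2*κ)^n * κ * (n:ℝ) := by positivity
  have hnorm' : ‖(((2*κ)^n * κ * (n:ℝ)) • L) u‖ = ((2*κ)^n * κ * (n:ℝ)) * ‖L u‖ := by
    rw [ContinuousLinearMap.smul_apply, norm_smul, Real.norm_eq_abs, abs_of_pos hcpos]
  constructor
  · rw [← ENNReal.ofReal_coe_nnreal, coe_nnnorm]
    conv_lhs => rw [← ENNReal.ofReal_toReal (hfin u)]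
    apply ENNReal.ofReal_le_ofReal
    rw [hnorm']
    have hsum_le : ∑ i, |vb.repr u i| ≤ (n:ℝ) * ‖L u‖ := by
      calc ∑ i, |vb.repr u i| ≤ ∑ _i : Fin n, ‖L u‖ :=
            Finset.sum_le_sum fun i _ => hL_low u i
        _ = (n:ℝ) * ‖L u‖ := by
            rw [Finset.sum_const, Finset.card_univ, Fintype.card_fin, nsmul_eq_mul]
    calc ρr u ≤ (2*κ)^n * κ * ∑ i, |vb.repr u i| := hupper u
      _ ≤ (2*κ)^n * κ * ((n:ℝ) * ‖L u‖) :=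
          mul_le_mul_of_nonneg_left hsum_le (by positivity)
      _ = ((2*κ)^n * κ * (n:ℝ)) * ‖L u‖ := by ring
  · rw [← ENNReal.ofReal_coe_nnreal, coe_nnnorm]
    conv_rhs => rw [← ENNReal.ofReal_toReal (hfin u)]
    rw [← ENNReal.ofReal_mul (by positivity)]
    apply ENNReal.ofReal_le_ofReal
    rw [hnorm']
    have hsum2 : ∑ i, |vb.repr u i| ≤ (n:ℝ) * ρr u := by
      calc ∑ i, |vb.repr u i| ≤ ∑ _i : Fin n, ρr u :=
            Finset.sum_le_sum fun i _ => hcoord u i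
        _ = (n:ℝ) * ρr u := by
            rw [Finset.sum_const, Finset.card_univ, Fintype.card_fin, nsmul_eq_mul]
    calc ((2*κ)^n * κ * (n:ℝ)) * ‖L u‖
        ≤ ((2*κ)^n * κ * (n:ℝ)) * (∑ i, |vb.repr u i|) :=
          mul_le_mul_of_nonneg_left (hL_up u) hcpos.le
      _ ≤ ((2*κ)^n * κ * (n:ℝ)) * ((n:ℝ) * ρr u) :=
          mul_le_mul_of_nonneg_left hsum2 hcpos.le
      _ = ((2*κ)^n * κ * (n:ℝ)^2) * ρr u := by ring


end Red

section OpHelp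
variable {V : Type*} [NormedAddCommGroup V] [InnerProductSpace ℝ V] [FiniteDimensional ℝ V]

lemma adj_nnnorm (M : V →L[ℝ] V) : ‖ContinuousLinearMap.adjoint M‖₊ = ‖M‖₊ :=
  LinearIsometryEquiv.nnnorm_map ContinuousLinearMap.adjoint M

lemma nnnorm_comp_swap (M N : V →L[ℝ] V) :
    ‖M.comp N‖₊ = ‖(ContinuousLinearMap.adjoint N).comp (ContinuousLinearMap.adjoint M)‖₊ := by
  rw [← adj_nnnorm (M.comp N), ContinuousLinearMap.adjoint_comp]

lemma nnnorm_le_sum_onb (M : V →L[ℝ] V) :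
    (‖M‖₊ : ℝ≥0∞) ≤ ∑ i, (‖M (stdOrthonormalBasis ℝ V i)‖₊ : ℝ≥0∞) := by
  set b := stdOrthonormalBasis ℝ V with hb
  have hreal : ‖M‖ ≤ ∑ i, ‖M (b i)‖ := by
    apply ContinuousLinearMap.opNorm_le_bound _
      (Finset.sum_nonneg fun i _ => norm_nonneg _)
    intro u
    calc ‖M u‖ = ‖M (∑ i, b.repr u i • b i)‖ := by rw [b.sum_repr]
      _ = ‖∑ i, b.repr u i • M (b i)‖ := by
            rw [map_sum]
            congr 1
            exact Finset.sum_congr rfl fun i _ => (M.map_smul _ _)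
      _ ≤ ∑ i, ‖b.repr u i • M (b i)‖ := norm_sum_le _ _
      _ = ∑ i, |b.repr u i| * ‖M (b i)‖ := Finset.sum_congr rfl fun i _ => by
            rw [norm_smul, Real.norm_eq_abs]
      _ ≤ ∑ i, ‖u‖ * ‖M (b i)‖ := by
          apply Finset.sum_le_sum
          intro i _
          apply mul_le_mul_of_nonneg_right _ (norm_nonneg _)
          calc |b.repr u i| = |⟪b i, u⟫| := by rw [b.repr_apply_apply]
            _ ≤ ‖b i‖ * ‖u‖ := abs_real_inner_le_norm _ _
            _ = ‖u‖ := by rw [b.orthonormal.1 i, one_mul]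
      _ = (∑ i, ‖M (b i)‖) * ‖u‖ := by rw [← Finset.mul_sum]; ring
  have hnn : ‖M‖₊ ≤ ∑ i, ‖M (b i)‖₊ := by
    rw [← NNReal.coe_le_coe, NNReal.coe_sum]
    simpa [coe_nnnorm] using hreal
  have h2 := ENNReal.coe_le_coe.mpr hnn
  rw [ENNReal.coe_finset_sum] at h2
  exact h2

lemma nnnorm_apply_onb_le (M : V →L[ℝ] V) (i : Fin (finrank ℝ V)) :
    (‖M (stdOrthonormalBasis ℝ V i)‖₊ : ℝ≥0∞) ≤ (‖M‖₊ : ℝ≥0∞) := by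
  rw [ENNReal.coe_le_coe]
  calc ‖M (stdOrthonormalBasis ℝ V i)‖₊ ≤ ‖M‖₊ * ‖stdOrthonormalBasis ℝ V i‖₊ :=
        M.le_opNNNorm _
    _ = ‖M‖₊ := by
        have : ‖stdOrthonormalBasis ℝ V i‖₊ = 1 := by
          ext
          simpa using (stdOrthonormalBasis ℝ V).orthonormal.1 i
        rw [this, mul_one]

lemma sum_nnnorm_apply_onb_le (M : V →L[ℝ] V) :
    ∑ i, (‖M (stdOrthonormalBasis ℝ V i)‖₊ : ℝ≥0∞) ≤ (finrank ℝ V : ℝ≥0∞) * ‖M‖₊ := by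
  calc ∑ i, (‖M (stdOrthonormalBasis ℝ V i)‖₊ : ℝ≥0∞)
      ≤ ∑ _i : Fin (finrank ℝ V), (‖M‖₊ : ℝ≥0∞) :=
        Finset.sum_le_sum fun i _ => nnnorm_apply_onb_le M i
    _ = (finrank ℝ V : ℝ≥0∞) * ‖M‖₊ := by
        rw [Finset.sum_const, Finset.card_univ, Fintype.card_fin, nsmul_eq_mul]

end OpHelp

noncomputable def keyC (n : ℕ) (ε : ℝ) : ℝ≥0∞ :=
  ((n : ℝ≥0∞) ^ (1 + 1/ε)) ^ 2 * (n : ℝ≥0∞) ^ (4:ℕ) *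
    (ENNReal.ofReal ((2 * (2:ℝ) ^ (1 + 1/ε)) ^ n * (2:ℝ) ^ (1 + 1/ε) * (n:ℝ) ^ 2)) ^ 2

lemma rpow_natCast_ne_top (n : ℕ) (r : ℝ) (hr : 0 ≤ r) : ((n : ℝ≥0∞) ^ r) ≠ ⊤ := by
  intro h
  rcases ENNReal.rpow_eq_top_iff.mp h with ⟨_, h2⟩ | ⟨h1, _⟩
  · linarith
  · exact (ENNReal.natCast_ne_top n) h1

lemma keyC_ne_top (n : ℕ) {ε : ℝ} (hε : 0 < ε) : keyC n ε ≠ ⊤ := by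
  unfold keyC
  have h1 : ((n : ℝ≥0∞) ^ (1 + 1/ε)) ≠ ⊤ := rpow_natCast_ne_top n _ (by positivity)
  exact ENNReal.mul_ne_top
    (ENNReal.mul_ne_top (pow_ne_top h1) (pow_ne_top (ENNReal.natCast_ne_top n)))
    (pow_ne_top ENNReal.ofReal_ne_top)

lemma keyC_pos (n : ℕ) (ε : ℝ) (hn : 0 < n) (hε : 0 < ε) : 0 < keyC n ε := by
  unfold keyC
  have hκpos : (0:ℝ) < (2:ℝ) ^ (1 + 1/ε) := Real.rpow_pos_of_pos two_pos _
  have hnR : (0:ℝ) < (n:ℝ) := by exact_mod_cast hn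
  have hN0 : (0:ℝ≥0∞) < (n : ℝ≥0∞) := by exact_mod_cast hn
  have h1 : (0:ℝ≥0∞) < (n : ℝ≥0∞) ^ (1 + 1/ε) :=
    ENNReal.rpow_pos hN0 (ENNReal.natCast_ne_top n)
  have h2 : (0:ℝ≥0∞) < ENNReal.ofReal ((2 * (2:ℝ) ^ (1 + 1/ε)) ^ n * (2:ℝ) ^ (1 + 1/ε) * (n:ℝ) ^ 2) := by
    rw [ENNReal.ofReal_pos]
    positivity
  have e1 : ((n:ℝ≥0∞) ^ (1+1/ε))^2 ≠ 0 := (ENNReal.pow_pos h1 _).ne'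
  have e2 : ((n:ℝ≥0∞))^(4:ℕ) ≠ 0 := (ENNReal.pow_pos hN0 _).ne'
  have e3 : (ENNReal.ofReal ((2 * (2:ℝ) ^ (1 + 1/ε)) ^ n * (2:ℝ) ^ (1 + 1/ε) * (n:ℝ) ^ 2))^2 ≠ 0 :=
    (ENNReal.pow_pos h2 _).ne'
  exact ENNReal.mul_pos (ENNReal.mul_pos e1 e2).ne' e3

section Key

variable {α : Type*} [MeasurableSpace α] {V : Type*} [NormedAddCommGroup V]
  [InnerProductSpace ℝ V] [FiniteDimensional ℝ V]

lemma avgLp_pair_le {ν : Measure α} {t : ℝ≥0∞} {f g : α → ℝ≥0∞} {ε : ℝ} (hε : 0 < ε)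
    (ht : t = ⊤ ∨ (t ≠ 0 ∧ t ≠ ⊤ ∧ ε ≤ t.toReal))
    (hf : AEMeasurable f ν) (hg : AEMeasurable g ν) :
    avgLp ν t (fun x => f x + g x) ≤
      ENNReal.ofReal ((2:ℝ) ^ (1 + 1/ε)) * (avgLp ν t f + avgLp ν t g) := by
  have hco : ENNReal.ofReal ((2:ℝ) ^ (1 + 1/ε)) = ((2:ℝ≥0∞)) ^ (1 + 1/ε) := by
    rw [show ((2:ℝ≥0∞)) = ENNReal.ofReal 2 by simp, ← ENNReal.ofReal_rpow_of_pos two_pos]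
  have h := avgLp_sum_le (ν := ν) (t := t) (Finset.univ : Finset (Fin 2)) ![f, g]
    (by intro i _; fin_cases i <;> simpa) hε ht
  simp only [Fin.sum_univ_two, Matrix.cons_val_zero, Matrix.cons_val_one, Matrix.head_cons,
    Finset.card_univ, Fintype.card_fin, Nat.cast_ofNat] at h
  rw [hco]
  exact h

lemma key_ineq (ν : Measure α) [IsProbabilityMeasure ν]
    {ε : ℝ} (hε : 0 < ε) {t q : ℝ≥0∞}
    (ht : t = ⊤ ∨ (t ≠ 0 ∧ t ≠ ⊤ ∧ ε ≤ t.toReal))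
    (hq : q = ⊤ ∨ (q ≠ 0 ∧ q ≠ ⊤ ∧ ε ≤ q.toReal))
    {W Winv : α → V →L[ℝ] V}
    (hWm : StronglyMeasurable W) (hVm : StronglyMeasurable Winv)
    (hWadj : ∀ᵐ x ∂ν, ContinuousLinearMap.adjoint (W x) = W x)
    (hVadj : ∀ᵐ x ∂ν, ContinuousLinearMap.adjoint (Winv x) = Winv x)
    (hinv1 : ∀ᵐ x ∂ν, (Winv x).comp (W x) = ContinuousLinearMap.id ℝ V)
    (hinv2 : ∀ᵐ x ∂ν, (W x).comp (Winv x) = ContinuousLinearMap.id ℝ V) :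
    avgLp ν t (fun x => avgLp ν q (fun y => (‖(Winv x).comp (W y)‖₊ : ℝ≥0∞))) ≤
      keyC (finrank ℝ V) ε *
        avgLp ν q (fun x => avgLp ν t (fun y => (‖(W x).comp (Winv y)‖₊ : ℝ≥0∞))) := by
  classical
  have ht0 : t ≠ 0 := by
    rcases ht with rfl | ⟨h, _⟩
    · exact top_ne_zero
    · exact h
  have hq0 : q ≠ 0 := by
    rcases hq with rfl | ⟨h, _⟩
    · exact top_ne_zero
    · exact h
  rcases Nat.eq_zero_or_pos (finrank ℝ V) with hn0 | hn
  · -- trivial space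
    haveI : Subsingleton V := by
      have := finrank_zero_iff (R := ℝ) (M := V)
      rw [hn0] at this
      exact this.mp rfl
    have hzero : ∀ M : V →L[ℝ] V, M = 0 := fun M =>
      ContinuousLinearMap.ext fun v => Subsingleton.elim _ _
    have hLHS : (fun x => avgLp ν q (fun y => (‖(Winv x).comp (W y)‖₊ : ℝ≥0∞))) =
        fun _ => (0:ℝ≥0∞) := by
      funext x
      have he : (fun y => (‖(Winv x).comp (W y)‖₊ : ℝ≥0∞)) = fun _ => 0 := by
        funext y
        rw [hzero ((Winv x).comp (W y))]
        simp
      rw [he, avgLp_zero hq0]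
    rw [hLHS, avgLp_zero ht0]
    exact zero_le
  have hν0 : ν ≠ 0 := IsProbabilityMeasure.ne_zero ν
  haveI : (ae ν).NeBot := ae_neBot.mpr hν0
  set n := finrank ℝ V with hn_def
  set b := stdOrthonormalBasis ℝ V with hb_def
  set κε : ℝ := (2:ℝ) ^ (1 + 1/ε) with hκε_def
  have hκε1 : (1:ℝ) ≤ κε := by
    rw [hκε_def, show (1:ℝ) = (2:ℝ) ^ (0:ℝ) by simp]
    exact Real.rpow_le_rpow_of_exponent_le one_le_two (by positivity)
  set S : ℝ≥0∞ := (n : ℝ≥0∞) ^ (1 + 1/ε) with hS_def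
  set N : ℝ≥0∞ := (n : ℝ≥0∞) with hN_def
  set R : ℝ≥0∞ := ENNReal.ofReal ((2 * κε) ^ n * κε * (n:ℝ) ^ 2) with hR_def
  have hS_ne_top : S ≠ ⊤ := rpow_natCast_ne_top n _ (by positivity)
  have hN_ne_top : N ≠ ⊤ := ENNReal.natCast_ne_top n
  have hR_ne_top : R ≠ ⊤ := ENNReal.ofReal_ne_top
  set G : α → ℝ≥0∞ := fun x => avgLp ν t (fun y => (‖(W x).comp (Winv y)‖₊ : ℝ≥0∞))
    with hG_def
  set Φ : ℝ≥0∞ := avgLp ν q G with hΦ_def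
  have hkeyC : keyC n ε = S^2 * N^(4:ℕ) * R^2 := rfl
  by_cases hΦtop : Φ = ⊤
  · rw [hΦtop, ENNReal.mul_top (by
      have := keyC_pos n ε hn hε
      exact this.ne')]
    exact le_top
  -- good set
  have hgood : ∀ᵐ x ∂ν, ContinuousLinearMap.adjoint (W x) = W x ∧
      ContinuousLinearMap.adjoint (Winv x) = Winv x ∧
      (Winv x).comp (W x) = ContinuousLinearMap.id ℝ V ∧
      (W x).comp (Winv x) = ContinuousLinearMap.id ℝ V := by
    filter_upwards [hWadj, hVadj, hinv1, hinv2] with x h1 h2 h3 h4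
    exact ⟨h1, h2, h3, h4⟩
  -- measurability helpers
  have measWu : ∀ u : V, Measurable fun x => (‖W x u‖₊ : ℝ≥0∞) := by
    intro u
    exact StronglyMeasurable.enorm ((ContinuousLinearMap.apply ℝ V u).continuous.comp_stronglyMeasurable
      hWm)
  have measVu : ∀ u : V, Measurable fun x => (‖Winv x u‖₊ : ℝ≥0∞) := by
    intro u
    exact StronglyMeasurable.enorm ((ContinuousLinearMap.apply ℝ V u).continuous.comp_stronglyMeasurable
      hVm)
  have measWcomp : ∀ M : V →L[ℝ] V, Measurable fun y => (‖(W y).comp M‖₊ : ℝ≥0∞) := by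
    intro M
    exact StronglyMeasurable.enorm (((ContinuousLinearMap.compL ℝ V V V).flip M).continuous.comp_stronglyMeasurable
      hWm)
  -- quasinorms
  set σ : V → ℝ≥0∞ := fun u => avgLp ν q (fun x => (‖W x u‖₊ : ℝ≥0∞)) with hσ_def
  set ρ : V → ℝ≥0∞ := fun u => avgLp ν t (fun y => (‖Winv y u‖₊ : ℝ≥0∞)) with hρ_def

  have hρsmul : ∀ (c : ℝ) (u : V), ρ (c • u) = (‖c‖₊ : ℝ≥0∞) * ρ u := by
    intro c u
    rw [hρ_def]
    simp only
    have he : (fun y => (‖Winv y (c • u)‖₊ : ℝ≥0∞)) =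
        fun y => (‖c‖₊ : ℝ≥0∞) * (‖Winv y u‖₊ : ℝ≥0∞) := by
      funext y
      rw [(Winv y).map_smul, nnnorm_smul, ENNReal.coe_mul]
    rw [he, avgLp_const_mul ht0 ENNReal.coe_ne_top]
  have hσsmul : ∀ (c : ℝ) (u : V), σ (c • u) = (‖c‖₊ : ℝ≥0∞) * σ u := by
    intro c u
    rw [hσ_def]
    simp only
    have he : (fun x => (‖W x (c • u)‖₊ : ℝ≥0∞)) =
        fun x => (‖c‖₊ : ℝ≥0∞) * (‖W x u‖₊ : ℝ≥0∞) := by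
      funext x
      rw [(W x).map_smul, nnnorm_smul, ENNReal.coe_mul]
    rw [he, avgLp_const_mul hq0 ENNReal.coe_ne_top]
  have hσtri : ∀ u v, σ (u + v) ≤ ENNReal.ofReal κε * (σ u + σ v) := by
    intro u v
    calc σ (u+v) ≤ avgLp ν q (fun x => (‖W x u‖₊ : ℝ≥0∞) + (‖W x v‖₊ : ℝ≥0∞)) := by
          apply avgLp_mono_s9
          apply Eventually.of_forall
          intro x
          have hadd : (‖W x (u+v)‖₊ : ℝ≥0∞) ≤ (‖W x u‖₊ : ℝ≥0∞) + (‖W x v‖₊ : ℝ≥0∞) := by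
            rw [(W x).map_add, ← ENNReal.coe_add]
            exact_mod_cast nnnorm_add_le _ _
          exact hadd
      _ ≤ ENNReal.ofReal κε * (σ u + σ v) :=
          avgLp_pair_le hε hq (measWu u).aemeasurable (measWu v).aemeasurable
  have hρtri : ∀ u v, ρ (u + v) ≤ ENNReal.ofReal κε * (ρ u + ρ v) := by
    intro u v
    calc ρ (u+v) ≤ avgLp ν t (fun y => (‖Winv y u‖₊ : ℝ≥0∞) + (‖Winv y v‖₊ : ℝ≥0∞)) := by
          apply avgLp_mono_s9
          apply Eventually.of_forall
          intro y
          have hadd : (‖Winv y (u+v)‖₊ : ℝ≥0∞) ≤ (‖Winv y u‖₊ : ℝ≥0∞) + (‖Winv y v‖₊ : ℝ≥0∞) := by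
            rw [(Winv y).map_add, ← ENNReal.coe_add]
            exact_mod_cast nnnorm_add_le _ _
          exact hadd
      _ ≤ ENNReal.ofReal κε * (ρ u + ρ v) :=
          avgLp_pair_le hε ht (measVu u).aemeasurable (measVu v).aemeasurable
  have hσpos : ∀ u : V, u ≠ 0 → σ u ≠ 0 := by
    intro u hu
    refine (avgLp_pos hν0 hq0 (measWu u).aemeasurable ?_).ne'
    filter_upwards [hgood] with x hx
    have hne : W x u ≠ 0 := by
      intro h
      have h2 : Winv x (W x u) = u := by
        have := ContinuousLinearMap.ext_iff.mp hx.2.2.1 u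
        simpa using this
      rw [h] at h2
      simp at h2
      exact hu h2.symm
    simpa [pos_iff_ne_zero] using hne
  have hρpos : ∀ u : V, u ≠ 0 → ρ u ≠ 0 := by
    intro u hu
    refine (avgLp_pos hν0 ht0 (measVu u).aemeasurable ?_).ne'
    filter_upwards [hgood] with x hx
    have hne : Winv x u ≠ 0 := by
      intro h
      have h2 : W x (Winv x u) = u := by
        have := ContinuousLinearMap.ext_iff.mp hx.2.2.2 u
        simpa using this
      rw [h] at h2
      simp at h2
      exact hu h2.symm
    simpa [pos_iff_ne_zero] using hne
  -- swap helpers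
  have swap2 : ∀ M M' : V →L[ℝ] V, ContinuousLinearMap.adjoint M = M →
      ContinuousLinearMap.adjoint M' = M' → ‖M.comp M'‖₊ = ‖M'.comp M‖₊ := by
    intro M M' hM hM'
    rw [nnnorm_comp_swap, hM, hM']
  have swapAdj : ∀ M M' : V →L[ℝ] V, ContinuousLinearMap.adjoint M' = M' →
      ‖M.comp M'‖₊ = ‖M'.comp (ContinuousLinearMap.adjoint M)‖₊ := by
    intro M M' hM'
    rw [nnnorm_comp_swap, hM']
  have swapAdj2 : ∀ M M' : V →L[ℝ] V,
      ‖M.comp (ContinuousLinearMap.adjoint M')‖₊ =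
        ‖M'.comp (ContinuousLinearMap.adjoint M)‖₊ := by
    intro M M'
    rw [nnnorm_comp_swap M (ContinuousLinearMap.adjoint M'),
      ContinuousLinearMap.adjoint_adjoint]
  -- finiteness of ρ
  obtain ⟨x₀, hx₀g, hx₀fin⟩ := exists_good_of_avgLp_ne_top hν0 hq0 hgood hΦtop
  have hρfin : ∀ u : V, ρ u ≠ ⊤ := by
    intro u
    have hb1 : ∀ᵐ y ∂ν, (‖Winv y u‖₊ : ℝ≥0∞) ≤
        (‖Winv x₀ u‖₊ : ℝ≥0∞) * (‖(W x₀).comp (Winv y)‖₊ : ℝ≥0∞) := by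
      filter_upwards [hgood] with y hy
      have heq : Winv y u = ((Winv y).comp (W x₀)) (Winv x₀ u) := by
        simp only [ContinuousLinearMap.comp_apply]
        congr 1
        have := ContinuousLinearMap.ext_iff.mp hx₀g.2.2.2 u
        simpa using this.symm
      rw [heq]
      calc (‖((Winv y).comp (W x₀)) (Winv x₀ u)‖₊ : ℝ≥0∞)
          ≤ (‖(Winv y).comp (W x₀)‖₊ : ℝ≥0∞) * (‖Winv x₀ u‖₊ : ℝ≥0∞) := by
            rw [← ENNReal.coe_mul]
            exact_mod_cast ContinuousLinearMap.le_opNNNorm _ _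
        _ = (‖Winv x₀ u‖₊ : ℝ≥0∞) * (‖(W x₀).comp (Winv y)‖₊ : ℝ≥0∞) := by
            rw [swap2 (Winv y) (W x₀) hy.2.1 hx₀g.1, mul_comm]
    have h6 : ρ u ≤ (‖Winv x₀ u‖₊ : ℝ≥0∞) * G x₀ := by
      calc ρ u ≤ avgLp ν t
            (fun y => (‖Winv x₀ u‖₊ : ℝ≥0∞) * (‖(W x₀).comp (Winv y)‖₊ : ℝ≥0∞)) :=
            avgLp_mono_s9 hb1
        _ = (‖Winv x₀ u‖₊ : ℝ≥0∞) * G x₀ := avgLp_const_mul ht0 ENNReal.coe_ne_top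
    exact (lt_of_le_of_lt h6 (ENNReal.mul_lt_top ENNReal.coe_lt_top hx₀fin)).ne
  -- finiteness of σ
  obtain ⟨y₀, hy₀g⟩ := hgood.exists
  have hc₀pos0 : (0:ℝ≥0∞) <
      avgLp ν t (fun y => ((‖(W y).comp (Winv y₀)‖₊ : ℝ≥0∞))⁻¹) := by
    apply avgLp_pos hν0 ht0 ((measWcomp (Winv y₀)).inv).aemeasurable
    apply Eventually.of_forall
    intro y
    simp [ENNReal.inv_pos]
  set c₀ : ℝ≥0∞ :=
    min (avgLp ν t (fun y => ((‖(W y).comp (Winv y₀)‖₊ : ℝ≥0∞))⁻¹)) 1 with hc₀_def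
  have hc₀pos : 0 < c₀ := lt_min hc₀pos0 one_pos
  have hc₀top : c₀ ≠ ⊤ := (lt_of_le_of_lt (min_le_right _ _) one_lt_top).ne
  have hAbound : ∀ᵐ x ∂ν, (‖(W x).comp (Winv y₀)‖₊ : ℝ≥0∞) * c₀ ≤ G x := by
    filter_upwards [hgood] with x hx
    have hptwise : ∀ᵐ y ∂ν, (‖(W x).comp (Winv y₀)‖₊ : ℝ≥0∞) *
        ((‖(W y).comp (Winv y₀)‖₊ : ℝ≥0∞))⁻¹ ≤ (‖(W x).comp (Winv y)‖₊ : ℝ≥0∞) := by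
      filter_upwards [hgood] with y hy
      have hfactor : (W x).comp (Winv y₀) = ((W x).comp (Winv y)).comp
          ((W y).comp (Winv y₀)) := by
        ext v
        simp only [ContinuousLinearMap.comp_apply]
        congr 1
        have := ContinuousLinearMap.ext_iff.mp hy.2.2.1 (Winv y₀ v)
        simpa using this.symm
      have hle : (‖(W x).comp (Winv y₀)‖₊ : ℝ≥0∞) ≤
          (‖(W x).comp (Winv y)‖₊ : ℝ≥0∞) * (‖(W y).comp (Winv y₀)‖₊ : ℝ≥0∞) := by
        rw [hfactor, ← ENNReal.coe_mul]
        exact_mod_cast ContinuousLinearMap.opNNNorm_comp_le _ _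
      calc (‖(W x).comp (Winv y₀)‖₊ : ℝ≥0∞) * ((‖(W y).comp (Winv y₀)‖₊ : ℝ≥0∞))⁻¹
          ≤ ((‖(W x).comp (Winv y)‖₊ : ℝ≥0∞) * (‖(W y).comp (Winv y₀)‖₊ : ℝ≥0∞)) *
              ((‖(W y).comp (Winv y₀)‖₊ : ℝ≥0∞))⁻¹ := _root_.mul_le_mul_left hle _
        _ = (‖(W x).comp (Winv y)‖₊ : ℝ≥0∞) * ((‖(W y).comp (Winv y₀)‖₊ : ℝ≥0∞) *
              ((‖(W y).comp (Winv y₀)‖₊ : ℝ≥0∞))⁻¹) := mul_assoc _ _ _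
        _ ≤ (‖(W x).comp (Winv y)‖₊ : ℝ≥0∞) * 1 :=
              _root_.mul_le_mul_right (ENNReal.mul_inv_le_one _) _
        _ = (‖(W x).comp (Winv y)‖₊ : ℝ≥0∞) := mul_one _
    calc (‖(W x).comp (Winv y₀)‖₊ : ℝ≥0∞) * c₀
        ≤ (‖(W x).comp (Winv y₀)‖₊ : ℝ≥0∞) *
            avgLp ν t (fun y => ((‖(W y).comp (Winv y₀)‖₊ : ℝ≥0∞))⁻¹) :=
          _root_.mul_le_mul_right (min_le_left _ _) _
      _ = avgLp ν t (fun y => (‖(W x).comp (Winv y₀)‖₊ : ℝ≥0∞) *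
            ((‖(W y).comp (Winv y₀)‖₊ : ℝ≥0∞))⁻¹) :=
          (avgLp_const_mul ht0 ENNReal.coe_ne_top).symm
      _ ≤ avgLp ν t (fun y => (‖(W x).comp (Winv y)‖₊ : ℝ≥0∞)) := avgLp_mono_s9 hptwise
      _ = G x := rfl
  have hA_fin : avgLp ν q (fun x => (‖(W x).comp (Winv y₀)‖₊ : ℝ≥0∞)) ≠ ⊤ := by
    intro htop
    have h5 : c₀ * avgLp ν q (fun x => (‖(W x).comp (Winv y₀)‖₊ : ℝ≥0∞)) ≤ Φ := by
      rw [← avgLp_const_mul hq0 hc₀top]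
      apply avgLp_mono_s9
      filter_upwards [hAbound] with x hx
      rw [mul_comm]
      exact hx
    rw [htop, ENNReal.mul_top hc₀pos.ne'] at h5
    exact hΦtop (top_le_iff.mp h5)
  have hσfin : ∀ u : V, σ u ≠ ⊤ := by
    intro u
    have hb2 : ∀ᵐ x ∂ν, (‖W x u‖₊ : ℝ≥0∞) ≤
        (‖W y₀ u‖₊ : ℝ≥0∞) * (‖(W x).comp (Winv y₀)‖₊ : ℝ≥0∞) := by
      apply Eventually.of_forall
      intro x
      have heq : W x u = ((W x).comp (Winv y₀)) (W y₀ u) := by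
        simp only [ContinuousLinearMap.comp_apply]
        congr 1
        have := ContinuousLinearMap.ext_iff.mp hy₀g.2.2.1 u
        simpa using this.symm
      rw [heq, mul_comm, ← ENNReal.coe_mul]
      exact_mod_cast ContinuousLinearMap.le_opNNNorm _ _
    have h6 := avgLp_mono_s9 (ν := ν) (t := q) hb2
    rw [avgLp_const_mul hq0 ENNReal.coe_ne_top] at h6
    exact (lt_of_le_of_lt h6 (ENNReal.mul_lt_top ENNReal.coe_lt_top
      (lt_top_iff_ne_top.mpr hA_fin))).ne
  -- reducing operators
  obtain ⟨L, hL⟩ := exists_reducing hn hκε1 σ hσfin hσpos hσsmul hσtri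
  obtain ⟨K, hK⟩ := exists_reducing hn hκε1 ρ hρfin hρpos hρsmul hρtri
  set La : V →L[ℝ] V := ContinuousLinearMap.adjoint L with hLa_def
  set Ka : V →L[ℝ] V := ContinuousLinearMap.adjoint K with hKa_def
  -- ρ of W x (b i) is bounded by G x
  have hρG : ∀ᵐ x ∂ν, ∀ i, ρ (W x (b i)) ≤ G x := by
    filter_upwards [hgood] with x hx
    intro i
    apply avgLp_mono_s9
    filter_upwards [hgood] with y hy
    calc (‖Winv y (W x (b i))‖₊ : ℝ≥0∞)
        = (‖((Winv y).comp (W x)) (b i)‖₊ : ℝ≥0∞) := by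
          simp [ContinuousLinearMap.comp_apply]
      _ ≤ (‖(Winv y).comp (W x)‖₊ : ℝ≥0∞) := nnnorm_apply_onb_le _ i
      _ = (‖(W x).comp (Winv y)‖₊ : ℝ≥0∞) := by rw [swap2 (Winv y) (W x) hy.2.1 hx.1]
  -- σ of Ka (b j) is bounded by (R * N) * Φ
  have hσΦ : ∀ j : Fin n, σ (Ka (b j)) ≤ (R * N) * Φ := by
    intro j
    have hptw : ∀ᵐ x ∂ν, (‖W x (Ka (b j))‖₊ : ℝ≥0∞) ≤ (R * N) * G x := by
      filter_upwards [hgood, hρG] with x hx hxρ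
      calc (‖W x (Ka (b j))‖₊ : ℝ≥0∞)
          = (‖((W x).comp Ka) (b j)‖₊ : ℝ≥0∞) := by simp [ContinuousLinearMap.comp_apply]
        _ ≤ (‖(W x).comp Ka‖₊ : ℝ≥0∞) := nnnorm_apply_onb_le _ j
        _ = (‖K.comp (W x)‖₊ : ℝ≥0∞) := by
            rw [hKa_def, swapAdj2 (W x) K, hx.1]
        _ ≤ ∑ i, (‖(K.comp (W x)) (b i)‖₊ : ℝ≥0∞) := nnnorm_le_sum_onb _
        _ = ∑ i, (‖K (W x (b i))‖₊ : ℝ≥0∞) := by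
            simp [ContinuousLinearMap.comp_apply]
        _ ≤ ∑ i, R * ρ (W x (b i)) := Finset.sum_le_sum fun i _ => (hK _).2
        _ ≤ ∑ _i : Fin n, R * G x := Finset.sum_le_sum fun i _ =>
            _root_.mul_le_mul_right (hxρ i) R
        _ = (R * N) * G x := by
            rw [Finset.sum_const, Finset.card_univ, Fintype.card_fin, nsmul_eq_mul]
            rw [hN_def]
            ring
    calc σ (Ka (b j)) ≤ avgLp ν q (fun x => (R * N) * G x) := avgLp_mono_s9 hptw
      _ = (R * N) * Φ := avgLp_const_mul hq0 (ENNReal.mul_ne_top hR_ne_top hN_ne_top)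
  -- the inner estimate
  have hinner : ∀ᵐ x ∂ν,
      avgLp ν q (fun y => (‖(Winv x).comp (W y)‖₊ : ℝ≥0∞)) ≤
        (S * N) * ∑ j, (‖Winv x (La (b j))‖₊ : ℝ≥0∞) := by
    filter_upwards [hgood] with x hx
    calc avgLp ν q (fun y => (‖(Winv x).comp (W y)‖₊ : ℝ≥0∞))
        ≤ avgLp ν q (fun y => ∑ i, (‖W y (Winv x (b i))‖₊ : ℝ≥0∞)) := by
          apply avgLp_mono_s9
          filter_upwards [hgood] with y hy
          calc (‖(Winv x).comp (W y)‖₊ : ℝ≥0∞)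
              = (‖(W y).comp (Winv x)‖₊ : ℝ≥0∞) := by rw [swap2 _ _ hx.2.1 hy.1]
            _ ≤ ∑ i, (‖((W y).comp (Winv x)) (b i)‖₊ : ℝ≥0∞) := nnnorm_le_sum_onb _
            _ = ∑ i, (‖W y (Winv x (b i))‖₊ : ℝ≥0∞) := by
                simp [ContinuousLinearMap.comp_apply]
      _ ≤ S * ∑ i, σ (Winv x (b i)) := by
          have h7 := avgLp_sum_le (ν := ν) (t := q) Finset.univ
            (fun i (y : α) => (‖W y (Winv x (b i))‖₊ : ℝ≥0∞))
            (fun i _ => (measWu _).aemeasurable) hε hq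
          simp only [Finset.card_univ, Fintype.card_fin] at h7
          exact h7
      _ ≤ S * ∑ i, (‖L (Winv x (b i))‖₊ : ℝ≥0∞) :=
          _root_.mul_le_mul_right (Finset.sum_le_sum fun i _ => (hL _).1) S
      _ = S * ∑ i, (‖(L.comp (Winv x)) (b i)‖₊ : ℝ≥0∞) := by
          simp [ContinuousLinearMap.comp_apply]
      _ ≤ S * (N * (‖L.comp (Winv x)‖₊ : ℝ≥0∞)) :=
          _root_.mul_le_mul_right (sum_nnnorm_apply_onb_le _) S
      _ = S * (N * (‖(Winv x).comp La‖₊ : ℝ≥0∞)) := by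
          rw [hLa_def, swapAdj L (Winv x) hx.2.1]
      _ ≤ S * (N * ∑ j, (‖((Winv x).comp La) (b j)‖₊ : ℝ≥0∞)) :=
          _root_.mul_le_mul_right (_root_.mul_le_mul_right (nnnorm_le_sum_onb _) N) S
      _ = (S * N) * ∑ j, (‖Winv x (La (b j))‖₊ : ℝ≥0∞) := by
          simp only [ContinuousLinearMap.comp_apply]
          ring
  -- put everything together
  calc avgLp ν t (fun x => avgLp ν q (fun y => (‖(Winv x).comp (W y)‖₊ : ℝ≥0∞)))
      ≤ avgLp ν t (fun x => (S * N) * ∑ j, (‖Winv x (La (b j))‖₊ : ℝ≥0∞)) :=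
        avgLp_mono_s9 hinner
    _ = (S * N) * avgLp ν t (fun x => ∑ j, (‖Winv x (La (b j))‖₊ : ℝ≥0∞)) :=
        avgLp_const_mul ht0 (ENNReal.mul_ne_top hS_ne_top hN_ne_top)
    _ ≤ (S * N) * (S * ∑ j, avgLp ν t (fun x => (‖Winv x (La (b j))‖₊ : ℝ≥0∞))) := by
        apply _root_.mul_le_mul_right
        have h8 := avgLp_sum_le (ν := ν) (t := t) Finset.univ
          (fun j (x : α) => (‖Winv x (La (b j))‖₊ : ℝ≥0∞))
          (fun j _ => (measVu _).aemeasurable) hε ht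
        simp only [Finset.card_univ, Fintype.card_fin] at h8
        exact h8
    _ ≤ (S * N) * (S * ∑ j, (‖K (La (b j))‖₊ : ℝ≥0∞)) := by
        apply _root_.mul_le_mul_right
        apply _root_.mul_le_mul_right
        exact Finset.sum_le_sum fun j _ => (hK _).1
    _ = (S * N) * (S * ∑ j, (‖(K.comp La) (b j)‖₊ : ℝ≥0∞)) := by
        simp [ContinuousLinearMap.comp_apply]
    _ ≤ (S * N) * (S * (N * (‖K.comp La‖₊ : ℝ≥0∞))) :=
        _root_.mul_le_mul_right (_root_.mul_le_mul_right (sum_nnnorm_apply_onb_le _) S) _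
    _ = (S * N) * (S * (N * (‖L.comp Ka‖₊ : ℝ≥0∞))) := by
        rw [hLa_def, hKa_def, swapAdj2 K L]
    _ ≤ (S * N) * (S * (N * ∑ j, (‖(L.comp Ka) (b j)‖₊ : ℝ≥0∞))) :=
        _root_.mul_le_mul_right (_root_.mul_le_mul_right (_root_.mul_le_mul_right (nnnorm_le_sum_onb _) N) S) _
    _ = (S * N) * (S * (N * ∑ j, (‖L (Ka (b j))‖₊ : ℝ≥0∞))) := by
        simp [ContinuousLinearMap.comp_apply]
    _ ≤ (S * N) * (S * (N * ∑ j, R * σ (Ka (b j)) )) := by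
        apply _root_.mul_le_mul_right
        apply _root_.mul_le_mul_right
        apply _root_.mul_le_mul_right
        exact Finset.sum_le_sum fun j _ => (hL _).2
    _ ≤ (S * N) * (S * (N * ∑ _j : Fin n, R * ((R * N) * Φ) )) := by
        apply _root_.mul_le_mul_right
        apply _root_.mul_le_mul_right
        apply _root_.mul_le_mul_right
        exact Finset.sum_le_sum fun j _ => _root_.mul_le_mul_right (hσΦ j) R
    _ = keyC n ε * Φ := by
        rw [Finset.sum_const, Finset.card_univ, Fintype.card_fin, nsmul_eq_mul, hkeyC,
          hS_def, hN_def, hR_def]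
        ring


end Key

section CubeFacts
variable {d : ℕ}

lemma cube_eq_pi (a : Fin d → ℝ) (ℓ : ℝ) :
    cube a ℓ = Set.pi Set.univ (fun i => Set.Icc (a i) (a i + ℓ)) := by
  ext x
  simp [cube, Set.mem_pi, Set.mem_Icc, Pi.le_def, forall_and]

lemma volume_cube (a : Fin d → ℝ) {ℓ : ℝ} (hl : 0 < ℓ) :
    volume (cube a ℓ) = (ENNReal.ofReal ℓ) ^ d := by
  rw [cube_eq_pi, volume_pi_pi]
  simp [Real.volume_Icc]

lemma cubeAvg_prob (a : Fin d → ℝ) {ℓ : ℝ} (hl : 0 < ℓ) :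
    IsProbabilityMeasure (cubeAvg a ℓ) := by
  constructor
  rw [cubeAvg, Measure.smul_apply, Measure.restrict_apply_univ, smul_eq_mul,
    volume_cube a hl]
  have h0 : (ENNReal.ofReal ℓ) ^ d ≠ 0 := by
    apply pow_ne_zero
    simpa [ENNReal.ofReal_eq_zero, not_le] using hl
  have htop : (ENNReal.ofReal ℓ) ^ d ≠ ⊤ := by
    exact pow_ne_top ENNReal.ofReal_ne_top
  exact ENNReal.inv_mul_cancel h0 htop

lemma ae_cubeAvg {P : (Fin d → ℝ) → Prop} (h : ∀ᵐ x, P x) (a : Fin d → ℝ) (ℓ : ℝ) :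
    ∀ᵐ x ∂(cubeAvg a ℓ), P x := by
  rw [cubeAvg]
  exact Measure.ae_smul_measure (ae_restrict_of_ae h) _

end CubeFacts


open scoped RealInnerProductSpace

/-- **Symmetry of the two-parameter matrix Muckenhoupt condition.**
Let `p ∈ (0,∞]`, `r ∈ (0,∞)`, `s ∈ (ℝ∖{0}) ∪ {∞}` with `p ≥ r`, `1/p ≥ 1/s` (encoded through
the reciprocals `ip = 1/p`, `ir = 1/r`, `σ = 1/s`, with exponents `t, q` given by
`1/t = 1/r − 1/p`, `1/q = 1/p − 1/s`).  Set `1/p̂ = 1/r + 1/s − 1/p`, whose associated exponents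
are `t̂, q̂` with `1/t̂ = 1/r − 1/p̂ = 1/p − 1/s` and `1/q̂ = 1/p̂ − 1/s = 1/r − 1/p`.  If
`[W]_{p,(r,s),op} < ∞` then `[W⁻¹]_{p̂,(r,s),op} < ∞`, and the two characteristics are
comparable with constants depending only on `r`, `s`, `d` and `dim H`. -/
theorem twoChar_symmetry {d : ℕ} {V : Type*} [NormedAddCommGroup V]
    [InnerProductSpace ℝ V] [FiniteDimensional ℝ V]
    (ir σ : ℝ) (hr : 0 < ir) :
    ∃ C : ℝ≥0∞, 0 < C ∧ C < ⊤ ∧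
      ∀ ip : ℝ, 0 ≤ ip → ip ≤ ir → σ ≤ ip →
      ∀ t q th qh : ℝ≥0∞,
        t⁻¹ = ENNReal.ofReal (ir - ip) → q⁻¹ = ENNReal.ofReal (ip - σ) →
        th⁻¹ = ENNReal.ofReal (ip - σ) → qh⁻¹ = ENNReal.ofReal (ir - ip) →
      ∀ W Winv : (Fin d → ℝ) → (V →L[ℝ] V),
        StronglyMeasurable W → StronglyMeasurable Winv →
        (∀ᵐ x : Fin d → ℝ, ∀ u v : V, ⟪W x u, v⟫ = ⟪u, W x v⟫) →
        (∀ᵐ x : Fin d → ℝ, ∀ u : V, u ≠ 0 → 0 < ⟪W x u, u⟫) →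
        (∀ᵐ x : Fin d → ℝ, (Winv x).comp (W x) = ContinuousLinearMap.id ℝ V ∧
          (W x).comp (Winv x) = ContinuousLinearMap.id ℝ V) →
        twoChar (fun x y => (‖(W x).comp (Winv y)‖₊ : ℝ≥0∞)) t q < ⊤ →
          twoChar (fun x y => (‖(Winv x).comp (W y)‖₊ : ℝ≥0∞)) th qh < ⊤ ∧
          twoChar (fun x y => (‖(Winv x).comp (W y)‖₊ : ℝ≥0∞)) th qh
            ≤ C * twoChar (fun x y => (‖(W x).comp (Winv y)‖₊ : ℝ≥0∞)) t q ∧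
          twoChar (fun x y => (‖(W x).comp (Winv y)‖₊ : ℝ≥0∞)) t q
            ≤ C * twoChar (fun x y => (‖(Winv x).comp (W y)‖₊ : ℝ≥0∞)) th qh := by

  classical
  set nV := finrank ℝ V with hnV_def
  set B : ℝ := max ir (ir - σ) with hB_def
  have hB : 0 < B := lt_of_lt_of_le hr (le_max_left _ _)
  set ε : ℝ := B⁻¹ with hε_def
  have hε : 0 < ε := inv_pos.mpr hB
  refine ⟨keyC nV ε + 1, ?_, ?_, ?_⟩
  · exact lt_of_lt_of_le zero_lt_one le_add_self
  · exact ENNReal.add_lt_top.mpr ⟨(keyC_ne_top nV hε).lt_top, one_lt_top⟩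
  intro ip hip0 hipr hσip t q th qh htEq hqEq hthEq hqhEq W Winv hWm hVm hsym hpos hinv hfin
  have hthq : th = q := by
    rw [← inv_inv th, hthEq, ← hqEq, inv_inv]
  have hqht : qh = t := by
    rw [← inv_inv qh, hqhEq, ← htEq, inv_inv]
  have hexp : ∀ (u : ℝ≥0∞) (c : ℝ), u⁻¹ = ENNReal.ofReal c → c ≤ B →
      (u = ⊤ ∨ (u ≠ 0 ∧ u ≠ ⊤ ∧ ε ≤ u.toReal)) := by
    intro u c hu hc
    by_cases hutop : u = ⊤
    · exact Or.inl hutop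
    right
    have hu0 : u ≠ 0 := by
      intro h
      rw [h] at hu
      simp only [ENNReal.inv_zero] at hu
      exact (ENNReal.ofReal_ne_top (r := c)) hu.symm
    refine ⟨hu0, hutop, ?_⟩
    have huval : u = (ENNReal.ofReal c)⁻¹ := by rw [← hu, inv_inv]
    have hcpos : 0 < c := by
      by_contra hcn
      push_neg at hcn
      rw [ENNReal.ofReal_eq_zero.mpr hcn, ENNReal.inv_zero] at huval
      exact hutop huval
    rw [huval, ENNReal.toReal_inv, ENNReal.toReal_ofReal hcpos.le, hε_def]
    exact inv_anti₀ hcpos hc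
  have htFact := hexp t (ir - ip) htEq (le_trans (by linarith) (le_max_left ir (ir - σ)))
  have hqFact := hexp q (ip - σ) hqEq (le_trans (by linarith) (le_max_right ir (ir - σ)))
  have hWadj : ∀ᵐ x : Fin d → ℝ, ContinuousLinearMap.adjoint (W x) = W x := by
    filter_upwards [hsym] with x hx
    exact ((ContinuousLinearMap.eq_adjoint_iff (W x) (W x)).mpr hx).symm
  have hVadj : ∀ᵐ x : Fin d → ℝ, ContinuousLinearMap.adjoint (Winv x) = Winv x := by
    filter_upwards [hWadj, hinv] with x h1 h2
    obtain ⟨hi1, hi2⟩ := h2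
    calc ContinuousLinearMap.adjoint (Winv x)
        = (ContinuousLinearMap.adjoint (Winv x)).comp ((W x).comp (Winv x)) := by
          rw [hi2, ContinuousLinearMap.comp_id]
      _ = ((ContinuousLinearMap.adjoint (Winv x)).comp (W x)).comp (Winv x) := by
          rw [ContinuousLinearMap.comp_assoc]
      _ = ((ContinuousLinearMap.adjoint (Winv x)).comp
            (ContinuousLinearMap.adjoint (W x))).comp (Winv x) := by rw [h1]
      _ = (ContinuousLinearMap.adjoint ((W x).comp (Winv x))).comp (Winv x) := by
          rw [ContinuousLinearMap.adjoint_comp]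
      _ = Winv x := by
          rw [hi2, ContinuousLinearMap.adjoint_id, ContinuousLinearMap.id_comp]
  have key1 : ∀ (a : Fin d → ℝ) (ℓ : ℝ), 0 < ℓ →
      avgLp (cubeAvg a ℓ) t (fun x => avgLp (cubeAvg a ℓ) q
        (fun y => (‖(Winv x).comp (W y)‖₊ : ℝ≥0∞))) ≤
      keyC nV ε * avgLp (cubeAvg a ℓ) q (fun x => avgLp (cubeAvg a ℓ) t
        (fun y => (‖(W x).comp (Winv y)‖₊ : ℝ≥0∞))) := by
    intro a ℓ hℓ
    haveI := cubeAvg_prob a hℓ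
    exact key_ineq (cubeAvg a ℓ) hε htFact hqFact hWm hVm
      (ae_cubeAvg hWadj a ℓ) (ae_cubeAvg hVadj a ℓ)
      (ae_cubeAvg (hinv.mono fun x hx => hx.1) a ℓ)
      (ae_cubeAvg (hinv.mono fun x hx => hx.2) a ℓ)
  have key2 : ∀ (a : Fin d → ℝ) (ℓ : ℝ), 0 < ℓ →
      avgLp (cubeAvg a ℓ) q (fun x => avgLp (cubeAvg a ℓ) t
        (fun y => (‖(W x).comp (Winv y)‖₊ : ℝ≥0∞))) ≤
      keyC nV ε * avgLp (cubeAvg a ℓ) t (fun x => avgLp (cubeAvg a ℓ) q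
        (fun y => (‖(Winv x).comp (W y)‖₊ : ℝ≥0∞))) := by
    intro a ℓ hℓ
    haveI := cubeAvg_prob a hℓ
    exact key_ineq (cubeAvg a ℓ) hε hqFact htFact hVm hWm
      (ae_cubeAvg hVadj a ℓ) (ae_cubeAvg hWadj a ℓ)
      (ae_cubeAvg (hinv.mono fun x hx => hx.2) a ℓ)
      (ae_cubeAvg (hinv.mono fun x hx => hx.1) a ℓ)
  have tw1 : twoChar (fun x y => (‖(Winv x).comp (W y)‖₊ : ℝ≥0∞)) q t ≤
      (keyC nV ε + 1) * twoChar (fun x y => (‖(W x).comp (Winv y)‖₊ : ℝ≥0∞)) t q := by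
    unfold twoChar
    refine iSup_le fun a => iSup_le fun ℓ => iSup_le fun hℓ => ?_
    calc avgLp (cubeAvg a ℓ) t (fun x => avgLp (cubeAvg a ℓ) q
          (fun y => (‖(Winv x).comp (W y)‖₊ : ℝ≥0∞)))
        ≤ keyC nV ε * avgLp (cubeAvg a ℓ) q (fun x => avgLp (cubeAvg a ℓ) t
          (fun y => (‖(W x).comp (Winv y)‖₊ : ℝ≥0∞))) := key1 a ℓ hℓ
      _ ≤ (keyC nV ε + 1) * avgLp (cubeAvg a ℓ) q (fun x => avgLp (cubeAvg a ℓ) t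
          (fun y => (‖(W x).comp (Winv y)‖₊ : ℝ≥0∞))) :=
          _root_.mul_le_mul_left le_self_add _
      _ ≤ (keyC nV ε + 1) * ⨆ (a' : Fin d → ℝ) (ℓ' : ℝ) (_ : 0 < ℓ'),
            avgLp (cubeAvg a' ℓ') q (fun x => avgLp (cubeAvg a' ℓ') t
            (fun y => (‖(W x).comp (Winv y)‖₊ : ℝ≥0∞))) := by
          apply _root_.mul_le_mul_right
          exact le_iSup_of_le a (le_iSup_of_le ℓ (le_iSup_of_le hℓ le_rfl))
  have tw2 : twoChar (fun x y => (‖(W x).comp (Winv y)‖₊ : ℝ≥0∞)) t q ≤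
      (keyC nV ε + 1) * twoChar (fun x y => (‖(Winv x).comp (W y)‖₊ : ℝ≥0∞)) q t := by
    unfold twoChar
    refine iSup_le fun a => iSup_le fun ℓ => iSup_le fun hℓ => ?_
    calc avgLp (cubeAvg a ℓ) q (fun x => avgLp (cubeAvg a ℓ) t
          (fun y => (‖(W x).comp (Winv y)‖₊ : ℝ≥0∞)))
        ≤ keyC nV ε * avgLp (cubeAvg a ℓ) t (fun x => avgLp (cubeAvg a ℓ) q
          (fun y => (‖(Winv x).comp (W y)‖₊ : ℝ≥0∞))) := key2 a ℓ hℓ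
      _ ≤ (keyC nV ε + 1) * avgLp (cubeAvg a ℓ) t (fun x => avgLp (cubeAvg a ℓ) q
          (fun y => (‖(Winv x).comp (W y)‖₊ : ℝ≥0∞))) :=
          _root_.mul_le_mul_left le_self_add _
      _ ≤ (keyC nV ε + 1) * ⨆ (a' : Fin d → ℝ) (ℓ' : ℝ) (_ : 0 < ℓ'),
            avgLp (cubeAvg a' ℓ') t (fun x => avgLp (cubeAvg a' ℓ') q
            (fun y => (‖(Winv x).comp (W y)‖₊ : ℝ≥0∞))) := by
          apply _root_.mul_le_mul_right
          exact le_iSup_of_le a (le_iSup_of_le ℓ (le_iSup_of_le hℓ le_rfl))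
  rw [hthq, hqht]
  refine ⟨?_, tw1, tw2⟩
  calc twoChar (fun x y => (‖(Winv x).comp (W y)‖₊ : ℝ≥0∞)) q t
      ≤ (keyC nV ε + 1) * twoChar (fun x y => (‖(W x).comp (Winv y)‖₊ : ℝ≥0∞)) t q := tw1
    _ < ⊤ := ENNReal.mul_lt_top
        (ENNReal.add_lt_top.mpr ⟨(keyC_ne_top nV hε).lt_top, one_lt_top⟩) hfin
end
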